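/- arXiv:2106.16130 — 4 statements merged into one kernel-verified Lean document; each statement's English description precedes it below -/
import Mathlib

section
/- Let G be a connected trivially perfect graph with m edges. Then the diameter of the graph associahedron of G satisfies m ≤ δ(A(G)) ≤ 2m; in particular δ(A(G)) = Θ(m). -/
open SimpleGraph

/-- A search tree (elimination tree) on a graph `G`, encoded by its ancestor
relation: `anc u v` means that `u` is an ancestor of `v` (possibly `u = v`).
Equivalently (for connected `G`): the root is a vertex `r`, joined to the roots
of search trees on each connected component of `G - r`. -/
structure SearchTree {V : Type} (G : SimpleGraph V) : Type where
  anc : V → V → Prop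
  refl : ∀ v, anc v v
  antisymm : ∀ u v, anc u v → anc v u → u = v
  trans : ∀ u v w, anc u v → anc v w → anc u w
  chain : ∀ u v w, anc u w → anc v w → anc u v ∨ anc v u
  root : ∃ r, ∀ v, anc r v
  edge_comparable : ∀ u v, G.Adj u v → anc u v ∨ anc v u
  desc_connected : ∀ v, (G.induce {u | anc v u}).Connected

namespace SearchTree

/-- The set of descendants of `v` (including `v`): the vertex set of the
subtree rooted at `v`. -/
def descSet {V : Type} {G : SimpleGraph V} (T : SearchTree G) (v : V) : Set V :=
  {u | T.anc v u}

/-- The height of a search tree: the maximal number of vertices on a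
root-to-leaf path (a single-vertex tree has height 1). -/
noncomputable def height {V : Type} [Fintype V] {G : SimpleGraph V} (T : SearchTree G) : ℕ :=
  Finset.univ.sup fun v => Set.ncard {u | T.anc u v}

end SearchTree

/-- `T'` is obtained from `T` by a rotation at a vertex `b` with parent `a`:
the subtree of `T` rooted at `a` (with vertex set `A`) becomes rooted at `b`,
`a` becomes the root of the component of `G[A] - b` containing `a`, and all
other subtrees are unchanged. The rotation is said to involve `a` and `b`. -/
def IsRotation {V : Type} {G : SimpleGraph V} (T T' : SearchTree G) (a b : V) : Prop :=
  a ≠ b ∧ T.anc a b ∧ T'.descSet b = T.descSet a ∧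
    ∀ v, v ≠ a → v ≠ b → T'.descSet v = T.descSet v

/-- The rotation graph of `G`: vertices are the search trees on `G`, two
trees being adjacent when they differ by a single rotation. It is the skeleton
of the graph associahedron `A(G)`; its diameter is `δ(A(G))`. -/
def rotationGraph {V : Type} (G : SimpleGraph V) : SimpleGraph (SearchTree G) where
  Adj T T' := ∃ a b, IsRotation T T' a b
  symm := by
    constructor
    rintro T T' ⟨a, b, hne, hanc, hb, hoth⟩
    have hanc' : T'.anc b a := by
      have ha : a ∈ T'.descSet b := by rw [hb]; exact T.refl a
      exact ha
    exact ⟨b, a, hne.symm, hanc', hb.symm, fun v h1 h2 => (hoth v h2 h1).symm⟩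
  loopless := by
    constructor
    rintro T ⟨a, b, hne, hanc, hb, hoth⟩
    have h : T.anc b a := by
      have ha : a ∈ T.descSet b := by rw [hb]; exact T.refl a
      exact ha
    exact hne (T.antisymm a b hanc h)

/-- The tree-depth of `G`: the smallest height of a search tree on `G`. -/
noncomputable def treeDepth {V : Type} [Fintype V] (G : SimpleGraph V) : ℕ :=
  sInf {h | ∃ T : SearchTree G, T.height = h}

/-- Adding a universal vertex to a graph. -/
def addUniversal {V : Type} (G : SimpleGraph V) : SimpleGraph (Option V) where
  Adj x y := match x, y with
    | none, none => False
    | none, some _ => True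
    | some _, none => True
    | some a, some b => G.Adj a b
  symm := by
    constructor
    rintro (_ | a) (_ | b) h
    · exact h.elim
    · trivial
    · trivial
    · exact G.adj_symm h
  loopless := by
    constructor
    rintro (_ | a) h
    · exact h
    · exact G.loopless.irrefl a h

/-- Disjoint union of two graphs. -/
def disjUnion {V W : Type} (G : SimpleGraph V) (H : SimpleGraph W) : SimpleGraph (V ⊕ W) where
  Adj x y := match x, y with
    | .inl a, .inl b => G.Adj a b
    | .inr a, .inr b => H.Adj a b
    | _, _ => False
  symm := by
    constructor
    rintro (a | a) (b | b) h
    · exact G.adj_symm h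
    · exact h.elim
    · exact h.elim
    · exact H.adj_symm h
  loopless := by
    constructor
    rintro (a | a) h
    · exact G.loopless.irrefl a h
    · exact H.loopless.irrefl a h

/-- Graphs built recursively from single vertices by adding universal vertices
and taking disjoint unions. -/
inductive TPBuild : {V : Type} → SimpleGraph V → Prop
  | single : TPBuild (⊥ : SimpleGraph PUnit)
  | addUniv {V : Type} {G : SimpleGraph V} : TPBuild G → TPBuild (addUniversal G)
  | union {V W : Type} {G : SimpleGraph V} {H : SimpleGraph W} :
      TPBuild G → TPBuild H → TPBuild (disjUnion G H)

/-- A graph is trivially perfect if it can be built recursively from single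
vertices by repeatedly adding universal vertices and taking disjoint unions. -/
def TriviallyPerfect {V : Type} (G : SimpleGraph V) : Prop :=
  ∃ (W : Type) (H : SimpleGraph W), TPBuild H ∧ Nonempty (G ≃g H)

/-- A graph is chordal if it has no induced cycle of length at least 4. -/
def Chordal {V : Type} (G : SimpleGraph V) : Prop :=
  ∀ n, 4 ≤ n → IsEmpty (cycleGraph n ↪g G)

/-- The treewidth of `G`: one less than the smallest clique number of a chordal
supergraph of `G` on the same vertex set. -/
noncomputable def treewidth {V : Type} (G : SimpleGraph V) : ℕ :=
  sInf {k | ∃ H : SimpleGraph V, G ≤ H ∧ Chordal H ∧ H.cliqueNum = k + 1}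

/-- An interval graph: the intersection graph of closed intervals on the real line. -/
def IsIntervalGraph {V : Type} (G : SimpleGraph V) : Prop :=
  ∃ lo hi : V → ℝ, (∀ v, lo v ≤ hi v) ∧
    ∀ u v, G.Adj u v ↔ u ≠ v ∧ lo u ≤ hi v ∧ lo v ≤ hi u

/-- The pathwidth of `G`: one less than the smallest clique number of an
interval supergraph of `G` on the same vertex set. -/
noncomputable def pathwidth {V : Type} (G : SimpleGraph V) : ℕ :=
  sInf {k | ∃ H : SimpleGraph V, G ≤ H ∧ IsIntervalGraph H ∧ H.cliqueNum = k + 1}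

/-- A vertex is simplicial if its neighborhood induces a clique. -/
def Simplicial {V : Type} (G : SimpleGraph V) (v : V) : Prop :=
  G.IsClique (G.neighborSet v)

/-- A set of vertices is (monophonically) convex if it can be obtained from the
full vertex set by iteratively deleting a simplicial vertex of the current
induced subgraph. -/
inductive MConvex {V : Type} (G : SimpleGraph V) : Set V → Prop
  | univ : MConvex G Set.univ
  | delete {S : Set V} {v : V} (hS : MConvex G S) (hv : v ∈ S)
      (hsimp : Simplicial (G.induce S) ⟨v, hv⟩) : MConvex G (S \ {v})

/-- `P` is the projection of the search tree `T` on the convex set `S`: the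
search tree on `G[S]` obtained from `T` by iteratively deleting the vertices
outside `S`; its ancestor relation is the restriction of that of `T`. -/
def IsProjection {V : Type} {G : SimpleGraph V} (S : Set V) (T : SearchTree G)
    (P : SearchTree (G.induce S)) : Prop :=
  ∀ u v : S, P.anc u v ↔ T.anc (↑u) (↑v)

/-- The complete split graph `SPK p q`: a clique `P` of `p` vertices, an
independent set `Q` of `q` vertices, and all edges between `P` and `Q`. -/
def SPK (p q : ℕ) : SimpleGraph (Fin p ⊕ Fin q) where
  Adj x y := x ≠ y ∧ (x.isLeft ∨ y.isLeft)
  symm := by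
    constructor
    rintro x y ⟨h1, h2⟩
    exact ⟨h1.symm, h2.symm⟩
  loopless := by
    constructor
    rintro x ⟨h, _⟩
    exact h rfl
section ReachIn

variable {V : Type} {G : SimpleGraph V}

/-- `ReachIn G S u v`: there is a walk from `u` to `v` in `G` all of whose
vertices lie in `S`. -/
def ReachIn (G : SimpleGraph V) (S : Set V) (u v : V) : Prop :=
  ∃ p : G.Walk u v, ∀ w ∈ p.support, w ∈ S

lemma ReachIn.mem_left {S : Set V} {u v : V} (h : ReachIn G S u v) : u ∈ S := by
  obtain ⟨p, hp⟩ := h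
  exact hp u p.start_mem_support

lemma ReachIn.mem_right {S : Set V} {u v : V} (h : ReachIn G S u v) : v ∈ S := by
  obtain ⟨p, hp⟩ := h
  exact hp v p.end_mem_support

lemma reachIn_refl {S : Set V} {u : V} (hu : u ∈ S) : ReachIn G S u u :=
  ⟨SimpleGraph.Walk.nil, by simpa using hu⟩

lemma ReachIn.trans {S : Set V} {u v w : V} (h1 : ReachIn G S u v) (h2 : ReachIn G S v w) :
    ReachIn G S u w := by
  obtain ⟨p, hp⟩ := h1
  obtain ⟨q, hq⟩ := h2
  refine ⟨p.append q, fun x hx => ?_⟩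
  rcases (SimpleGraph.Walk.mem_support_append_iff p q).mp hx with h | h
  · exact hp x h
  · exact hq x h

lemma ReachIn.symm {S : Set V} {u v : V} (h : ReachIn G S u v) : ReachIn G S v u := by
  obtain ⟨p, hp⟩ := h
  exact ⟨p.reverse, fun x hx => hp x (by simpa using hx)⟩

lemma ReachIn.mono {S S' : Set V} {u v : V} (hS : S ⊆ S') (h : ReachIn G S u v) :
    ReachIn G S' u v := by
  obtain ⟨p, hp⟩ := h
  exact ⟨p, fun x hx => hS (hp x hx)⟩

lemma reachIn_of_adj {S : Set V} {u v : V} (h : G.Adj u v) (hu : u ∈ S) (hv : v ∈ S) :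
    ReachIn G S u v := by
  refine ⟨SimpleGraph.Walk.cons h SimpleGraph.Walk.nil, fun x hx => ?_⟩
  simp only [SimpleGraph.Walk.support_cons, SimpleGraph.Walk.support_nil, List.mem_cons,
    List.mem_singleton] at hx
  rcases hx with rfl | rfl | h'
  · exact hu
  · exact hv
  · cases h'

/-- A walk in all of whose vertices we can reach: strengthen the support condition. -/
lemma ReachIn.self_strengthen {S : Set V} {u v : V} (h : ReachIn G S u v) :
    ReachIn G {w | ReachIn G S u w} u v := by
  classical
  obtain ⟨p, hp⟩ := h
  refine ⟨p, fun x hx => ?_⟩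
  exact ⟨p.takeUntil x hx, fun y hy => hp y (p.support_takeUntil_subset hx hy)⟩

lemma ReachIn.of_induce_walk {S : Set V} {x y : S} (p : (G.induce S).Walk x y) :
    ReachIn G S x y := by
  induction p with
  | nil => exact reachIn_refl (Subtype.coe_prop _)
  | @cons a b c hab p ih =>
      exact ReachIn.trans (reachIn_of_adj hab a.2 b.2) ih

lemma ReachIn.reachable_induce {S : Set V} {u v : V} (h : ReachIn G S u v) :
    (G.induce S).Reachable ⟨u, h.mem_left⟩ ⟨v, h.mem_right⟩ := by
  obtain ⟨p, hp⟩ := h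
  induction p with
  | nil => rfl
  | @cons a b c hab p ih =>
      have ha : a ∈ S := hp a (by simp)
      have hb : b ∈ S := hp b (by simp)
      have h1 : (G.induce S).Adj ⟨a, ha⟩ ⟨b, hb⟩ := hab
      exact (h1.reachable).trans (ih (fun x hx => hp x (by simp [hx])))

lemma connected_induce_of_reachIn {S : Set V} {r : V} (hr : r ∈ S)
    (h : ∀ v ∈ S, ReachIn G S r v) : (G.induce S).Connected := by
  rw [SimpleGraph.connected_iff]
  refine ⟨fun x y => ?_, ⟨⟨r, hr⟩⟩⟩
  have hx := (h x.1 x.2).reachable_induce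
  have hy := (h y.1 y.2).reachable_induce
  exact hx.symm.trans hy

lemma SimpleGraph.Connected.reachIn {S : Set V} (h : (G.induce S).Connected) {u v : V}
    (hu : u ∈ S) (hv : v ∈ S) : ReachIn G S u v := by
  obtain ⟨p⟩ := h ⟨u, hu⟩ ⟨v, hv⟩
  exact ReachIn.of_induce_walk p

end ReachIn
section TreeBasics

variable {V : Type} {G : SimpleGraph V}

lemma SearchTree.ext' {T T' : SearchTree G} (h : T.anc = T'.anc) : T = T' := by
  cases T; cases T'
  dsimp at h
  subst h
  rfl

lemma SearchTree.anc_iff_not_anc (T : SearchTree G) {u v : V} (h : G.Adj u v) :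
    T.anc u v ↔ ¬ T.anc v u := by
  constructor
  · intro h1 h2
    exact h.ne (T.antisymm u v h1 h2)
  · intro h1
    rcases T.edge_comparable u v h with h2 | h2
    · exact h2
    · exact absurd h2 h1

lemma SearchTree.reachIn_descSet (T : SearchTree G) {u v : V} (h : T.anc u v) :
    ReachIn G (T.descSet u) u v :=
  (T.desc_connected u).reachIn (T.refl u) h

lemma SearchTree.descSet_subset (T : SearchTree G) {u v : V} (h : T.anc u v) :
    T.descSet v ⊆ T.descSet u := fun x hx => T.trans u v x h hx

/-- Existence of the parent: a deepest strict ancestor. -/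
lemma SearchTree.exists_parent [Fintype V] (T : SearchTree G) {b u₀ : V}
    (hu₀ : T.anc u₀ b) (hne : u₀ ≠ b) :
    ∃ a, a ≠ b ∧ T.anc a b ∧ ∀ u, T.anc u b → u = b ∨ T.anc u a := by
  classical
  set S : Set V := {u | T.anc u b ∧ u ≠ b} with hS
  have hfin : S.Finite := Set.toFinite S
  have hnonempty : S.Nonempty := ⟨u₀, hu₀, hne⟩
  obtain ⟨a, haS, hmin⟩ := Set.exists_min_image S (fun u => (T.descSet u).ncard) hfin hnonempty
  refine ⟨a, haS.2, haS.1, fun u hu => ?_⟩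
  by_cases hub : u = b
  · exact Or.inl hub
  right
  have huS : u ∈ S := ⟨hu, hub⟩
  rcases T.chain u a b hu haS.1 with h | h
  · exact h
  · -- a anc u; then descSet u ⊆ descSet a with minimal card, so equal
    have hsub : T.descSet u ⊆ T.descSet a := T.descSet_subset h
    have hcard : (T.descSet a).ncard ≤ (T.descSet u).ncard := hmin u huS
    have : T.descSet u = T.descSet a :=
      Set.eq_of_subset_of_ncard_le hsub hcard (Set.toFinite _)
    have hau : a ∈ T.descSet u := by rw [this]; exact T.refl a
    exact hau

end TreeBasics

section OrderTree

variable {V : Type} {G : SimpleGraph V}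

/-- The greedy search tree associated with a vertex ordering given by an
injective function `f : V → ℝ`: the root of each subtree is the `f`-smallest
vertex of the corresponding connected subgraph. -/
noncomputable def orderTree [Fintype V] (G : SimpleGraph V) (hconn : G.Connected) (f : V → ℝ)
    (hf : Function.Injective f) : SearchTree G where
  anc u v := f u ≤ f v ∧ ReachIn G {w | f u ≤ f w} u v
  refl v := ⟨le_refl _, reachIn_refl (show f v ≤ f v from le_refl _)⟩
  antisymm u v h1 h2 := hf (le_antisymm h1.1 h2.1)
  trans u v w h1 h2 :=
    ⟨le_trans h1.1 h2.1, h1.2.trans (h2.2.mono (fun x hx => le_trans h1.1 hx))⟩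
  chain u v w h1 h2 := by
    rcases le_total (f u) (f v) with h | h
    · exact Or.inl ⟨h, h1.2.trans ((h2.2.symm).mono (fun x hx => le_trans h hx))⟩
    · exact Or.inr ⟨h, h2.2.trans ((h1.2.symm).mono (fun x hx => le_trans h hx))⟩
  root := by
    have : Nonempty V := hconn.nonempty
    obtain ⟨r, -, hr⟩ := Set.exists_min_image Set.univ f Set.finite_univ Set.univ_nonempty
    refine ⟨r, fun v => ⟨hr v trivial, ?_⟩⟩
    obtain ⟨p⟩ := hconn r v
    exact ⟨p, fun x _ => hr x trivial⟩
  edge_comparable u v h := by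
    rcases le_total (f u) (f v) with hle | hle
    · exact Or.inl ⟨hle, reachIn_of_adj h (show f u ≤ f u from le_refl _) hle⟩
    · exact Or.inr ⟨hle, reachIn_of_adj h.symm (show f v ≤ f v from le_refl _) hle⟩
  desc_connected v := by
    refine connected_induce_of_reachIn ⟨le_refl _, reachIn_refl (show f v ≤ f v from le_refl _)⟩
      (fun u hu => ?_)
    have h2 := hu.2.self_strengthen
    refine h2.mono (fun x hx => ?_)
    have hx' : ReachIn G {w | f v ≤ f w} v x := hx
    exact ⟨hx'.mem_right, hx'⟩

lemma orderTree_anc_of_adj [Fintype V] {f : V → ℝ} {hconn : G.Connected} {hf : Function.Injective f}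
    {u v : V} (h : G.Adj u v) (hle : f u ≤ f v) : (orderTree G hconn f hf).anc u v :=
  show f u ≤ f v ∧ ReachIn G {w | f u ≤ f w} u v from
    ⟨hle, reachIn_of_adj h (show f u ≤ f u from le_refl _) hle⟩

end OrderTree
section LowerBound

variable {V : Type} {G : SimpleGraph V}

lemma IsRotation.descSet_eq {T T' : SearchTree G} {a b : V} (h : IsRotation T T' a b) :
    T'.descSet b = T.descSet a := h.2.2.1

lemma IsRotation.anc_b_a {T T' : SearchTree G} {a b : V} (h : IsRotation T T' a b) :
    T'.anc b a := by
  have : a ∈ T'.descSet b := by rw [h.descSet_eq]; exact T.refl a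
  exact this

lemma IsRotation.not_anc_a_b {T T' : SearchTree G} {a b : V} (h : IsRotation T T' a b) :
    ¬ T'.anc a b := fun hab => h.1 (T'.antisymm a b hab h.anc_b_a)

/-- A rotation involving `a` and `b` preserves the orientation of every edge
other than `{a, b}`. -/
lemma IsRotation.anc_iff {T T' : SearchTree G} {a b : V} (h : IsRotation T T' a b)
    {u v : V} (hadj : G.Adj u v) (hne : s(u, v) ≠ s(a, b)) :
    (T.anc u v ↔ T'.anc u v) := by
  have key : ∀ x y : V, x ≠ a → x ≠ b → (T.anc x y ↔ T'.anc x y) := by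
    intro x y hxa hxb
    have := h.2.2.2 x hxa hxb
    constructor
    · intro hxy
      have : y ∈ T'.descSet x := by rw [this]; exact hxy
      exact this
    · intro hxy
      have : y ∈ T.descSet x := by rw [← this]; exact hxy
      exact this
  by_cases hua : u = a <;> by_cases hub : u = b
  · exact absurd (hua.symm.trans hub) h.1
  · -- u = a; then v ∉ {a, b}
    have hvb : v ≠ b := fun hvb => hne (by rw [hua, hvb])
    have hva : v ≠ a := fun hva => hadj.ne (hua.trans hva.symm)
    rw [T.anc_iff_not_anc hadj, T'.anc_iff_not_anc hadj, key v u hva hvb]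
  · -- u = b; then v ∉ {a, b}
    have hva : v ≠ a := fun hva => hne (by rw [hub, hva]; exact Sym2.eq_swap)
    have hvb : v ≠ b := fun hvb => hadj.ne (hub.trans hvb.symm)
    rw [T.anc_iff_not_anc hadj, T'.anc_iff_not_anc hadj, key v u hva hvb]
  · exact key u v hua hub

/-- The set of edges on which two search trees disagree on orientation. -/
def DiffSet (G : SimpleGraph V) (T T' : SearchTree G) : Set (Sym2 V) :=
  {e | e ∈ G.edgeSet ∧ ¬ ∃ u v, e = s(u, v) ∧ T.anc u v ∧ T'.anc u v}

lemma diffSet_self (T : SearchTree G) : DiffSet G T T = ∅ := by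
  ext e
  simp only [DiffSet, Set.mem_setOf_eq, Set.mem_empty_iff_false, iff_false, not_and, not_not]
  intro he
  induction e with
  | _ u v =>
    have hadj : G.Adj u v := he
    rcases T.edge_comparable u v hadj with h | h
    · exact ⟨u, v, rfl, h, h⟩
    · exact ⟨v, u, Sym2.eq_swap, h, h⟩

lemma diffSet_subset_of_rotation {T T₁ T₀ : SearchTree G} {a b : V}
    (h : IsRotation T T₁ a b) :
    DiffSet G T T₀ ⊆ insert s(a, b) (DiffSet G T₁ T₀) := by
  intro e he
  by_cases heab : e = s(a, b)
  · exact Or.inl heab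
  refine Or.inr ⟨he.1, fun hex => ?_⟩
  obtain ⟨u, v, huv, h1, h0⟩ := hex
  refine he.2 ⟨u, v, huv, ?_, h0⟩
  have hadj : G.Adj u v := by rw [huv] at he; exact he.1
  have hne : s(u, v) ≠ s(a, b) := huv ▸ heab
  exact (h.anc_iff hadj hne).mpr h1

lemma diffSet_ncard_le_walk_length [Fintype V] {T T₀ : SearchTree G}
    (p : (rotationGraph G).Walk T T₀) :
    (DiffSet G T T₀).ncard ≤ p.length := by
  induction p with
  | nil => simp [diffSet_self]
  | @cons X Y Z hadj p ih =>
      obtain ⟨a, b, hrot⟩ := id hadj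
      have hih := ih
      calc (DiffSet G X Z).ncard
          ≤ (insert s(a, b) (DiffSet G Y Z)).ncard :=
            Set.ncard_le_ncard (diffSet_subset_of_rotation hrot) (Set.toFinite _)
        _ ≤ (DiffSet G Y Z).ncard + 1 := Set.ncard_insert_le _ _
        _ ≤ p.length + 1 := by omega
        _ = (SimpleGraph.Walk.cons hadj p).length := by
            simp [SimpleGraph.Walk.length_cons]

lemma diffSet_ncard_le_edist [Fintype V] (T T₀ : SearchTree G) :
    ((DiffSet G T T₀).ncard : ℕ∞) ≤ (rotationGraph G).edist T T₀ := by
  rw [SimpleGraph.edist_eq_sInf]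
  refine le_sInf ?_
  rintro x ⟨p, rfl⟩
  exact_mod_cast Nat.cast_le.mpr (diffSet_ncard_le_walk_length p)

/-- The lower bound: the diameter of the rotation graph is at least `m`. -/
lemma le_ediam_of_connected [Fintype V] (hconn : G.Connected) :
    (G.edgeSet.ncard : ℕ∞) ≤ (rotationGraph G).ediam := by
  classical
  obtain ⟨e⟩ : Nonempty (V ≃ Fin (Fintype.card V)) := ⟨Fintype.equivFin V⟩
  set f : V → ℝ := fun v => ((e v : ℕ) : ℝ) with hf
  have hfinj : Function.Injective f := by
    intro x y hxy
    have : (e x : ℕ) = (e y : ℕ) := Nat.cast_injective hxy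
    exact e.injective (Fin.ext this)
  set g : V → ℝ := fun v => -(f v) with hg
  have hginj : Function.Injective g := fun x y hxy => hfinj (neg_injective hxy)
  set T₁ := orderTree G hconn f hfinj
  set T₂ := orderTree G hconn g hginj
  have hdiff : DiffSet G T₁ T₂ = G.edgeSet := by
    ext e'
    simp only [DiffSet, Set.mem_setOf_eq]
    constructor
    · exact fun h => h.1
    · intro he
      refine ⟨he, fun hex => ?_⟩
      obtain ⟨u, v, huv, h1, h2⟩ := hex
      have h1' : f u ≤ f v ∧ ReachIn G {w | f u ≤ f w} u v := h1
      have h2' : g u ≤ g v ∧ ReachIn G {w | g u ≤ g w} u v := h2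
      have h1' := h1'.1
      have h2' := h2'.1
      have : f v ≤ f u := by simpa [hg, neg_le_neg_iff] using h2'
      have huveq : u = v := hfinj (le_antisymm h1' this)
      rw [huv] at he
      exact (G.ne_of_adj he) huveq
  calc (G.edgeSet.ncard : ℕ∞) = ((DiffSet G T₁ T₂).ncard : ℕ∞) := by rw [hdiff]
    _ ≤ (rotationGraph G).edist T₁ T₂ := diffSet_ncard_le_edist T₁ T₂
    _ ≤ (rotationGraph G).ediam := SimpleGraph.edist_le_ediam

end LowerBound
section Rotate

variable {V : Type} {G : SimpleGraph V}

/-- The ancestor relation of the tree obtained from `T` by rotating the child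
`b` above its parent `a`. -/
def rotAnc (T : SearchTree G) (a b : V) (u v : V) : Prop :=
  (u = b ∧ T.anc a v) ∨ (u = a ∧ ReachIn G (T.descSet a \ {b}) a v) ∨
    (u ≠ a ∧ u ≠ b ∧ T.anc u v)

variable {T : SearchTree G} {a b : V}

lemma rotSA_anc {v : V} (h : ReachIn G (T.descSet a \ {b}) a v) : T.anc a v :=
  h.mem_right.1

lemma rotSA_ne_b {v : V} (h : ReachIn G (T.descSet a \ {b}) a v) : v ≠ b :=
  h.mem_right.2

lemma rotSA_refl (hab : a ≠ b) : ReachIn G (T.descSet a \ {b}) a a :=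
  reachIn_refl ⟨T.refl a, hab⟩

lemma rot_descSubset (hanc : T.anc a b)
    (hpar : ∀ u, T.anc u b → u = b ∨ T.anc u a) {v : V}
    (hav : T.anc a v) (hva : v ≠ a) (hvb : v ≠ b) :
    T.descSet v ⊆ T.descSet a \ {b} := by
  intro x hx
  refine ⟨T.trans a v x hav hx, ?_⟩
  intro hxb
  rw [Set.mem_singleton_iff] at hxb
  subst hxb
  rcases hpar v hx with h | h
  · exact hvb h
  · exact hva (T.antisymm v a h hav)

lemma rot_L4 (hanc : T.anc a b) (hpar : ∀ u, T.anc u b → u = b ∨ T.anc u a)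
    {v w : V} (hva : v ≠ a) (hvb : v ≠ b)
    (hSv : ReachIn G (T.descSet a \ {b}) a v) (hvw : T.anc v w) :
    ReachIn G (T.descSet a \ {b}) a w :=
  hSv.trans ((T.reachIn_descSet hvw).mono (rot_descSubset hanc hpar (rotSA_anc hSv) hva hvb))

lemma rot_L5 (hanc : T.anc a b) (hpar : ∀ u, T.anc u b → u = b ∨ T.anc u a)
    {v w : V} (hva : v ≠ a) (hvb : v ≠ b) (hav : T.anc a v) (hvw : T.anc v w)
    (hSw : ReachIn G (T.descSet a \ {b}) a w) :
    ReachIn G (T.descSet a \ {b}) a v :=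
  hSw.trans (((T.reachIn_descSet hvw).mono (rot_descSubset hanc hpar hav hva hvb)).symm)

/-- Rotating a search tree at a vertex `b` whose parent is `a`. -/
noncomputable def SearchTree.rotate (T : SearchTree G) (a b : V) (hab : a ≠ b)
    (hanc : T.anc a b) (hpar : ∀ u, T.anc u b → u = b ∨ T.anc u a) :
    SearchTree G where
  anc := rotAnc T a b
  refl v := by
    by_cases hb : v = b
    · exact Or.inl ⟨hb, by rw [hb]; exact hanc⟩
    by_cases ha : v = a
    · exact Or.inr (Or.inl ⟨ha, by rw [ha]; exact rotSA_refl hab⟩)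
    · exact Or.inr (Or.inr ⟨ha, hb, T.refl v⟩)
  antisymm u v h1 h2 := by
    rcases h1 with ⟨hub, h1⟩ | ⟨hua, h1⟩ | ⟨huna, hunb, h1⟩ <;>
      rcases h2 with ⟨hvb, h2⟩ | ⟨hva, h2⟩ | ⟨hvna, hvnb, h2⟩
    · exact hub.trans hvb.symm
    · exact absurd hub (rotSA_ne_b (by rwa [← hub] at h2 ⊢))
    · -- u = b, v arbitrary: h2 : T.anc v u = T.anc v b
      rw [hub] at h2
      rcases hpar v h2 with h | h
      · exact absurd h hvnb
      · exact absurd (T.antisymm a v h1 h) (Ne.symm hvna)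
    · exact absurd hvb (rotSA_ne_b (by rwa [← hvb] at h1 ⊢))
    · exact hua.trans hva.symm
    · rw [hua] at h2
      exact absurd (T.antisymm a v (rotSA_anc h1) h2) (Ne.symm hvna)
    · rw [hvb] at h1
      rcases hpar u h1 with h | h
      · exact absurd h hunb
      · exact absurd (T.antisymm a u h2 h) (Ne.symm huna)
    · rw [hva] at h1
      exact absurd (T.antisymm a u (rotSA_anc h2) h1) (Ne.symm huna)
    · exact T.antisymm u v h1 h2
  trans u v w h1 h2 := by
    rcases h1 with ⟨hub, h1⟩ | ⟨hua, h1⟩ | ⟨huna, hunb, h1⟩ <;>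
      rcases h2 with ⟨hvb, h2⟩ | ⟨hva, h2⟩ | ⟨hvna, hvnb, h2⟩
    · exact Or.inl ⟨hub, h2⟩
    · exact Or.inl ⟨hub, rotSA_anc h2⟩
    · exact Or.inl ⟨hub, T.trans a v w h1 h2⟩
    · exact absurd hvb (rotSA_ne_b h1)
    · exact Or.inr (Or.inl ⟨hua, h2⟩)
    · exact Or.inr (Or.inl ⟨hua, rot_L4 hanc hpar hvna hvnb h1 h2⟩)
    · rw [hvb] at h1
      rcases hpar u h1 with h | h
      · exact absurd h hunb
      · exact Or.inr (Or.inr ⟨huna, hunb, T.trans u a w h (h2)⟩)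
    · rw [hva] at h1
      exact Or.inr (Or.inr ⟨huna, hunb, T.trans u a w h1 (rotSA_anc h2)⟩)
    · exact Or.inr (Or.inr ⟨huna, hunb, T.trans u v w h1 h2⟩)
  chain u v w h1 h2 := by
    rcases h1 with ⟨hub, h1⟩ | ⟨hua, h1⟩ | ⟨huna, hunb, h1⟩ <;>
      rcases h2 with ⟨hvb, h2⟩ | ⟨hva, h2⟩ | ⟨hvna, hvnb, h2⟩
    · exact Or.inl (Or.inl ⟨hub, by rw [hvb]; exact hanc⟩)
    · exact Or.inl (Or.inl ⟨hub, by rw [hva]; exact T.refl a⟩)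
    · rcases T.chain a v w h1 h2 with h | h
      · exact Or.inl (Or.inl ⟨hub, h⟩)
      · exact Or.inr (Or.inr (Or.inr ⟨hvna, hvnb,
          by rw [hub]; exact T.trans v a b h hanc⟩))
    · exact Or.inr (Or.inl ⟨hvb, by rw [hua]; exact T.refl a⟩)
    · exact Or.inl (Or.inr (Or.inl ⟨hua, by rw [hva]; exact rotSA_refl hab⟩))
    · rcases T.chain a v w (rotSA_anc h1) h2 with h | h
      · exact Or.inl (Or.inr (Or.inl ⟨hua, rot_L5 hanc hpar hvna hvnb h h2 h1⟩))
      · exact Or.inr (Or.inr (Or.inr ⟨hvna, hvnb, by rw [hua]; exact h⟩))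
    · rcases T.chain u a w h1 h2 with h | h
      · exact Or.inl (Or.inr (Or.inr ⟨huna, hunb,
          by rw [hvb]; exact T.trans u a b h hanc⟩))
      · exact Or.inr (Or.inl ⟨hvb, h⟩)
    · rcases T.chain u a w h1 (rotSA_anc h2) with h | h
      · exact Or.inl (Or.inr (Or.inr ⟨huna, hunb, by rw [hva]; exact h⟩))
      · exact Or.inr (Or.inr (Or.inl ⟨hva,
          rot_L5 hanc hpar huna hunb h h1 h2⟩))
    · rcases T.chain u v w h1 h2 with h | h
      · exact Or.inl (Or.inr (Or.inr ⟨huna, hunb, h⟩))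
      · exact Or.inr (Or.inr (Or.inr ⟨hvna, hvnb, h⟩))
  root := by
    obtain ⟨r, hr⟩ := T.root
    by_cases hra : r = a
    · exact ⟨b, fun v => Or.inl ⟨rfl, by rw [← hra]; exact hr v⟩⟩
    · have hrb : r ≠ b := by
        intro h
        exact hab (T.antisymm a b hanc (by rw [← h]; exact hr a))
      exact ⟨r, fun v => Or.inr (Or.inr ⟨hra, hrb, hr v⟩)⟩
  edge_comparable u v hadj := by
    by_cases hub : u = b
    · by_cases hva : v = a
      · exact Or.inl (Or.inl ⟨hub, by rw [hva]; exact T.refl a⟩)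
      by_cases hvb : v = b
      · exact absurd (hub.trans hvb.symm) hadj.ne
      rcases T.edge_comparable u v hadj with h | h
      · exact Or.inl (Or.inl ⟨hub, T.trans a b v hanc (by rw [← hub]; exact h)⟩)
      · exact Or.inr (Or.inr (Or.inr ⟨hva, hvb, h⟩))
    by_cases hua : u = a
    · by_cases hvb : v = b
      · exact Or.inr (Or.inl ⟨hvb, by rw [hua]; exact T.refl a⟩)
      by_cases hva : v = a
      · exact absurd (hua.trans hva.symm) hadj.ne
      rcases T.edge_comparable u v hadj with h | h
      · refine Or.inl (Or.inr (Or.inl ⟨hua, ?_⟩))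
        have hav : T.anc a v := by rw [← hua]; exact h
        exact reachIn_of_adj (by rw [← hua]; exact hadj) ⟨T.refl a, hab⟩ ⟨hav, hvb⟩
      · exact Or.inr (Or.inr (Or.inr ⟨hva, hvb, h⟩))
    by_cases hvb : v = b
    · rcases T.edge_comparable u v hadj with h | h
      · exact Or.inl (Or.inr (Or.inr ⟨hua, hub, h⟩))
      · refine Or.inr (Or.inl ⟨hvb, ?_⟩)
        exact T.trans a b u hanc (by rw [← hvb]; exact h)
    by_cases hva : v = a
    · rcases T.edge_comparable u v hadj with h | h
      · exact Or.inl (Or.inr (Or.inr ⟨hua, hub, h⟩))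
      · refine Or.inr (Or.inr (Or.inl ⟨hva, ?_⟩))
        have hau : T.anc a u := by rw [← hva]; exact h
        exact reachIn_of_adj (by rw [← hva]; exact hadj.symm) ⟨T.refl a, hab⟩ ⟨hau, hub⟩
    · rcases T.edge_comparable u v hadj with h | h
      · exact Or.inl (Or.inr (Or.inr ⟨hua, hub, h⟩))
      · exact Or.inr (Or.inr (Or.inr ⟨hva, hvb, h⟩))
  desc_connected v := by
    by_cases hvb : v = b
    · have hset : {u | rotAnc T a b v u} = T.descSet a := by
        ext u
        constructor
        · rintro (⟨-, h⟩ | ⟨hva, -⟩ | ⟨-, hvnb, -⟩)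
          · exact h
          · exact absurd (hvb.symm.trans hva) (Ne.symm hab)
          · exact absurd hvb hvnb
        · exact fun h => Or.inl ⟨hvb, h⟩
      rw [hset]
      exact T.desc_connected a
    by_cases hva : v = a
    · have hset : {u | rotAnc T a b v u} = {u | ReachIn G (T.descSet a \ {b}) a u} := by
        ext u
        constructor
        · rintro (⟨hvb', -⟩ | ⟨-, h⟩ | ⟨hvna, -, -⟩)
          · exact absurd hvb' hvb
          · exact h
          · exact absurd hva hvna
        · exact fun h => Or.inr (Or.inl ⟨hva, h⟩)
      rw [hset]
      refine connected_induce_of_reachIn (rotSA_refl hab) (fun u hu => ?_)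
      exact ReachIn.self_strengthen hu
    · have hset : {u | rotAnc T a b v u} = T.descSet v := by
        ext u
        constructor
        · rintro (⟨hvb', -⟩ | ⟨hva', -⟩ | ⟨-, -, h⟩)
          · exact absurd hvb' hvb
          · exact absurd hva' hva
          · exact h
        · exact fun h => Or.inr (Or.inr ⟨hva, hvb, h⟩)
      rw [hset]
      exact T.desc_connected v

lemma rotate_descSet_b (hab : a ≠ b) (hanc : T.anc a b)
    (hpar : ∀ u, T.anc u b → u = b ∨ T.anc u a) :
    (T.rotate a b hab hanc hpar).descSet b = T.descSet a := by
  ext u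
  constructor
  · rintro (⟨-, h⟩ | ⟨hva, -⟩ | ⟨-, hvnb, -⟩)
    · exact h
    · exact absurd hva.symm hab
    · exact absurd rfl hvnb
  · exact fun h => Or.inl ⟨rfl, h⟩

lemma rotate_descSet_other (hab : a ≠ b) (hanc : T.anc a b)
    (hpar : ∀ u, T.anc u b → u = b ∨ T.anc u a) {v : V} (hva : v ≠ a) (hvb : v ≠ b) :
    (T.rotate a b hab hanc hpar).descSet v = T.descSet v := by
  ext u
  constructor
  · rintro (⟨hvb', -⟩ | ⟨hva', -⟩ | ⟨-, -, h⟩)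
    · exact absurd hvb' hvb
    · exact absurd hva' hva
    · exact h
  · exact fun h => Or.inr (Or.inr ⟨hva, hvb, h⟩)

lemma rotate_isRotation (hab : a ≠ b) (hanc : T.anc a b)
    (hpar : ∀ u, T.anc u b → u = b ∨ T.anc u a) :
    IsRotation T (T.rotate a b hab hanc hpar) a b :=
  ⟨hab, hanc, rotate_descSet_b hab hanc hpar,
    fun v hva hvb => rotate_descSet_other hab hanc hpar hva hvb⟩

end Rotate
section UEO

variable {V : Type}

/-- A universal elimination order: every vertex is adjacent to every other
vertex of its connected component in the subgraph induced on later vertices. -/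
def IsUEO (G : SimpleGraph V) (f : V → ℝ) : Prop :=
  Function.Injective f ∧
    ∀ v u : V, ReachIn G {w | f v ≤ f w} v u → u ≠ v → G.Adj v u

lemma reachIn_proj_addUniversal {G : SimpleGraph V} {S' : Set (Option V)}
    (hnone : none ∉ S') :
    ∀ {x y : Option V} (p : (addUniversal G).Walk x y),
      (∀ w ∈ p.support, w ∈ S') → ∀ a c : V, x = some a → y = some c →
        ReachIn G {b | some b ∈ S'} a c := by
  intro x y p
  induction p with
  | nil =>
      rintro h a c rfl hac
      cases hac
      exact reachIn_refl (h _ (by simp))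
  | @cons x' y' z' hadj q ih =>
      rintro h a c rfl rfl
      have hy' : y' ∈ S' := h y' (by simp)
      obtain ⟨b, rfl⟩ : ∃ b, y' = some b := by
        cases y' with
        | none => exact absurd hy' hnone
        | some b => exact ⟨b, rfl⟩
      have hab : G.Adj a b := hadj
      have hrest := ih (fun w hw => h w (by simp [hw])) b c rfl rfl
      exact ReachIn.trans (reachIn_of_adj hab (h _ (by simp)) hy') hrest

lemma reachIn_proj_disjUnion_inl {W : Type} {G : SimpleGraph V} {H : SimpleGraph W}
    {S' : Set (V ⊕ W)} :
    ∀ {x y : V ⊕ W} (p : (disjUnion G H).Walk x y),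
      (∀ w ∈ p.support, w ∈ S') → ∀ a c : V, x = Sum.inl a → y = Sum.inl c →
        ReachIn G {b | Sum.inl b ∈ S'} a c := by
  intro x y p
  induction p with
  | nil =>
      rintro h a c rfl hac
      cases hac
      exact reachIn_refl (h _ (by simp))
  | @cons x' y' z' hadj q ih =>
      rintro h a c rfl rfl
      obtain ⟨b, rfl⟩ : ∃ b, y' = Sum.inl b := by
        cases y' with
        | inl b => exact ⟨b, rfl⟩
        | inr b => exact absurd hadj (by simp [disjUnion])
      have hab : G.Adj a b := hadj
      have hrest := ih (fun w hw => h w (by simp [hw])) b c rfl rfl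
      exact ReachIn.trans (reachIn_of_adj hab (h _ (by simp)) (h _ (by simp))) hrest

lemma reachIn_proj_disjUnion_inr {W : Type} {G : SimpleGraph V} {H : SimpleGraph W}
    {S' : Set (V ⊕ W)} :
    ∀ {x y : V ⊕ W} (p : (disjUnion G H).Walk x y),
      (∀ w ∈ p.support, w ∈ S') → ∀ a c : W, x = Sum.inr a → y = Sum.inr c →
        ReachIn H {b | Sum.inr b ∈ S'} a c := by
  intro x y p
  induction p with
  | nil =>
      rintro h a c rfl hac
      cases hac
      exact reachIn_refl (h _ (by simp))
  | @cons x' y' z' hadj q ih =>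
      rintro h a c rfl rfl
      obtain ⟨b, rfl⟩ : ∃ b, y' = Sum.inr b := by
        cases y' with
        | inl b => exact absurd hadj (by simp [disjUnion])
        | inr b => exact ⟨b, rfl⟩
      have hab : H.Adj a b := hadj
      have hrest := ih (fun w hw => h w (by simp [hw])) b c rfl rfl
      exact ReachIn.trans (reachIn_of_adj hab (h _ (by simp)) (h _ (by simp))) hrest

lemma disjUnion_walk_isLeft {W : Type} {G : SimpleGraph V} {H : SimpleGraph W} :
    ∀ {x y : V ⊕ W} (_ : (disjUnion G H).Walk x y), x.isLeft → y.isLeft := by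
  intro x y p
  induction p with
  | nil => exact id
  | @cons x' y' z' hadj q ih =>
      intro hx
      refine ih ?_
      cases x' with
      | inl a =>
          cases y' with
          | inl b => rfl
          | inr b => exact absurd hadj (by simp [disjUnion])
      | inr a => simp at hx

lemma TPBuild.exists_ueo {W : Type} {H : SimpleGraph W} (h : TPBuild H) :
    ∃ f : W → ℝ, (∀ w, f w ∈ Set.Ioo (0 : ℝ) 1) ∧ IsUEO H f := by
  induction h with
  | single =>
      refine ⟨fun _ => 1/2, fun _ => by norm_num, fun x y _ => Subsingleton.elim x y,
        fun v u _ hne => absurd (Subsingleton.elim u v) hne⟩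
  | @addUniv V G hG ih =>
      obtain ⟨f, hrange, hinj, hprop⟩ := ih
      refine ⟨fun o => o.elim (1/4) (fun a => (f a + 1)/2), ?_, ?_, ?_⟩
      · rintro (_ | a)
        · norm_num
        · have := hrange a
          constructor
          · show (0:ℝ) < (f a + 1)/2; linarith [this.1]
          · show (f a + 1)/2 < 1; linarith [this.2]
      · rintro (_ | x) (_ | y) hxy
        · rfl
        · exfalso; have := hrange y; simp only [Option.elim] at hxy; linarith [this.1]
        · exfalso; have := hrange x; simp only [Option.elim] at hxy; linarith [this.1]
        · simp only [Option.elim] at hxy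
          have : f x = f y := by linarith
          exact congrArg some (hinj this)
      · rintro (_ | a) u hreach hne
        · -- v = none: universal vertex
          cases u with
          | none => exact absurd rfl hne
          | some b => exact trivial
        · -- v = some a
          have hnone : (none : Option V) ∉ {w | (fun o => Option.elim o (1/4)
              (fun a => (f a + 1)/2)) (some a) ≤ (fun o => Option.elim o (1/4)
              (fun a => (f a + 1)/2)) w} := by
            simp only [Set.mem_setOf_eq, Option.elim]
            have := hrange a
            push_neg
            linarith [this.1]
          obtain ⟨p, hp⟩ := hreach
          obtain ⟨c, rfl⟩ : ∃ c, u = some c := by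
            cases u with
            | none => exact absurd (hp none p.end_mem_support) hnone
            | some c => exact ⟨c, rfl⟩
          have hproj := reachIn_proj_addUniversal hnone p hp a c rfl rfl
          have hreach' : ReachIn G {w | f a ≤ f w} a c := by
            refine hproj.mono (fun x hx => ?_)
            have hx' : (f a + 1)/2 ≤ (f x + 1)/2 := hx
            simpa using by linarith
          have hne' : c ≠ a := fun hca => hne (by rw [hca])
          exact hprop a c hreach' hne'
  | @union V W G H hG hH ihG ihH =>
      obtain ⟨f, hfrange, hfinj, hfprop⟩ := ihG
      obtain ⟨g, hgrange, hginj, hgprop⟩ := ihH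
      refine ⟨Sum.elim (fun a => f a / 2) (fun w => (g w + 1)/2), ?_, ?_, ?_⟩
      · rintro (a | w)
        · have := hfrange a
          constructor
          · show (0:ℝ) < f a / 2; linarith [this.1]
          · show f a / 2 < 1; linarith [this.2]
        · have := hgrange w
          constructor
          · show (0:ℝ) < (g w + 1)/2; linarith [this.1]
          · show (g w + 1)/2 < 1; linarith [this.2]
      · rintro (x | x) (y | y) hxy <;> simp only [Sum.elim_inl, Sum.elim_inr] at hxy
        · exact congrArg Sum.inl (hfinj (by linarith : f x = f y))
        · exfalso; have h1 := hfrange x; have h2 := hgrange y; linarith [h1.2, h2.1]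
        · exfalso; have h1 := hgrange x; have h2 := hfrange y; linarith [h1.1, h2.2]
        · exact congrArg Sum.inr (hginj (by linarith : g x = g y))
      · rintro (a | a) u hreach hne
        · obtain ⟨p, hp⟩ := hreach
          obtain ⟨c, rfl⟩ : ∃ c, u = Sum.inl c := by
            cases u with
            | inl c => exact ⟨c, rfl⟩
            | inr c =>
                exfalso
                have := disjUnion_walk_isLeft p (by simp)
                simp at this
          have hproj := reachIn_proj_disjUnion_inl p hp a c rfl rfl
          have hreach' : ReachIn G {w | f a ≤ f w} a c := by
            refine hproj.mono (fun x hx => ?_)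
            have hx' : f a / 2 ≤ f x / 2 := hx
            simpa using by linarith
          have hne' : c ≠ a := fun hca => hne (by rw [hca])
          exact hfprop a c hreach' hne'
        · obtain ⟨p, hp⟩ := hreach
          obtain ⟨c, rfl⟩ : ∃ c, u = Sum.inr c := by
            cases u with
            | inl c =>
                exfalso
                have := disjUnion_walk_isLeft p.reverse (by simp)
                simp at this
            | inr c => exact ⟨c, rfl⟩
          have hproj := reachIn_proj_disjUnion_inr p hp a c rfl rfl
          have hreach' : ReachIn H {w | g a ≤ g w} a c := by
            refine hproj.mono (fun x hx => ?_)
            have hx' : (g a + 1) / 2 ≤ (g x + 1) / 2 := hx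
            simpa using by linarith
          have hne' : c ≠ a := fun hca => hne (by rw [hca])
          exact hgprop a c hreach' hne'

end UEO
section UpperBound

variable {V : Type} {G : SimpleGraph V}

lemma triviallyPerfect_exists_ueo (htp : TriviallyPerfect G) : ∃ f : V → ℝ, IsUEO G f := by
  obtain ⟨W, H, hb, ⟨e⟩⟩ := htp
  obtain ⟨f, -, hinj, hprop⟩ := hb.exists_ueo
  refine ⟨f ∘ e, hinj.comp e.injective, ?_⟩
  intro v u hreach hne
  obtain ⟨p, hp⟩ := hreach
  have hmap : ReachIn H {w | f (e v) ≤ f w} (e v) (e u) := by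
    refine ⟨p.map e.toEmbedding.toHom, fun w hw => ?_⟩
    rw [SimpleGraph.Walk.support_map, List.mem_map] at hw
    obtain ⟨x, hx, rfl⟩ := hw
    exact hp x hx
  have hadj : H.Adj (e v) (e u) := hprop (e v) (e u) hmap (fun h => hne (e.injective h))
  exact e.map_adj_iff.mp hadj

/-- The set of edges wrongly oriented in `T` with respect to the order `f`. -/
def WrongSet (G : SimpleGraph V) (f : V → ℝ) (T : SearchTree G) : Set (Sym2 V) :=
  {e | e ∈ G.edgeSet ∧ ∃ u v, e = s(u, v) ∧ T.anc u v ∧ f v < f u}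

lemma wrongSet_subset_edgeSet {f : V → ℝ} {T : SearchTree G} :
    WrongSet G f T ⊆ G.edgeSet := fun _ h => h.1

/-- The set of misplaced vertices: vertices with an `f`-larger strict ancestor. -/
def BadSet (G : SimpleGraph V) (f : V → ℝ) (T : SearchTree G) : Set V :=
  {v | ∃ u, T.anc u v ∧ u ≠ v ∧ f v < f u}

/-- If no vertex is misplaced, the tree is the greedy tree of the order. -/
lemma eq_orderTree_of_badSet_empty [Fintype V] {f : V → ℝ} {hconn : G.Connected}
    {hf : Function.Injective f} {T : SearchTree G}
    (h : BadSet G f T = ∅) : T = orderTree G hconn f hf := by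
  have hle : ∀ u v, T.anc u v → f u ≤ f v := by
    intro u v huv
    by_cases he : u = v
    · rw [he]
    rcases le_total (f u) (f v) with h' | h'
    · exact h'
    exfalso
    have hv : v ∈ BadSet G f T := ⟨u, huv, he, lt_of_le_of_ne h' (fun hh => he ((hf hh).symm))⟩
    rw [h] at hv
    exact hv
  -- one-step extension lemma
  have hstep : ∀ u x v, T.anc u x → G.Adj x v → f u ≤ f v → T.anc u v := by
    intro u x v hux hadj hle'
    rcases T.edge_comparable x v hadj with h' | h'
    · exact T.trans u x v hux h'
    rcases T.chain u v x hux h' with h2 | h2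
    · exact h2
    by_cases he : v = u
    · rw [← he] at hux ⊢; exact T.refl v
    have hu : u ∈ BadSet G f T := ⟨v, h2, he, lt_of_le_of_ne hle' (fun hh => he ((hf hh).symm))⟩
    rw [h] at hu
    exact hu.elim
  apply SearchTree.ext'
  funext u v
  apply propext
  constructor
  · intro huv
    refine ⟨hle u v huv, ?_⟩
    exact (T.reachIn_descSet huv).mono (fun x hx => hle u x hx)
  · rintro ⟨hle', p, hp⟩
    -- walk from u to v staying in {w | f u ≤ f w} stays in the subtree of u
    clear hle'
    have : ∀ (x y : V) (q : G.Walk x y), (∀ w ∈ q.support, f u ≤ f w) →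
        T.anc u x → T.anc u y := by
      intro x y q
      induction q with
      | nil => exact fun _ h' => h'
      | @cons x' y' z' hadj q ih =>
          intro hsup hux
          refine ih (fun w hw => hsup w (by simp [hw])) ?_
          exact hstep u x' y' hux hadj (hsup y' (by simp))
    exact this u v p hp (T.refl u)

/-- Finding a `φ`-decreasing rotation when some vertex is misplaced. -/
lemma exists_good_rotation [Fintype V] {f : V → ℝ} (hueo : IsUEO G f)
    {T : SearchTree G} (hD : (BadSet G f T).Nonempty) :
    ∃ (a b : V) (T' : SearchTree G), IsRotation T T' a b ∧ G.Adj a b ∧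
      T.anc a b ∧ f b < f a := by
  classical
  obtain ⟨b, hbD, hbmin⟩ := Set.exists_min_image (BadSet G f T) f (Set.toFinite _) hD
  obtain ⟨u₀, hu₀, hu₀ne, hu₀f⟩ := hbD
  obtain ⟨a, hab, hanc, hpar⟩ := T.exists_parent hu₀ hu₀ne
  -- b is f-smaller than its parent a
  have hba : f b < f a := by
    rcases lt_or_ge (f b) (f a) with h | h
    · exact h
    have hane : a ≠ b := hab
    have halt : f a < f b := lt_of_le_of_ne h (fun hh => hane (hueo.1 hh))
    -- then a itself is misplaced via u₀
    have hu₀a : T.anc u₀ a := by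
      rcases hpar u₀ hu₀ with h' | h'
      · exact absurd h' hu₀ne
      · exact h'
    have hu₀ne' : u₀ ≠ a := fun hh => by
      rw [hh] at hu₀f; linarith
    have : a ∈ BadSet G f T := ⟨u₀, hu₀a, hu₀ne', by linarith⟩
    linarith [hbmin a this]
  -- the subtree of a lies in the f-suffix of b
  have hsub : T.descSet a ⊆ {w | f b ≤ f w} := by
    intro x hx
    by_cases hxa : x = a
    · rw [hxa]; exact le_of_lt hba
    by_cases hxb : x = b
    · rw [hxb]; exact le_refl (f b)
    rcases le_total (f b) (f x) with h | h
    · exact h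
    have hfx : f x < f b := lt_of_le_of_ne h (fun hh => hxb (hueo.1 hh))
    have : x ∈ BadSet G f T := ⟨a, hx, Ne.symm hxa, by linarith⟩
    linarith [hbmin x this]
  -- a and b are adjacent
  have hadj : G.Adj a b := by
    have hr : ReachIn G {w | f b ≤ f w} b a :=
      ((T.reachIn_descSet hanc).mono hsub).symm
    exact (hueo.2 b a hr hab).symm
  exact ⟨a, b, T.rotate a b hab hanc hpar, rotate_isRotation hab hanc hpar, hadj, hanc, hba⟩

lemma wrongSet_rotation {f : V → ℝ} {T T' : SearchTree G} {a b : V}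
    (hrot : IsRotation T T' a b) (hadj : G.Adj a b) (hba : f b < f a) :
    WrongSet G f T' = WrongSet G f T \ {s(a, b)} ∧ s(a, b) ∈ WrongSet G f T := by
  have hmem : s(a, b) ∈ WrongSet G f T :=
    ⟨(SimpleGraph.mem_edgeSet _).mpr hadj, a, b, rfl, hrot.2.1, hba⟩
  have hnotmem : s(a, b) ∉ WrongSet G f T' := by
    rintro ⟨-, u, v, huv, hanc', hfv⟩
    rcases Sym2.eq_iff.mp huv.symm with ⟨rfl, rfl⟩ | ⟨rfl, rfl⟩
    · exact hrot.not_anc_a_b hanc'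
    · -- u = b, v = a: f a < f b contradiction
      linarith
  constructor
  · ext e
    constructor
    · rintro ⟨he, u, v, huv, hanc', hfv⟩
      have heab : e ≠ s(a, b) := fun hh => hnotmem (hh ▸ ⟨he, u, v, huv, hanc', hfv⟩)
      refine ⟨⟨he, u, v, huv, ?_, hfv⟩, heab⟩
      have hadjuv : G.Adj u v := (SimpleGraph.mem_edgeSet _).mp (huv ▸ he)
      exact (hrot.anc_iff hadjuv (huv ▸ heab)).mpr hanc'
    · rintro ⟨⟨he, u, v, huv, hanc', hfv⟩, heab⟩
      have heab' : e ≠ s(a, b) := heab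
      refine ⟨he, u, v, huv, ?_, hfv⟩
      have hadjuv : G.Adj u v := (SimpleGraph.mem_edgeSet _).mp (huv ▸ he)
      exact (hrot.anc_iff hadjuv (huv ▸ heab')).mp hanc'
  · exact hmem

/-- Any search tree can be rotated to the greedy tree of a universal elimination
order within `(WrongSet f T).ncard` rotations. -/
lemma edist_le_wrongSet [Fintype V] {f : V → ℝ} (hueo : IsUEO G f)
    (hconn : G.Connected) :
    ∀ (n : ℕ) (T : SearchTree G), (WrongSet G f T).ncard ≤ n →
      (rotationGraph G).edist T (orderTree G hconn f hueo.1) ≤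
        ((WrongSet G f T).ncard : ℕ∞) := by
  intro n
  induction n with
  | zero =>
      intro T hT
      rcases Set.eq_empty_or_nonempty (BadSet G f T) with hD | hD
      · rw [eq_orderTree_of_badSet_empty (hconn := hconn) (hf := hueo.1) hD]
        simp [SimpleGraph.edist_self]
      · exfalso
        obtain ⟨a, b, T', hrot, hadj, hanc, hba⟩ := exists_good_rotation hueo hD
        have hmem := (wrongSet_rotation hrot hadj hba).2
        have : 0 < (WrongSet G f T).ncard :=
          (Set.ncard_pos (Set.toFinite _)).mpr ⟨s(a, b), hmem⟩
        omega
  | succ n ih =>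
      intro T hT
      rcases Set.eq_empty_or_nonempty (BadSet G f T) with hD | hD
      · rw [eq_orderTree_of_badSet_empty (hconn := hconn) (hf := hueo.1) hD]
        simp [SimpleGraph.edist_self]
      · obtain ⟨a, b, T', hrot, hadj, hanc, hba⟩ := exists_good_rotation hueo hD
        obtain ⟨hW, hmem⟩ := wrongSet_rotation hrot hadj hba
        have hfin : (WrongSet G f T).Finite := Set.toFinite _
        have hcard : (WrongSet G f T').ncard = (WrongSet G f T).ncard - 1 := by
          rw [hW]
          exact Set.ncard_diff_singleton_of_mem hmem
        have hpos : 1 ≤ (WrongSet G f T).ncard := (Set.ncard_pos (Set.toFinite _)).mpr ⟨_, hmem⟩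
        have hT' : (WrongSet G f T').ncard ≤ n := by omega
        have hstep : (rotationGraph G).edist T T' ≤ 1 := by
          have : (rotationGraph G).Adj T T' := ⟨a, b, hrot⟩
          exact SimpleGraph.edist_le (SimpleGraph.Walk.cons this SimpleGraph.Walk.nil)
            |>.trans (by simp)
        calc (rotationGraph G).edist T (orderTree G hconn f hueo.1)
            ≤ (rotationGraph G).edist T T' +
              (rotationGraph G).edist T' (orderTree G hconn f hueo.1) :=
              SimpleGraph.edist_triangle
          _ ≤ 1 + ((WrongSet G f T').ncard : ℕ∞) := add_le_add hstep (ih T' hT')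
          _ = (((1 : ℕ) + (WrongSet G f T').ncard : ℕ) : ℕ∞) := by
              push_cast; ring
          _ = ((WrongSet G f T).ncard : ℕ∞) := by
              congr 1
              omega

end UpperBound
/-- Let `G` be a connected trivially perfect graph with `m` edges.
Then `m ≤ δ(A(G)) ≤ 2m` (in particular, `δ(A(G)) = Θ(m)`). -/
theorem diam_assoc_trivially_perfect {V : Type} [Fintype V] (G : SimpleGraph V)
    (hconn : G.Connected) (htp : TriviallyPerfect G) (m : ℕ)
    (hm : G.edgeSet.ncard = m) :
    (m : ℕ∞) ≤ (rotationGraph G).ediam ∧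
      (rotationGraph G).ediam ≤ ((2 * m : ℕ) : ℕ∞) := by
  constructor
  · rw [← hm]
    exact le_ediam_of_connected hconn
  · obtain ⟨f, hueo⟩ := triviallyPerfect_exists_ueo htp
    rw [SimpleGraph.ediam_le_iff]
    intro T T'
    have hbound : ∀ S : SearchTree G,
        (rotationGraph G).edist S (orderTree G hconn f hueo.1) ≤ (m : ℕ∞) := by
      intro S
      have h1 := edist_le_wrongSet hueo hconn (WrongSet G f S).ncard S le_rfl
      have h2 : (WrongSet G f S).ncard ≤ m := by
        rw [← hm]
        exact Set.ncard_le_ncard wrongSet_subset_edgeSet (Set.toFinite _)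
      exact h1.trans (by exact_mod_cast Nat.cast_le.mpr h2)
    calc (rotationGraph G).edist T T'
        ≤ (rotationGraph G).edist T (orderTree G hconn f hueo.1) +
          (rotationGraph G).edist (orderTree G hconn f hueo.1) T' :=
          SimpleGraph.edist_triangle
      _ ≤ (m : ℕ∞) + (m : ℕ∞) := by
          refine add_le_add (hbound T) ?_
          rw [SimpleGraph.edist_comm]
          exact hbound T'
      _ = ((2 * m : ℕ) : ℕ∞) := by
          push_cast
          ring
end

section
/- For any two positive integers k and n such that k divides n, there exists a connected trivially perfect graph G on n+1 vertices such that the tree-depth of G equals n/k + 1 and δ(A(G)) ≥ (n/k + 1)·n/2. One such graph consists of k cliques C_1,…,C_k, each of size n/k + 1, such that a single designated vertex v is the unique common vertex of any two distinct cliques C_i and C_j. -/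
open SimpleGraph

section Aux

open SimpleGraph Finset

variable {V : Type} {G : SimpleGraph V}

/-- hub connectivity for induced subgraphs -/
lemma hub_induce_connected (S : Set V) (h : V) (hh : h ∈ S)
    (hadj : ∀ x ∈ S, x ≠ h → G.Adj h x) : (G.induce S).Connected := by
  rw [SimpleGraph.connected_iff]
  have key : ∀ w : S, (G.induce S).Reachable ⟨h, hh⟩ w := by
    rintro ⟨w, hw⟩
    by_cases hwh : w = h
    · subst hwh; exact SimpleGraph.Reachable.refl _
    · exact SimpleGraph.Adj.reachable (by
        show G.Adj h w
        exact hadj w hw hwh)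
  exact ⟨fun u v => (key u).symm.trans (key v), ⟨⟨h, hh⟩⟩⟩

/-- a finite pairwise-comparable set has a maximum element -/
lemma exists_anc_max (T : SearchTree G) (s : Finset V) (hne : s.Nonempty)
    (hcomp : ∀ x ∈ s, ∀ y ∈ s, T.anc x y ∨ T.anc y x) :
    ∃ w ∈ s, ∀ x ∈ s, T.anc x w := by
  classical
  induction s using Finset.induction_on with
  | empty => exact absurd hne (by simp)
  | @insert a s ha ih =>
    by_cases hs : s.Nonempty
    · obtain ⟨w, hw, hmax⟩ := ih hs (fun x hx y hy =>
        hcomp x (mem_insert_of_mem hx) y (mem_insert_of_mem hy))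
      rcases hcomp a (mem_insert_self a s) w (mem_insert_of_mem hw) with h | h
      · exact ⟨w, mem_insert_of_mem hw, fun x hx => by
          rcases mem_insert.1 hx with rfl | hx
          · exact h
          · exact hmax x hx⟩
      · exact ⟨a, mem_insert_self a s, fun x hx => by
          rcases mem_insert.1 hx with rfl | hx
          · exact T.refl x
          · exact T.trans x w a (hmax x hx) h⟩
    · rw [Finset.not_nonempty_iff_eq_empty] at hs
      subst hs
      exact ⟨a, mem_insert_self a _, fun x hx => by
        rcases mem_insert.1 hx with rfl | hx
        · exact T.refl x
        · simp at hx⟩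

/-- Key invariance lemma: a rotation at `(a,b)` does not change the ancestor
relation on any pair of `G`-adjacent vertices other than `(a,b)` itself. -/
lemma rotation_anc_iff {T T' : SearchTree G} {a b : V} (hrot : IsRotation T T' a b)
    {x y : V} (hadj : G.Adj x y) (h1 : ¬(x = a ∧ y = b)) (h2 : ¬(x = b ∧ y = a)) :
    (T.anc x y ↔ T'.anc x y) := by
  obtain ⟨hne, hab, hBdesc, hoth⟩ := hrot
  have hvb : ∀ v, v ≠ a → v ≠ b → ∀ u, (T'.anc v u ↔ T.anc v u) := fun v hva hvb' u =>
    Set.ext_iff.1 (hoth v hva hvb') u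
  have hbu : ∀ u, (T'.anc b u ↔ T.anc a u) := fun u => Set.ext_iff.1 hBdesc u
  have hxyne : x ≠ y := hadj.ne
  have h'ba : T'.anc b a := (hbu a).2 (T.refl a)
  by_cases hxa : x = a
  · have hyb : y ≠ b := fun h => h1 ⟨hxa, h⟩
    have hya : y ≠ a := fun h => hxyne (hxa.trans h.symm)
    constructor
    · intro h
      rcases T'.edge_comparable _ _ hadj with h' | h'
      · exact h'
      · exfalso
        have hT : T.anc y x := (hvb y hya hyb x).1 h'
        exact hya ((T.antisymm y x hT h).trans hxa)
    · intro h
      have : T'.anc b y := T'.trans b x y (hxa ▸ h'ba) h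
      exact hxa ▸ (hbu y).1 this
  · by_cases hxb : x = b
    · have hya : y ≠ a := fun h => h2 ⟨hxb, h⟩
      have hyb : y ≠ b := fun h => hxyne (hxb.trans h.symm)
      constructor
      · intro h
        have : T.anc a y := T.trans a x y (hxb ▸ hab) h
        exact hxb ▸ (hbu y).2 this
      · intro h
        rcases T.edge_comparable _ _ hadj with h' | h'
        · exact h'
        · exfalso
          have hT' : T'.anc y x := (hvb y hya hyb x).2 h'
          exact hyb ((T'.antisymm x y h hT').symm.trans hxb)
    · exact ((hvb x hxa hxb y)).symm

end Aux
section Phi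

open SimpleGraph Finset

variable {V : Type} {G : SimpleGraph V}

open Classical in
/-- number of `G`-edges oriented differently in `T` and in the target tree `T0` -/
noncomputable def Phi [Fintype V] (G : SimpleGraph V) (T0 T : SearchTree G) : ℕ :=
  (Finset.univ.filter fun p : V × V => G.Adj p.1 p.2 ∧ T.anc p.1 p.2 ∧ T0.anc p.2 p.1).card

lemma phi_self [Fintype V] (T0 : SearchTree G) : Phi G T0 T0 = 0 := by
  classical
  rw [Phi, Finset.card_eq_zero]
  ext ⟨x, y⟩
  simp only [Finset.mem_filter, Finset.mem_univ, true_and, Finset.notMem_empty, iff_false]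
  rintro ⟨hadj, h1, h2⟩
  exact hadj.ne (T0.antisymm x y h1 h2)

lemma phi_step [Fintype V] (T0 T T' : SearchTree G)
    (h : (rotationGraph G).Adj T T') : Phi G T0 T ≤ Phi G T0 T' + 1 := by
  classical
  obtain ⟨a, b, hrot⟩ := h
  have hsub : (Finset.univ.filter fun p : V × V =>
        G.Adj p.1 p.2 ∧ T.anc p.1 p.2 ∧ T0.anc p.2 p.1) ⊆
      insert (a, b) (Finset.univ.filter fun p : V × V =>
        G.Adj p.1 p.2 ∧ T'.anc p.1 p.2 ∧ T0.anc p.2 p.1) := by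
    rintro ⟨x, y⟩ hp
    simp only [Finset.mem_filter, Finset.mem_univ, true_and] at hp
    obtain ⟨hadj, h1, h2⟩ := hp
    by_cases hab : x = a ∧ y = b
    · simp [hab.1, hab.2]
    · have hba : ¬(x = b ∧ y = a) := by
        rintro ⟨hxb, hya⟩
        exact hrot.1 (T.antisymm a b hrot.2.1 (hxb ▸ hya ▸ h1))
      refine Finset.mem_insert_of_mem ?_
      simp only [Finset.mem_filter, Finset.mem_univ, true_and]
      exact ⟨hadj, (rotation_anc_iff hrot hadj hab hba).1 h1, h2⟩
  calc Phi G T0 T ≤ _ := Finset.card_le_card hsub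
    _ ≤ Phi G T0 T' + 1 := by
        rw [Phi]
        exact Finset.card_insert_le _ _
  
lemma phi_walk [Fintype V] (T0 : SearchTree G) {T T' : SearchTree G}
    (p : (rotationGraph G).Walk T T') : Phi G T0 T ≤ Phi G T0 T' + p.length := by
  induction p with
  | nil => simp
  | @cons u v w h q ih =>
    calc Phi G T0 u ≤ Phi G T0 v + 1 := phi_step T0 _ _ h
      _ ≤ (Phi G T0 w + q.length) + 1 := by omega
      _ = Phi G T0 w + (SimpleGraph.Walk.cons h q).length := by
          rw [SimpleGraph.Walk.length_cons]; omega

lemma phi_le_edist [Fintype V] (T T0 : SearchTree G) :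
    (Phi G T0 T : ℕ∞) ≤ (rotationGraph G).edist T T0 := by
  by_cases hreach : (rotationGraph G).Reachable T T0
  · obtain ⟨p, hp⟩ := hreach.exists_walk_length_eq_edist
    have := phi_walk T0 p
    rw [phi_self] at this
    rw [← hp]
    exact_mod_cast by omega
  · rw [SimpleGraph.edist_eq_top_of_not_reachable hreach]
    exact le_top

end Phi
section TP

open SimpleGraph

lemma tp_of_iso {V W : Type} {G : SimpleGraph V} {H : SimpleGraph W}
    (e : G ≃g H) (h : TriviallyPerfect H) : TriviallyPerfect G := by
  obtain ⟨W', H', hb, ⟨e'⟩⟩ := h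
  exact ⟨W', H', hb, ⟨e.trans e'⟩⟩

lemma tp_addUniversal {V : Type} {G : SimpleGraph V} (h : TriviallyPerfect G) :
    TriviallyPerfect (addUniversal G) := by
  obtain ⟨W, H, hb, ⟨e⟩⟩ := h
  refine ⟨Option W, addUniversal H, TPBuild.addUniv hb, ⟨⟨Equiv.optionCongr e.toEquiv, ?_⟩⟩⟩
  rintro (_ | a) (_ | b) <;>
    simp only [Equiv.optionCongr_apply, Option.map_none, Option.map_some] <;>
    simp [addUniversal] <;> exact e.map_rel_iff

lemma tp_disjUnion {V W : Type} {G : SimpleGraph V} {H : SimpleGraph W}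
    (hG : TriviallyPerfect G) (hH : TriviallyPerfect H) :
    TriviallyPerfect (disjUnion G H) := by
  obtain ⟨V', G', hbG, ⟨eG⟩⟩ := hG
  obtain ⟨W', H', hbH, ⟨eH⟩⟩ := hH
  refine ⟨V' ⊕ W', disjUnion G' H', TPBuild.union hbG hbH,
    ⟨⟨Equiv.sumCongr eG.toEquiv eH.toEquiv, ?_⟩⟩⟩
  rintro (a | a) (b | b) <;>
    simp only [Equiv.sumCongr_apply, Sum.map_inl, Sum.map_inr] <;>
    simp [disjUnion] <;> first | exact eG.map_rel_iff | exact eH.map_rel_iff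

/-- `addUniversal` preserves the "complete graph" property -/
lemma addUniversal_complete {V : Type} {G : SimpleGraph V}
    (h : ∀ u v, G.Adj u v ↔ u ≠ v) :
    ∀ u v, (addUniversal G).Adj u v ↔ u ≠ v := by
  rintro (_ | a) (_ | b) <;> simp [addUniversal, h]

/-- any two "complete" graphs on equivalent types are isomorphic -/
def completeIso {V W : Type} {G : SimpleGraph V} {H : SimpleGraph W}
    (hG : ∀ u v, G.Adj u v ↔ u ≠ v) (hH : ∀ u v, H.Adj u v ↔ u ≠ v)
    (e : V ≃ W) : G ≃g H :=
  ⟨e, by intro a b; rw [hG, hH]; exact not_congr ⟨fun h => e.injective h, fun h => h ▸ rfl⟩⟩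

/-- complete graphs are trivially perfect -/
lemma tp_complete : ∀ (m : ℕ) {V : Type} (e : V ≃ Fin (m + 1)) (G : SimpleGraph V),
    (∀ u v, G.Adj u v ↔ u ≠ v) → TriviallyPerfect G := by
  intro m
  induction m with
  | zero =>
    intro V e G hG
    refine ⟨PUnit, ⊥, TPBuild.single, ⟨⟨e.trans finOneEquiv, ?_⟩⟩⟩
    intro a b
    simp only [SimpleGraph.bot_adj, false_iff]
    rw [hG]
    simp only [ne_eq, not_not]
    exact e.injective (Subsingleton.elim (α := Fin 1) _ _)
  | succ m ih =>
    intro V e G hG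
    -- G ≃g addUniversal (complete on Fin (m+1))
    have hcompl : ∀ u v : Fin (m + 1), (⊤ : SimpleGraph (Fin (m + 1))).Adj u v ↔ u ≠ v := by
      intro u v; rfl
    have htp : TriviallyPerfect (addUniversal (⊤ : SimpleGraph (Fin (m + 1)))) :=
      tp_addUniversal (ih (Equiv.refl _) _ hcompl)
    refine tp_of_iso (completeIso hG (addUniversal_complete hcompl)
      (e.trans (finSuccEquiv (m + 1)))) htp

end TP
section Construction

open SimpleGraph

/-- vertex type: `none` is the hub vertex `v` -/
abbrev Vt (k m : ℕ) := Option (Fin k × Fin m)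

/-- the clique `C i` -/
def Cset (k m : ℕ) (i : Fin k) : Set (Vt k m) :=
  insert none (Set.range fun b => some (i, b))

lemma mem_Cset {k m : ℕ} {i : Fin k} {x : Vt k m} :
    x ∈ Cset k m i ↔ x = none ∨ ∃ b, x = some (i, b) := by
  simp only [Cset, Set.mem_insert_iff, Set.mem_range]
  constructor
  · rintro (h | ⟨b, rfl⟩)
    · exact Or.inl h
    · exact Or.inr ⟨b, rfl⟩
  · rintro (h | ⟨b, rfl⟩)
    · exact Or.inl h
    · exact Or.inr ⟨b, rfl⟩

/-- the graph: union of `k` cliques of size `m+1` glued at `none` -/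
def Gg (k m : ℕ) : SimpleGraph (Vt k m) where
  Adj x y := x ≠ y ∧ ∃ i, x ∈ Cset k m i ∧ y ∈ Cset k m i
  symm := by constructor; rintro x y ⟨h1, i, h2, h3⟩; exact ⟨h1.symm, i, h3, h2⟩
  loopless := by constructor; rintro x ⟨h, _⟩; exact h rfl

lemma gg_adj_iff {k m : ℕ} (x y : Vt k m) :
    (Gg k m).Adj x y ↔
      ((x = none ∧ y ≠ none) ∨ (y = none ∧ x ≠ none) ∨
        (∃ i a b, x = some (i, a) ∧ y = some (i, b) ∧ a ≠ b)) := by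
  constructor
  · rintro ⟨hne, i, hx, hy⟩
    rw [mem_Cset] at hx hy
    rcases hx with rfl | ⟨a, rfl⟩
    · rcases hy with rfl | ⟨b, rfl⟩
      · exact absurd rfl hne
      · exact Or.inl ⟨rfl, by simp⟩
    · rcases hy with rfl | ⟨b, rfl⟩
      · exact Or.inr (Or.inl ⟨rfl, by simp⟩)
      · refine Or.inr (Or.inr ⟨i, a, b, rfl, rfl, ?_⟩)
        intro h; exact hne (by rw [h])
  · rintro (⟨rfl, hy⟩ | ⟨rfl, hx⟩ | ⟨i, a, b, rfl, rfl, hab⟩)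
    · obtain ⟨p, rfl⟩ := Option.ne_none_iff_exists'.1 hy
      exact ⟨(Option.some_ne_none p).symm, p.1,
        mem_Cset.2 (Or.inl rfl), mem_Cset.2 (Or.inr ⟨p.2, rfl⟩)⟩
    · obtain ⟨p, rfl⟩ := Option.ne_none_iff_exists'.1 hx
      exact ⟨Option.some_ne_none p, p.1,
        mem_Cset.2 (Or.inr ⟨p.2, rfl⟩), mem_Cset.2 (Or.inl rfl)⟩
    · refine ⟨?_, i, mem_Cset.2 (Or.inr ⟨a, rfl⟩), mem_Cset.2 (Or.inr ⟨b, rfl⟩)⟩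
      simp only [ne_eq, Option.some.injEq, Prod.mk.injEq]
      rintro ⟨-, h⟩; exact hab h

lemma gg_adj_none {k m : ℕ} (p : Fin k × Fin m) : (Gg k m).Adj none (some p) :=
  (gg_adj_iff _ _).2 (Or.inl ⟨rfl, by simp⟩)

lemma gg_adj_some {k m : ℕ} {i : Fin k} {a b : Fin m} (h : a ≠ b) :
    (Gg k m).Adj (some (i, a)) (some (i, b)) :=
  (gg_adj_iff _ _).2 (Or.inr (Or.inr ⟨i, a, b, rfl, rfl, h⟩))

/-- The optimal search tree: root `none`, below it each clique as an
increasing chain. -/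
def T1 (k m : ℕ) : SearchTree (Gg k m) where
  anc x y := x = none ∨ ∃ i a b, x = some (i, a) ∧ y = some (i, b) ∧ a ≤ b
  refl v := by
    cases v with
    | none => exact Or.inl rfl
    | some p => exact Or.inr ⟨p.1, p.2, p.2, rfl, rfl, le_refl _⟩
  antisymm := by
    rintro u v (rfl | ⟨i, a, b, rfl, rfl, hab⟩) huv
    · rcases huv with rfl | ⟨i, a, b, h1, h2, h'⟩
      · rfl
      · exact absurd h2 (by simp)
    · rcases huv with h | ⟨i', a', b', h1, h2, h'⟩
      · exact absurd h (by simp)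
      · simp only [Option.some.injEq, Prod.mk.injEq] at h1 h2
        obtain ⟨rfl, rfl⟩ := h1
        obtain ⟨-, rfl⟩ := h2
        have : a = b := le_antisymm hab h'
        rw [this]
  trans := by
    rintro u v w (rfl | ⟨i, a, b, rfl, rfl, hab⟩) hvw
    · exact Or.inl rfl
    · rcases hvw with h | ⟨i', b', c, h1, rfl, h'⟩
      · exact absurd h (by simp)
      · simp only [Option.some.injEq, Prod.mk.injEq] at h1
        obtain ⟨rfl, rfl⟩ := h1
        exact Or.inr ⟨i, a, c, rfl, rfl, le_trans hab h'⟩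
  chain := by
    rintro u v w hu hv
    rcases hu with rfl | ⟨i, a, c, rfl, rfl, hac⟩
    · exact Or.inl (Or.inl rfl)
    · rcases hv with rfl | ⟨i', b, c', rfl, h2, hbc⟩
      · exact Or.inr (Or.inl rfl)
      · simp only [Option.some.injEq, Prod.mk.injEq] at h2
        obtain ⟨rfl, rfl⟩ := h2
        rcases le_total a b with h | h
        · exact Or.inl (Or.inr ⟨i, a, b, rfl, rfl, h⟩)
        · exact Or.inr (Or.inr ⟨i, b, a, rfl, rfl, h⟩)
  root := ⟨none, fun v => Or.inl rfl⟩
  edge_comparable := by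
    intro u v hadj
    rcases (gg_adj_iff u v).1 hadj with ⟨rfl, -⟩ | ⟨rfl, -⟩ | ⟨i, a, b, rfl, rfl, -⟩
    · exact Or.inl (Or.inl rfl)
    · exact Or.inr (Or.inl rfl)
    · rcases le_total a b with h | h
      · exact Or.inl (Or.inr ⟨i, a, b, rfl, rfl, h⟩)
      · exact Or.inr (Or.inr ⟨i, b, a, rfl, rfl, h⟩)
  desc_connected := by
    intro v
    cases v with
    | none =>
      refine hub_induce_connected _ none (Or.inl rfl) ?_
      intro x _ hx
      obtain ⟨p, rfl⟩ := Option.ne_none_iff_exists'.1 hx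
      exact gg_adj_none p
    | some p =>
      obtain ⟨i, a⟩ := p
      refine hub_induce_connected _ (some (i, a))
        (Or.inr ⟨i, a, a, rfl, rfl, le_refl _⟩) ?_
      rintro x (h | ⟨i', a', b, h1, rfl, hab⟩) hne
      · exact absurd h (by simp)
      · simp only [Option.some.injEq, Prod.mk.injEq] at h1
        obtain ⟨rfl, rfl⟩ := h1
        refine gg_adj_some ?_
        intro h; exact hne (by rw [h])

end Construction
section T2def

open SimpleGraph

lemma enc_inj {m i j r s : ℕ} (hr : r < m) (hs : s < m)
    (h : i * m + r = j * m + s) : i = j ∧ r = s := by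
  rcases Nat.lt_trichotomy i j with hij | rfl | hij
  · exfalso
    have h2 : (i + 1) * m ≤ j * m := Nat.mul_le_mul_right m (by omega)
    rw [Nat.add_mul, one_mul] at h2
    omega
  · exact ⟨rfl, by omega⟩
  · exfalso
    have h2 : (j + 1) * m ≤ i * m := Nat.mul_le_mul_right m (by omega)
    rw [Nat.add_mul, one_mul] at h2
    omega

/-- rank function for the second tree: a total order with `none` last,
within each clique in decreasing order -/
def rho (k m : ℕ) : Vt k m → ℕ
  | none => k * m
  | some (i, a) => i.val * m + (m - 1 - a.val)

lemma rho_some_lt {k m : ℕ} (p : Fin k × Fin m) : rho k m (some p) < k * m := by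
  obtain ⟨i, a⟩ := p
  have h1 : (i.val + 1) * m ≤ k * m := Nat.mul_le_mul_right m (by omega)
  have h2 : m - 1 - a.val < m := by have := a.isLt; omega
  rw [Nat.add_mul, one_mul] at h1
  simp only [rho]
  omega

lemma rho_inj {k m : ℕ} : Function.Injective (rho k m) := by
  rintro (_ | ⟨i, a⟩) (_ | ⟨j, b⟩) h
  · rfl
  · exact absurd h (by have := rho_some_lt (j, b); rw [show rho k m none = k * m from rfl]; omega)
  · exact absurd h (by have := rho_some_lt (i, a); rw [show rho k m none = k * m from rfl]; omega)
  · simp only [rho] at h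
    have ha := a.isLt
    have hb := b.isLt
    obtain ⟨h1, h2⟩ := enc_inj (by omega) (by omega) h
    have : a = b := Fin.ext (by omega)
    rw [Fin.ext h1, this]

/-- The second search tree: a path (total order by `rho`), `none` at the
bottom; valid since `none` is universal. -/
def T2 (k m : ℕ) (hk : 0 < k) (hm : 0 < m) : SearchTree (Gg k m) where
  anc x y := x = y ∨ rho k m x < rho k m y
  refl v := Or.inl rfl
  antisymm := by
    rintro u v (rfl | h1) (h2 | h2)
    · rfl
    · rfl
    · exact h2.symm
    · omega
  trans := by
    rintro u v w (rfl | h1) (rfl | h2)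
    · exact Or.inl rfl
    · exact Or.inr h2
    · exact Or.inr h1
    · exact Or.inr (h1.trans h2)
  chain := by
    intro u v w _ _
    rcases Nat.lt_trichotomy (rho k m u) (rho k m v) with h | h | h
    · exact Or.inl (Or.inr h)
    · exact Or.inl (Or.inl (rho_inj h))
    · exact Or.inr (Or.inr h)
  root := by
    refine ⟨some (⟨0, hk⟩, ⟨m - 1, by omega⟩), fun v => ?_⟩
    have hr : rho k m (some (⟨0, hk⟩, ⟨m - 1, by omega⟩)) = 0 := by
      simp [rho]
    rcases Nat.eq_zero_or_pos (rho k m v) with h | h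
    · exact Or.inl (rho_inj (by rw [hr, h]))
    · exact Or.inr (by omega)
  edge_comparable := by
    intro u v _
    rcases Nat.lt_trichotomy (rho k m u) (rho k m v) with h | h | h
    · exact Or.inl (Or.inr h)
    · exact Or.inl (Or.inl (rho_inj h))
    · exact Or.inr (Or.inr h)
  desc_connected := by
    intro v
    refine hub_induce_connected _ none ?_ ?_
    · cases v with
      | none => exact Or.inl rfl
      | some p => exact Or.inr (by rw [show rho k m none = k * m from rfl]; exact rho_some_lt p)
    · intro x _ hx
      obtain ⟨p, rfl⟩ := Option.ne_none_iff_exists'.1 hx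
      exact gg_adj_none p

/-- key disagreement: every edge is oriented oppositely in `T1` and `T2`. -/
lemma t1_t2_flip {k m : ℕ} (hk : 0 < k) (hm : 0 < m) {x y : Vt k m}
    (hadj : (Gg k m).Adj x y) (h1 : (T1 k m).anc x y) :
    (T2 k m hk hm).anc y x := by
  rcases (gg_adj_iff x y).1 hadj with ⟨rfl, hy⟩ | ⟨rfl, hx⟩ | ⟨i, a, b, rfl, rfl, hab⟩
  · obtain ⟨p, rfl⟩ := Option.ne_none_iff_exists'.1 hy
    exact Or.inr (by rw [show rho k m none = k * m from rfl]; exact rho_some_lt p)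
  · -- x = some, y = none: T1.anc x none is impossible
    exfalso
    rcases h1 with h | ⟨i, a, b, h1', h2', -⟩
    · exact hx h
    · exact absurd h2' (by simp)
  · -- same clique, a ≠ b; from T1.anc: a ≤ b hence a < b
    have hle : a ≤ b := by
      rcases h1 with h | ⟨i', a', b', h1', h2', h'⟩
      · exact absurd h (by simp)
      · simp only [Option.some.injEq, Prod.mk.injEq] at h1' h2'
        obtain ⟨rfl, rfl⟩ := h1'
        obtain ⟨-, rfl⟩ := h2'
        exact h'
    have hlt : a.val < b.val := lt_of_le_of_ne hle (by simpa [Fin.ext_iff] using hab)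
    refine Or.inr ?_
    simp only [rho]
    have := b.isLt
    omega

end T2def
section TPGg

open SimpleGraph

lemma gg_adj_some_iff {k m : ℕ} {i j : Fin k} {a b : Fin m} :
    (Gg k m).Adj (some (i, a)) (some (j, b)) ↔ i = j ∧ a ≠ b := by
  rw [gg_adj_iff]
  constructor
  · rintro (⟨h, -⟩ | ⟨h, -⟩ | ⟨i', a', b', h1, h2, hab⟩)
    · exact absurd h (by simp)
    · exact absurd h (by simp)
    · simp only [Option.some.injEq, Prod.mk.injEq] at h1 h2
      obtain ⟨rfl, rfl⟩ := h1
      obtain ⟨rfl, rfl⟩ := h2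
      exact ⟨rfl, hab⟩
  · rintro ⟨rfl, hab⟩
    exact Or.inr (Or.inr ⟨i, a, b, rfl, rfl, hab⟩)

/-- disjoint union of `k` cliques of size `m` -/
def Gm (k m : ℕ) : SimpleGraph (Fin k × Fin m) where
  Adj p q := p.1 = q.1 ∧ p.2 ≠ q.2
  symm := by constructor; rintro p q ⟨h1, h2⟩; exact ⟨h1.symm, h2.symm⟩
  loopless := by constructor; rintro p ⟨-, h⟩; exact h rfl

def stepEquiv (k m : ℕ) : (Fin (k + 2) × Fin m) ≃ ((Fin 1 × Fin m) ⊕ (Fin (k + 1) × Fin m)) where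
  toFun p := if h : p.1 = 0 then Sum.inl (0, p.2) else Sum.inr (p.1.pred h, p.2)
  invFun q := Sum.elim (fun r => (0, r.2)) (fun r => (r.1.succ, r.2)) q
  left_inv p := by
    by_cases h : p.1 = 0
    · simp only [dif_pos h, Sum.elim_inl]
      exact Prod.ext h.symm rfl
    · simp only [dif_neg h, Sum.elim_inr]
      exact Prod.ext (Fin.succ_pred p.1 h) rfl
  right_inv q := by
    rcases q with ⟨a, r⟩ | ⟨a, r⟩
    · dsimp only [Sum.elim_inl]
      rw [dif_pos rfl]
      exact congrArg Sum.inl (Prod.ext (Subsingleton.elim _ _) rfl)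
    · dsimp only [Sum.elim_inr]
      simp only [dif_neg (show ¬((a.succ, r) : Fin (k + 2) × Fin m).1 = 0 from Fin.succ_ne_zero a)]
      rw [Fin.pred_succ]

/-- base case: one clique -/
lemma tp_Gm_one (m : ℕ) (hm : 0 < m) : TriviallyPerfect (Gm 1 m) := by
  have e : (Fin 1 × Fin m) ≃ Fin ((m - 1) + 1) :=
    (⟨fun p => p.2, fun b => (0, b), fun p => Prod.ext (Subsingleton.elim _ _) rfl,
      fun b => rfl⟩ : (Fin 1 × Fin m) ≃ Fin m).trans (finCongr (by omega))
  refine tp_complete (m - 1) e (Gm 1 m) ?_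
  intro u v
  show (u.1 = v.1 ∧ u.2 ≠ v.2) ↔ u ≠ v
  constructor
  · rintro ⟨-, h⟩ hne
    exact h (by rw [hne])
  · intro hne
    refine ⟨Subsingleton.elim _ _, fun h => hne (Prod.ext (Subsingleton.elim _ _) h)⟩

lemma tp_Gm (m : ℕ) (hm : 0 < m) : ∀ k : ℕ, TriviallyPerfect (Gm (k + 1) m) := by
  intro k
  induction k with
  | zero => exact tp_Gm_one m hm
  | succ k ih =>
    have hbase : TriviallyPerfect (Gm 1 m) := tp_Gm_one m hm
    refine tp_of_iso ⟨stepEquiv k m, ?_⟩ (tp_disjUnion hbase ih)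
    intro p q
    show (disjUnion (Gm 1 m) (Gm (k + 1) m)).Adj _ _ ↔ (Gm (k + 2) m).Adj p q
    by_cases hp : p.1 = 0 <;> by_cases hq : q.1 = 0 <;>
      simp only [stepEquiv, Equiv.coe_fn_mk, hp, hq, dif_pos, dif_neg, not_false_iff]
    · show ((0 : Fin 1) = 0 ∧ p.2 ≠ q.2) ↔ (p.1 = q.1 ∧ p.2 ≠ q.2)
      rw [hp, hq]; tauto
    · show False ↔ (p.1 = q.1 ∧ p.2 ≠ q.2)
      constructor
      · exact False.elim
      · rintro ⟨h, -⟩; exact hq (h ▸ hp)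
    · show False ↔ (p.1 = q.1 ∧ p.2 ≠ q.2)
      constructor
      · exact False.elim
      · rintro ⟨h, -⟩; exact hp (h.symm ▸ hq)
    · show (p.1.pred hp = q.1.pred hq ∧ p.2 ≠ q.2) ↔ (p.1 = q.1 ∧ p.2 ≠ q.2)
      rw [Fin.pred_inj]

lemma tp_Gg (k m : ℕ) (hk : 0 < k) (hm : 0 < m) : TriviallyPerfect (Gg k m) := by
  obtain ⟨k', rfl⟩ : ∃ k', k = k' + 1 := ⟨k - 1, by omega⟩
  have htp : TriviallyPerfect (addUniversal (Gm (k' + 1) m)) :=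
    tp_addUniversal (tp_Gm m hm k')
  refine tp_of_iso ⟨Equiv.refl _, ?_⟩ htp
  rintro (_ | ⟨i, a⟩) (_ | ⟨j, b⟩)
  · show (addUniversal (Gm (k' + 1) m)).Adj none none ↔ (Gg _ m).Adj none none
    simp only [addUniversal]
    constructor
    · exact False.elim
    · intro h; exact h.1 rfl
  · show (addUniversal (Gm (k' + 1) m)).Adj none (some (j, b)) ↔ _
    simp only [addUniversal]
    constructor
    · intro _; exact gg_adj_none (j, b)
    · intro _; trivial
  · show (addUniversal (Gm (k' + 1) m)).Adj (some (i, a)) none ↔ _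
    simp only [addUniversal]
    constructor
    · intro _; exact ((Gg _ m).adj_symm (gg_adj_none (i, a)))
    · intro _; trivial
  · show (Gm (k' + 1) m).Adj (i, a) (j, b) ↔ _
    rw [gg_adj_some_iff]
    exact Iff.rfl

end TPGg
section Heights

open SimpleGraph Finset

lemma gg_connected (k m : ℕ) : (Gg k m).Connected := by
  rw [SimpleGraph.connected_iff]
  have h : ∀ w : Vt k m, (Gg k m).Reachable none w := by
    intro w
    cases w with
    | none => exact SimpleGraph.Reachable.refl _
    | some p => exact (gg_adj_none p).reachable
  exact ⟨fun u v => (h u).symm.trans (h v), ⟨none⟩⟩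

lemma t1_anc_none (k m : ℕ) : {u : Vt k m | (T1 k m).anc u none} = {none} := by
  ext u
  simp only [Set.mem_setOf_eq, Set.mem_singleton_iff]
  constructor
  · rintro (h | ⟨i, a, b, h1, h2, -⟩)
    · exact h
    · exact absurd h2 (by simp)
  · rintro rfl; exact Or.inl rfl

lemma t1_anc_some (k m : ℕ) (i : Fin k) (a : Fin m) :
    {u : Vt k m | (T1 k m).anc u (some (i, a))} =
      insert none ((fun b => (some (i, b) : Vt k m)) '' Set.Iic a) := by
  ext u
  simp only [Set.mem_setOf_eq, Set.mem_insert_iff, Set.mem_image, Set.mem_Iic]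
  constructor
  · rintro (h | ⟨i', a', b', h1, h2, h'⟩)
    · exact Or.inl h
    · simp only [Option.some.injEq, Prod.mk.injEq] at h2
      obtain ⟨rfl, rfl⟩ := h2
      exact Or.inr ⟨a', h', h1.symm⟩
  · rintro (rfl | ⟨b, hb, rfl⟩)
    · exact Or.inl rfl
    · exact Or.inr ⟨i, b, a, rfl, rfl, hb⟩

lemma t1_anc_some_ncard (k m : ℕ) (i : Fin k) (a : Fin m) :
    {u : Vt k m | (T1 k m).anc u (some (i, a))}.ncard = a.val + 2 := by
  rw [t1_anc_some]
  have hinj : Function.Injective (fun b => (some (i, b) : Vt k m)) := by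
    intro x y h
    simpa using h
  rw [Set.ncard_insert_of_notMem (by simp) (Set.toFinite _),
    Set.ncard_image_of_injective _ hinj]
  rw [← Finset.coe_Iic, Set.ncard_coe_finset, Fin.card_Iic]

lemma t1_height (k m : ℕ) (hk : 0 < k) (hm : 0 < m) :
    (T1 k m).height = m + 1 := by
  apply le_antisymm
  · apply Finset.sup_le
    intro v _
    cases v with
    | none => rw [t1_anc_none, Set.ncard_singleton]; omega
    | some p =>
      obtain ⟨i, a⟩ := p
      rw [t1_anc_some_ncard]
      have := a.isLt
      omega
  · have hmem := Finset.mem_univ (some ((⟨0, hk⟩ : Fin k), (⟨m - 1, by omega⟩ : Fin m)) : Vt k m)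
    have h := Finset.le_sup (f := fun v : Vt k m =>
      Set.ncard {u | (T1 k m).anc u v}) hmem
    rw [t1_anc_some_ncard] at h
    show m + 1 ≤ Finset.univ.sup fun v : Vt k m => Set.ncard {u | (T1 k m).anc u v}
    simp only at h ⊢
    omega

lemma height_lower (k m : ℕ) (hk : 0 < k) (hm : 0 < m) (T : SearchTree (Gg k m)) :
    m + 1 ≤ T.height := by
  classical
  set i0 : Fin k := ⟨0, hk⟩
  set s : Finset (Vt k m) :=
    insert none (Finset.univ.image fun b : Fin m => (some (i0, b) : Vt k m)) with hs
  have hcard : s.card = m + 1 := by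
    rw [hs, Finset.card_insert_of_notMem (by simp),
      Finset.card_image_of_injective _ (fun x y h => by simpa using h)]
    simp
  have hclique : ∀ x ∈ s, ∀ y ∈ s, x ≠ y → (Gg k m).Adj x y := by
    intro x hx y hy hne
    rw [hs] at hx hy
    simp only [Finset.mem_insert, Finset.mem_image, Finset.mem_univ, true_and] at hx hy
    refine ⟨hne, i0, ?_, ?_⟩
    · rcases hx with rfl | ⟨b, rfl⟩
      · exact mem_Cset.2 (Or.inl rfl)
      · exact mem_Cset.2 (Or.inr ⟨b, rfl⟩)
    · rcases hy with rfl | ⟨b, rfl⟩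
      · exact mem_Cset.2 (Or.inl rfl)
      · exact mem_Cset.2 (Or.inr ⟨b, rfl⟩)
  have hcomp : ∀ x ∈ s, ∀ y ∈ s, T.anc x y ∨ T.anc y x := by
    intro x hx y hy
    by_cases hne : x = y
    · exact Or.inl (hne ▸ T.refl x)
    · exact T.edge_comparable x y (hclique x hx y hy hne)
  obtain ⟨w, hw, hmax⟩ := exists_anc_max T s ⟨none, by rw [hs]; exact Finset.mem_insert_self _ _⟩ hcomp
  have hsub : (↑s : Set (Vt k m)) ⊆ {u | T.anc u w} := fun x hx => hmax x hx
  have h1 : m + 1 ≤ {u | T.anc u w}.ncard := by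
    rw [← hcard, ← Set.ncard_coe_finset]
    exact Set.ncard_le_ncard hsub (Set.toFinite _)
  have h2 : Set.ncard {u | T.anc u w} ≤ T.height :=
    Finset.le_sup (f := fun v : Vt k m => Set.ncard {u | T.anc u v}) (Finset.mem_univ w)
  omega

lemma gg_treeDepth (k m : ℕ) (hk : 0 < k) (hm : 0 < m) :
    treeDepth (Gg k m) = m + 1 := by
  apply le_antisymm
  · exact Nat.sInf_le ⟨T1 k m, t1_height k m hk hm⟩
  · refine le_csInf ⟨m + 1, T1 k m, t1_height k m hk hm⟩ ?_
    rintro h ⟨T, rfl⟩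
    exact height_lower k m hk hm T

end Heights
section Counting

open SimpleGraph Finset

open Classical in
lemma gg_adj_pairs_card (k m : ℕ) :
    (Finset.univ.filter fun p : Vt k m × Vt k m => (Gg k m).Adj p.1 p.2).card
      = k * m * (m + 1) := by
  classical
  set S := Finset.univ.filter fun p : Vt k m × Vt k m => (Gg k m).Adj p.1 p.2 with hS
  have hfib : S.card = ∑ x : Vt k m, (Finset.univ.filter fun y => (Gg k m).Adj x y).card := by
    rw [Finset.card_eq_sum_card_fiberwise
      (f := fun p : Vt k m × Vt k m => p.1) (t := Finset.univ) (fun _ _ => Finset.mem_univ _)]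
    refine Finset.sum_congr rfl ?_
    intro x _
    refine Finset.card_bij (fun p _ => p.2) ?_ ?_ ?_
    · rintro ⟨x', y⟩ hp
      simp only [hS, Finset.mem_filter, Finset.mem_univ, true_and] at hp
      obtain ⟨hadj, rfl⟩ := hp
      simp only [Finset.mem_filter, Finset.mem_univ, true_and]
      exact hadj
    · rintro ⟨x1, y1⟩ h1 ⟨x2, y2⟩ h2 h
      simp only [hS, Finset.mem_filter, Finset.mem_univ, true_and] at h1 h2
      obtain ⟨-, rfl⟩ := h1
      obtain ⟨-, rfl⟩ := h2
      simp only at h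
      rw [h]
    · intro y hy
      simp only [Finset.mem_filter, Finset.mem_univ, true_and] at hy
      refine ⟨(x, y), ?_, rfl⟩
      simp only [hS, Finset.mem_filter, Finset.mem_univ, true_and]
      exact ⟨hy, trivial⟩
  have hdeg_none : (Finset.univ.filter fun y => (Gg k m).Adj none y).card = k * m := by
    have : (Finset.univ.filter fun y => (Gg k m).Adj none y) =
        Finset.univ.erase (none : Vt k m) := by
      ext y
      simp only [Finset.mem_filter, Finset.mem_univ, true_and, Finset.mem_erase, and_true]
      constructor
      · intro h; exact fun hy => (Gg k m).loopless.irrefl none (hy ▸ h)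
      · intro h
        obtain ⟨p, rfl⟩ := Option.ne_none_iff_exists'.1 h
        exact gg_adj_none p
    rw [this, Finset.card_erase_of_mem (Finset.mem_univ _), Finset.card_univ]
    simp [Fintype.card_option]
  have hdeg_some : ∀ p : Fin k × Fin m,
      (Finset.univ.filter fun y => (Gg k m).Adj (some p) y).card = m := by
    rintro ⟨i, a⟩
    have : (Finset.univ.filter fun y => (Gg k m).Adj (some (i, a)) y) =
        insert (none : Vt k m)
          ((Finset.univ.erase a).image fun b => (some (i, b) : Vt k m)) := by
      ext y
      simp only [Finset.mem_filter, Finset.mem_univ, true_and, Finset.mem_insert,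
        Finset.mem_image, Finset.mem_erase]
      constructor
      · intro h
        rcases (gg_adj_iff _ _).1 h with ⟨h1, -⟩ | ⟨h1, -⟩ | ⟨i', a', b', h1, h2, hab⟩
        · exact absurd h1 (by simp)
        · exact Or.inl h1
        · simp only [Option.some.injEq, Prod.mk.injEq] at h1
          obtain ⟨rfl, rfl⟩ := h1
          exact Or.inr ⟨b', ⟨fun hb => hab hb.symm, trivial⟩, h2.symm⟩
      · rintro (rfl | ⟨b, ⟨hb, -⟩, rfl⟩)
        · exact (Gg k m).adj_symm (gg_adj_none (i, a))
        · exact gg_adj_some (fun h => hb h.symm)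
    rw [this, Finset.card_insert_of_notMem (by simp),
      Finset.card_image_of_injective _ (fun x y h => by simpa using h),
      Finset.card_erase_of_mem (Finset.mem_univ _)]
    simp only [Finset.card_univ, Fintype.card_fin]
    have := a.isLt
    omega
  rw [hfib, Fintype.sum_option, hdeg_none]
  have : ∑ p : Fin k × Fin m, (Finset.univ.filter fun y => (Gg k m).Adj (some p) y).card
      = k * m * m := by
    rw [Finset.sum_congr rfl (fun p _ => hdeg_some p), Finset.sum_const, Finset.card_univ]
    simp only [Fintype.card_prod, Fintype.card_fin, smul_eq_mul]
  rw [this]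
  ring

open Classical in
lemma adj_card_le_two_phi (k m : ℕ) (hk : 0 < k) (hm : 0 < m) :
    k * m * (m + 1) ≤ 2 * Phi (Gg k m) (T2 k m hk hm) (T1 k m) := by
  classical
  set T₂ := T2 k m hk hm
  set Sfin := Finset.univ.filter
    (fun p : Vt k m × Vt k m =>
      (Gg k m).Adj p.1 p.2 ∧ (T1 k m).anc p.1 p.2 ∧ T₂.anc p.2 p.1) with hSfin
  have hphi : Phi (Gg k m) T₂ (T1 k m) = Sfin.card := by
    rw [Phi, hSfin]
  set AdjP := Finset.univ.filter fun p : Vt k m × Vt k m => (Gg k m).Adj p.1 p.2 with hAdjP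
  have hclaim : ∀ p ∈ AdjP, p ∈ Sfin ∨ p.swap ∈ Sfin := by
    rintro ⟨x, y⟩ hp
    simp only [hAdjP, Finset.mem_filter, Finset.mem_univ, true_and] at hp
    rcases (T1 k m).edge_comparable x y hp with h | h
    · left
      simp only [hSfin, Finset.mem_filter, Finset.mem_univ, true_and]
      exact ⟨hp, h, t1_t2_flip hk hm hp h⟩
    · right
      simp only [hSfin, Finset.mem_filter, Finset.mem_univ, true_and, Prod.swap]
      exact ⟨(Gg k m).adj_symm hp, h, t1_t2_flip hk hm ((Gg k m).adj_symm hp) h⟩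
  set f : Vt k m × Vt k m → Vt k m × Vt k m := fun p => if p ∈ Sfin then p else p.swap with hf
  have himg : AdjP.image f ⊆ Sfin := by
    intro a ha
    obtain ⟨p, hp, rfl⟩ := Finset.mem_image.1 ha
    by_cases h : p ∈ Sfin
    · simp only [hf]
      rw [if_pos h]
      exact h
    · rcases hclaim p hp with h' | h'
      · exact absurd h' h
      · simp only [hf]
        rw [if_neg h]
        exact h'
  have hfiber : ∀ a ∈ AdjP.image f, (AdjP.filter fun x => f x = a).card ≤ 2 := by
    intro a _
    have hsub : (AdjP.filter fun x => f x = a) ⊆ {a, a.swap} := by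
      intro p hp
      simp only [Finset.mem_filter] at hp
      obtain ⟨-, hfp⟩ := hp
      simp only [hf] at hfp
      simp only [Finset.mem_insert, Finset.mem_singleton]
      by_cases h : p ∈ Sfin
      · rw [if_pos h] at hfp; exact Or.inl hfp
      · rw [if_neg h] at hfp
        right
        rw [← hfp, Prod.swap_swap]
    calc (AdjP.filter fun x => f x = a).card ≤ ({a, a.swap} : Finset _).card :=
          Finset.card_le_card hsub
      _ ≤ 2 := by
          apply le_trans (Finset.card_insert_le _ _)
          simp
  have hmain : AdjP.card ≤ 2 * (AdjP.image f).card :=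
    Finset.card_le_mul_card_image AdjP 2 hfiber
  have := gg_adj_pairs_card k m
  rw [hphi]
  calc k * m * (m + 1) = AdjP.card := this.symm
    _ ≤ 2 * (AdjP.image f).card := hmain
    _ ≤ 2 * Sfin.card := by
        have := Finset.card_le_card himg
        omega

end Counting
/-- For any positive integers `k` and `n` such that `k` divides `n`,
there exists a connected trivially perfect graph `G` on `n + 1` vertices with
tree-depth `n / k + 1` and `δ(A(G)) ≥ (n / k + 1) * n / 2` (stated below as
`(n / k + 1) * n ≤ 2 * δ(A(G))`). One such graph consists of `k` cliques
`C 0, …, C (k-1)`, each of size `n / k + 1`, such that a single designated vertex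
`v` is the unique common vertex of any two distinct cliques. -/
theorem treedepth_diam_lower_bound (k n : ℕ) (hk : 0 < k) (hn : 0 < n) (hdvd : k ∣ n) :
    ∃ (V : Type) (_ : Fintype V) (G : SimpleGraph V) (C : Fin k → Set V) (v : V),
      Nat.card V = n + 1 ∧
      (∀ i, (C i).ncard = n / k + 1) ∧
      (∀ i j, i ≠ j → C i ∩ C j = {v}) ∧
      (⋃ i, C i) = Set.univ ∧
      (∀ x y, G.Adj x y ↔ x ≠ y ∧ ∃ i, x ∈ C i ∧ y ∈ C i) ∧
      G.Connected ∧ TriviallyPerfect G ∧ treeDepth G = n / k + 1 ∧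
      (((n / k + 1) * n : ℕ) : ℕ∞) ≤ 2 * (rotationGraph G).ediam := by
  classical
  set m := n / k with hm_def
  have hkm : k * m = n := Nat.mul_div_cancel' hdvd
  have hm : 0 < m := by
    rcases Nat.eq_zero_or_pos m with h | h
    · rw [h, Nat.mul_zero] at hkm; omega
    · exact h
  refine ⟨Vt k m, inferInstance, Gg k m, Cset k m, none, ?_, ?_, ?_, ?_, ?_, ?_, ?_, ?_, ?_⟩
  · rw [Nat.card_eq_fintype_card, Fintype.card_option, Fintype.card_prod,
      Fintype.card_fin, Fintype.card_fin, hkm]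
  · intro i
    rw [Cset, Set.ncard_insert_of_notMem (by simp) (Set.toFinite _), ← Set.image_univ,
      Set.ncard_image_of_injective _ (fun x y h => by simpa using h), Set.ncard_univ]
    simp
  · intro i j hij
    ext x
    simp only [Set.mem_inter_iff, mem_Cset, Set.mem_singleton_iff]
    constructor
    · rintro ⟨(rfl | ⟨a, rfl⟩), hj⟩
      · rfl
      · rcases hj with h | ⟨b, hb⟩
        · exact absurd h (by simp)
        · simp only [Option.some.injEq, Prod.mk.injEq] at hb
          exact absurd hb.1 hij
    · rintro rfl
      exact ⟨Or.inl rfl, Or.inl rfl⟩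
  · ext x
    simp only [Set.mem_iUnion, Set.mem_univ, iff_true]
    cases x with
    | none => exact ⟨⟨0, hk⟩, mem_Cset.2 (Or.inl rfl)⟩
    | some p => exact ⟨p.1, mem_Cset.2 (Or.inr ⟨p.2, rfl⟩)⟩
  · intro x y
    exact Iff.rfl
  · exact gg_connected k m
  · exact tp_Gg k m hk hm
  · exact gg_treeDepth k m hk hm
  · have h1 : k * m * (m + 1) ≤ 2 * Phi (Gg k m) (T2 k m hk hm) (T1 k m) :=
      adj_card_le_two_phi k m hk hm
    have h2 := phi_le_edist (T1 k m) (T2 k m hk hm)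
    have heq : (m + 1) * n = k * m * (m + 1) := by rw [← hkm]; ring
    calc (((m + 1) * n : ℕ) : ℕ∞) = ((k * m * (m + 1) : ℕ) : ℕ∞) := by rw [heq]
      _ ≤ ((2 * Phi (Gg k m) (T2 k m hk hm) (T1 k m) : ℕ) : ℕ∞) := by exact_mod_cast h1
      _ = 2 * ((Phi (Gg k m) (T2 k m hk hm) (T1 k m) : ℕ) : ℕ∞) := by push_cast; rfl
      _ ≤ 2 * (rotationGraph (Gg k m)).edist (T1 k m) (T2 k m hk hm) := mul_le_mul_right h2 2
      _ ≤ 2 * (rotationGraph (Gg k m)).ediam := mul_le_mul_right SimpleGraph.edist_le_ediam 2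
end

section
/- For every integer k ≥ 2 and every positive integer n that is a multiple of k−1, there exists a connected interval graph G on n+1 vertices of pathwidth k−1 such that δ(A(G)) ≥ nk/2. One such graph is induced by a sequence of cliques C_1, C_2, …, C_{n/(k−1)}, each of size k, such that any two consecutive cliques C_i and C_{i+1} share exactly one vertex and no other pair of cliques shares a vertex. -/
open SimpleGraph

namespace St6

open Finset
open scoped symmDiff

/-! ### Generic lemmas about rotations -/

/-- For adjacent vertices, exactly one of the two ancestor relations holds. -/
lemma anc_not_iff {V' : Type} {G : SimpleGraph V'} (T : SearchTree G) {u v : V'}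
    (h : G.Adj u v) : T.anc u v ↔ ¬ T.anc v u :=
  ⟨fun h1 h2 => h.ne (T.antisymm u v h1 h2),
   fun h1 => (T.edge_comparable u v h).resolve_right h1⟩

/-- A rotation involving `a` and `b` does not change the relative order of any
pair of adjacent vertices other than `(a, b)`. -/
lemma rot_anc_iff {V' : Type} {G : SimpleGraph V'} {T T' : SearchTree G} {a b : V'}
    (hr : IsRotation T T' a b) {u v : V'} (hadj : G.Adj u v)
    (h1 : ¬(u = a ∧ v = b)) (h2 : ¬(u = b ∧ v = a)) :
    T.anc u v ↔ T'.anc u v := by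
  obtain ⟨hne, hab, hdb, hoth⟩ := hr
  have key : ∀ w, w ≠ a → w ≠ b → ∀ x, T.anc w x ↔ T'.anc w x := by
    intro w hwa hwb x
    exact (Set.ext_iff.mp (hoth w hwa hwb) x).symm
  by_cases hua : u = a
  · subst hua
    have hvb : v ≠ b := fun h => h1 ⟨rfl, h⟩
    have hvu : v ≠ u := hadj.ne'
    rw [anc_not_iff T hadj, anc_not_iff T' hadj, key v hvu hvb u]
  · by_cases hub : u = b
    · subst hub
      have hva : v ≠ a := fun h => h2 ⟨rfl, h⟩
      have hvu : v ≠ u := hadj.ne'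
      rw [anc_not_iff T hadj, anc_not_iff T' hadj, key v hva hvu u]
    · exact key u hua hub v

open Classical in
/-- The set of ordered adjacent pairs oriented from ancestor to descendant. -/
noncomputable def FF {V' : Type} [Fintype V'] (G : SimpleGraph V') (T : SearchTree G) :
    Finset (V' × V') :=
  Finset.univ.filter fun p => G.Adj p.1 p.2 ∧ T.anc p.1 p.2

lemma mem_FF {V' : Type} [Fintype V'] {G : SimpleGraph V'} {T : SearchTree G}
    {p : V' × V'} : p ∈ FF G T ↔ G.Adj p.1 p.2 ∧ T.anc p.1 p.2 := by
  simp [FF]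

lemma step_card_le {V' : Type} [Fintype V'] [DecidableEq V'] {G : SimpleGraph V'}
    {T T' : SearchTree G} (h : (rotationGraph G).Adj T T') :
    (FF G T ∆ FF G T').card ≤ 2 := by
  obtain ⟨a, b, hr⟩ := h
  have hsub : FF G T ∆ FF G T' ⊆ {(a, b), (b, a)} := by
    intro p hp
    rw [Finset.mem_symmDiff] at hp
    by_contra hmem
    simp only [Finset.mem_insert, Finset.mem_singleton] at hmem
    push_neg at hmem
    obtain ⟨hm1, hm2⟩ := hmem
    have h1 : ¬(p.1 = a ∧ p.2 = b) := fun ⟨x, y⟩ => hm1 (Prod.ext x y)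
    have h2 : ¬(p.1 = b ∧ p.2 = a) := fun ⟨x, y⟩ => hm2 (Prod.ext x y)
    rcases hp with ⟨hin, hout⟩ | ⟨hin, hout⟩
    · obtain ⟨hadj, hanc⟩ := mem_FF.mp hin
      exact hout (mem_FF.mpr ⟨hadj, (rot_anc_iff hr hadj h1 h2).mp hanc⟩)
    · obtain ⟨hadj, hanc⟩ := mem_FF.mp hin
      exact hout (mem_FF.mpr ⟨hadj, (rot_anc_iff hr hadj h1 h2).mpr hanc⟩)
  refine (Finset.card_le_card hsub).trans ?_
  refine (Finset.card_insert_le _ _).trans ?_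
  simp

lemma walk_card_le {V' : Type} [Fintype V'] [DecidableEq V'] {G : SimpleGraph V'} :
    ∀ {T T' : SearchTree G} (w : (rotationGraph G).Walk T T'),
      (FF G T ∆ FF G T').card ≤ 2 * w.length := by
  intro T T' w
  induction w with
  | nil => simp
  | @cons T T'' T' h p ih =>
    calc (FF G T ∆ FF G T').card
        ≤ ((FF G T ∆ FF G T'') ∪ (FF G T'' ∆ FF G T')).card :=
          Finset.card_le_card (symmDiff_triangle _ _ _)
      _ ≤ (FF G T ∆ FF G T'').card + (FF G T'' ∆ FF G T').card :=
          Finset.card_union_le _ _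
      _ ≤ 2 + 2 * p.length := Nat.add_le_add (step_card_le h) ih
      _ = 2 * (SimpleGraph.Walk.cons h p).length := by
          rw [SimpleGraph.Walk.length_cons]; ring

/-! ### The path-of-cliques graph -/

variable (d c : ℕ)

/-- The `i`-th clique. -/
def blk (i : ℕ) : Finset (Fin (d * c + 1)) :=
  Finset.univ.filter fun x => i * d ≤ x.val ∧ x.val ≤ i * d + d

lemma mem_blk {d c : ℕ} {i : ℕ} {x : Fin (d * c + 1)} :
    x ∈ blk d c i ↔ i * d ≤ x.val ∧ x.val ≤ i * d + d := by
  simp [blk]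

/-- The path-of-cliques graph. -/
def GG : SimpleGraph (Fin (d * c + 1)) where
  Adj x y := x ≠ y ∧ ∃ i : Fin c, x ∈ blk d c i ∧ y ∈ blk d c i
  symm := by constructor; rintro x y ⟨h, i, hx, hy⟩; exact ⟨h.symm, i, hy, hx⟩
  loopless := by constructor; rintro x ⟨h, _⟩; exact h rfl

lemma adj_iff {x y : Fin (d * c + 1)} :
    (GG d c).Adj x y ↔ x ≠ y ∧ ∃ i : Fin c, x ∈ blk d c i ∧ y ∈ blk d c i := Iff.rfl

instance : DecidableRel (GG d c).Adj := fun x y =>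
  inferInstanceAs (Decidable (x ≠ y ∧ ∃ i : Fin c, x ∈ blk d c i ∧ y ∈ blk d c i))

variable {d c}

/-- Canonical block index of a vertex. -/
def Jv (x : Fin (d * c + 1)) : ℕ := min (x.val / d) (c - 1)

lemma val_le (x : Fin (d * c + 1)) : x.val ≤ d * c := Nat.lt_succ_iff.mp x.isLt

lemma Jv_lt (hc : 0 < c) (x : Fin (d * c + 1)) : Jv x < c :=
  lt_of_le_of_lt (min_le_right _ _) (by omega)

lemma mem_blk_J (hd : 0 < d) (hc : 0 < c) (x : Fin (d * c + 1)) :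
    x ∈ blk d c (Jv x) := by
  rw [mem_blk]
  rcases le_or_gt (x.val / d) (c - 1) with h | h
  · rw [Jv, min_eq_left h]
    constructor
    · exact Nat.div_mul_le_self x.val d
    · calc x.val = d * (x.val / d) + x.val % d := (Nat.div_add_mod _ _).symm
        _ ≤ d * (x.val / d) + d := Nat.add_le_add_left (Nat.mod_lt _ hd).le _
        _ = x.val / d * d + d := by rw [Nat.mul_comm]
  · rw [Jv, min_eq_right h.le]
    have hD : c ≤ x.val / d := by omega
    have hcd : c * d ≤ x.val := le_trans (mul_le_mul_left hD d) (Nat.div_mul_le_self x.val d)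
    have hx : x.val ≤ d * c := val_le x
    have h1 : (c - 1) * d + d = c * d := by
      rw [← Nat.succ_mul, Nat.succ_eq_add_one, Nat.sub_add_cancel hc]
    constructor
    · calc (c - 1) * d ≤ c * d := mul_le_mul_left (by omega) d
        _ ≤ x.val := hcd
    · rw [h1, Nat.mul_comm c d]; exact hx

lemma le_Jv (hd : 0 < d) {i : ℕ} (hi : i < c) {x : Fin (d * c + 1)}
    (hx : x ∈ blk d c i) : i ≤ Jv x := by
  rw [mem_blk] at hx
  refine le_min ?_ (by omega)
  exact (Nat.le_div_iff_mul_le hd).mpr hx.1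

lemma adj_of_le (hd : 0 < d) (hc : 0 < c) {x y : Fin (d * c + 1)}
    (hxy : x.val ≤ y.val) (hne : x ≠ y) (hy : y.val ≤ (Jv x + 1) * d) :
    (GG d c).Adj x y := by
  refine ⟨hne, ⟨Jv x, Jv_lt hc x⟩, mem_blk_J hd hc x, ?_⟩
  have hx := mem_blk.mp (mem_blk_J hd hc x)
  rw [mem_blk]
  constructor
  · exact le_trans hx.1 hxy
  · rw [Nat.succ_mul] at hy; exact hy

lemma le_hi_of_adj (hd : 0 < d) {x y : Fin (d * c + 1)}
    (h : (GG d c).Adj x y) : y.val ≤ (Jv x + 1) * d := by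
  obtain ⟨hne, i, hx, hy⟩ := h
  have hi : (i : ℕ) ≤ Jv x := le_Jv hd i.isLt hx
  calc y.val ≤ (i : ℕ) * d + d := (mem_blk.mp hy).2
    _ = ((i : ℕ) + 1) * d := (Nat.succ_mul _ _).symm
    _ ≤ (Jv x + 1) * d := mul_le_mul_left (by omega) d

lemma val_le_hi (hd : 0 < d) (hc : 0 < c) (x : Fin (d * c + 1)) :
    x.val ≤ (Jv x + 1) * d := by
  have hx := (mem_blk.mp (mem_blk_J hd hc x)).2
  rw [Nat.succ_mul]; exact hx

lemma adj_succ (hd : 0 < d) (hc : 0 < c) {x : Fin (d * c + 1)}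
    (h : x.val + 1 ≤ d * c) : (GG d c).Adj x ⟨x.val + 1, by omega⟩ := by
  have hne : x ≠ ⟨x.val + 1, by omega⟩ := by
    intro hh
    have := congrArg Fin.val hh
    simp at this
  refine adj_of_le hd hc (by simp) hne ?_
  show x.val + 1 ≤ (Jv x + 1) * d
  rcases le_or_gt (x.val / d) (c - 1) with hcase | hcase
  · rw [Jv, min_eq_left hcase]
    have h3 : x.val < d * (x.val / d) + d := by
      conv_lhs => rw [← Nat.div_add_mod x.val d]
      exact Nat.add_lt_add_left (Nat.mod_lt _ hd) _
    rw [Nat.succ_mul (x.val / d) d, Nat.mul_comm (x.val / d) d]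
    exact h3
  · exfalso
    have hD : c ≤ x.val / d := by omega
    have hcd : c * d ≤ x.val := le_trans (mul_le_mul_left hD d) (Nat.div_mul_le_self x.val d)
    rw [Nat.mul_comm c d] at hcd
    omega

lemma induce_conn (hd : 0 < d) (hc : 0 < c) (S : Set (Fin (d * c + 1)))
    (hne : S.Nonempty)
    (hconv : ∀ x z : Fin (d * c + 1), x ∈ S → z ∈ S →
      ∀ y : Fin (d * c + 1), x ≤ y → y ≤ z → y ∈ S) :
    ((GG d c).induce S).Connected := by
  have hrec : ∀ (j : ℕ) (u v : Fin (d * c + 1)) (hu : u ∈ S) (hv : v ∈ S),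
      v.val = u.val + j → ((GG d c).induce S).Reachable ⟨u, hu⟩ ⟨v, hv⟩ := by
    intro j
    induction j with
    | zero =>
      intro u v hu hv h
      have huv : u = v := Fin.ext (by omega)
      subst huv
      exact SimpleGraph.Reachable.refl _
    | succ j ih =>
      intro u v hu hv h
      have hle : u.val + 1 ≤ d * c := by have := val_le v; omega
      set u' : Fin (d * c + 1) := ⟨u.val + 1, by omega⟩ with hu'def
      have hu'S : u' ∈ S := by
        refine hconv u v hu hv u' ?_ ?_
        · show u.val ≤ u.val + 1
          omega
        · show u.val + 1 ≤ v.val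
          omega
      have hadj : ((GG d c).induce S).Adj ⟨u, hu⟩ ⟨u', hu'S⟩ := by
        show (GG d c).Adj u u'
        exact adj_succ hd hc hle
      exact hadj.reachable.trans (ih u' v hu'S hv (by show v.val = u.val + 1 + j; omega))
  haveI : Nonempty ↥S := hne.to_subtype
  constructor
  rintro ⟨u, hu⟩ ⟨v, hv⟩
  rcases le_total u.val v.val with h | h
  · exact hrec (v.val - u.val) u v hu hv (by omega)
  · exact (hrec (u.val - v.val) v u hv hu (by omega)).symm

lemma conn (hd : 0 < d) (hc : 0 < c) : (GG d c).Connected := by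
  have h := induce_conn hd hc Set.univ Set.univ_nonempty (fun _ _ _ _ _ _ _ => trivial)
  constructor
  intro u v
  have := h.preconnected ⟨u, trivial⟩ ⟨v, trivial⟩
  exact this.map (SimpleGraph.induceUnivIso (GG d c)).toHom

/-! ### The two extremal search trees -/

def T0 (hd : 0 < d) (hc : 0 < c) : SearchTree (GG d c) where
  anc u v := u ≤ v
  refl := le_refl
  antisymm := fun _ _ => le_antisymm
  trans := fun _ _ _ => le_trans
  chain := fun u v _ _ _ => le_total u v
  root := ⟨0, fun v => Fin.zero_le v⟩
  edge_comparable := fun u v _ => le_total u v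
  desc_connected := fun v =>
    induce_conn hd hc _ ⟨v, le_refl v⟩ (fun x _ hx _ y hxy _ => le_trans hx hxy)

def T1 (hd : 0 < d) (hc : 0 < c) : SearchTree (GG d c) where
  anc u v := v ≤ u
  refl := le_refl
  antisymm := fun _ _ h1 h2 => le_antisymm h2 h1
  trans := fun _ _ _ h1 h2 => le_trans h2 h1
  chain := fun u v _ _ _ => le_total v u
  root := ⟨Fin.last (d * c), fun v => Fin.le_last v⟩
  edge_comparable := fun u v _ => le_total v u
  desc_connected := fun v =>
    induce_conn hd hc _ ⟨v, le_refl v⟩ (fun _ z _ hz y _ hyz => le_trans hyz hz)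

/-! ### Counting adjacent pairs -/

variable (d c)

def EE : Finset (Fin (d * c + 1) × Fin (d * c + 1)) :=
  Finset.univ.filter fun p => (GG d c).Adj p.1 p.2

variable {d c}

lemma mem_EE {p : Fin (d * c + 1) × Fin (d * c + 1)} :
    p ∈ EE d c ↔ (GG d c).Adj p.1 p.2 := by
  simp [EE]

lemma pin_eq (hd : 0 < d) {i j : Fin c} (hij : (i : ℕ) < j) {x : Fin (d * c + 1)}
    (hxi : x ∈ blk d c i) (hxj : x ∈ blk d c j) : x.val = ((i : ℕ) + 1) * d := by
  rw [mem_blk] at hxi hxj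
  have h1 : ((i : ℕ) + 1) * d ≤ (j : ℕ) * d := mul_le_mul_left hij d
  have h2 : ((i : ℕ) + 1) * d = (i : ℕ) * d + d := Nat.succ_mul _ _
  refine le_antisymm (by rw [h2]; exact hxi.2) (le_trans h1 hxj.1)

lemma card_blk (hd : 0 < d) {i : ℕ} (hi : i < c) : (blk d c i).card = d + 1 := by
  have him : (blk d c i).image Fin.val = Finset.Icc (i * d) (i * d + d) := by
    ext m
    simp only [Finset.mem_image, Finset.mem_Icc, mem_blk]
    constructor
    · rintro ⟨x, ⟨h1, h2⟩, rfl⟩; exact ⟨h1, h2⟩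
    · rintro ⟨h1, h2⟩
      have hm : m < d * c + 1 := by
        have e1 : i * d + d = (i + 1) * d := (Nat.succ_mul i d).symm
        have e2 : (i + 1) * d ≤ c * d := mul_le_mul_left (by omega) d
        have e3 : c * d = d * c := Nat.mul_comm c d
        calc m < i * d + d + 1 := Nat.lt_succ_of_le h2
          _ = (i + 1) * d + 1 := by rw [e1]
          _ ≤ c * d + 1 := Nat.succ_le_succ e2
          _ = d * c + 1 := by rw [e3]
      exact ⟨⟨m, hm⟩, ⟨h1, h2⟩, rfl⟩
  have hcard := Finset.card_image_of_injective (blk d c i) Fin.val_injective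
  rw [him, Nat.card_Icc] at hcard
  rw [← hcard, add_assoc, Nat.add_sub_cancel_left]

lemma card_blk_inter_succ (hd : 0 < d) {i j : ℕ} (hj : j < c) (hij : i + 1 = j) :
    (blk d c i ∩ blk d c j).card = 1 := by
  have hjd : j * d < d * c + 1 := by
    have h1 : j * d ≤ c * d := mul_le_mul_left hj.le d
    have h2 : c * d = d * c := Nat.mul_comm c d
    omega
  have hsing : blk d c i ∩ blk d c j = {⟨j * d, hjd⟩} := by
    ext x
    rw [Finset.mem_inter, mem_blk, mem_blk, Finset.mem_singleton]
    have e1 : i * d + d = j * d := by rw [← hij, Nat.succ_mul]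
    constructor
    · rintro ⟨⟨_, h2⟩, ⟨h3, _⟩⟩
      apply Fin.ext
      show x.val = j * d
      rw [e1] at h2
      exact le_antisymm h2 h3
    · rintro rfl
      refine ⟨⟨?_, ?_⟩, ?_, ?_⟩
      · show i * d ≤ j * d
        exact mul_le_mul_left (by omega) d
      · show j * d ≤ i * d + d
        rw [e1]
      · exact le_refl _
      · exact Nat.le_add_right _ _
  rw [hsing, Finset.card_singleton]

lemma blk_disj (hd : 0 < d) {i j : ℕ} (hij : i + 1 < j) :
    blk d c i ∩ blk d c j = ∅ := by
  rw [Finset.eq_empty_iff_forall_notMem]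
  intro x hx
  rw [Finset.mem_inter, mem_blk, mem_blk] at hx
  obtain ⟨⟨_, h2⟩, ⟨h3, _⟩⟩ := hx
  have e1 : i * d + d = (i + 1) * d := (Nat.succ_mul _ _).symm
  have e2 : (i + 1) * d < j * d := Nat.mul_lt_mul_of_pos_right hij hd
  omega

lemma EE_eq : EE d c = (Finset.univ : Finset (Fin c)).biUnion
    (fun i => (blk d c i ×ˢ blk d c i).filter fun p => p.1 ≠ p.2) := by
  ext p
  simp only [mem_EE, adj_iff, Finset.mem_biUnion, Finset.mem_filter, Finset.mem_product,
    Finset.mem_univ, true_and]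
  tauto

lemma card_offdiag (hd : 0 < d) {i : Fin c} :
    ((blk d c (i : ℕ) ×ˢ blk d c (i : ℕ)).filter fun p => p.1 ≠ p.2).card
      = (d + 1) * (d + 1) - (d + 1) := by
  have h1 : ((blk d c (i : ℕ) ×ˢ blk d c (i : ℕ)).filter fun p => p.1 = p.2)
      = (blk d c (i : ℕ)).image (fun x => (x, x)) := by
    ext ⟨a, b⟩
    simp only [Finset.mem_filter, Finset.mem_product, Finset.mem_image, Prod.mk.injEq]
    constructor
    · rintro ⟨⟨ha, _⟩, rfl⟩; exact ⟨a, ha, rfl, rfl⟩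
    · rintro ⟨x, hx, rfl, rfl⟩; exact ⟨⟨hx, hx⟩, rfl⟩
  have h2 := Finset.card_filter_add_card_filter_not
    (s := blk d c (i : ℕ) ×ˢ blk d c (i : ℕ)) (p := fun p => p.1 = p.2)
  rw [h1, Finset.card_image_of_injective _ (fun x y h => (Prod.mk.injEq _ _ _ _).mp h |>.1),
    Finset.card_product, card_blk hd i.isLt] at h2
  exact Nat.eq_sub_of_add_eq' h2

lemma card_EE (hd : 0 < d) (hc : 0 < c) : (EE d c).card = d * c * (d + 1) := by
  rw [EE_eq, Finset.card_biUnion]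
  · rw [Finset.sum_congr rfl (fun i _ => card_offdiag hd), Finset.sum_const,
      Finset.card_univ, Fintype.card_fin, smul_eq_mul]
    have h1 : (d + 1) * (d + 1) - (d + 1) = (d + 1) * d := by
      rw [Nat.mul_succ, Nat.add_sub_cancel]
    rw [h1]; ring
  · intro i _ j _ hij
    rw [Function.onFun, Finset.disjoint_left]
    rintro p hp hq
    rw [Finset.mem_filter, Finset.mem_product] at hp hq
    obtain ⟨⟨h1, h2⟩, hne⟩ := hp
    obtain ⟨⟨h3, h4⟩, -⟩ := hq
    rcases Ne.lt_or_gt (show (i : ℕ) ≠ (j : ℕ) from fun h => hij (Fin.ext h)) with h | h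
    · exact hne (Fin.val_injective ((pin_eq hd h h1 h3).trans (pin_eq hd h h2 h4).symm))
    · exact hne (Fin.val_injective ((pin_eq hd h h3 h1).trans (pin_eq hd h h4 h2).symm))

lemma FF_symmDiff (hd : 0 < d) (hc : 0 < c) :
    FF (GG d c) (T0 hd hc) ∆ FF (GG d c) (T1 hd hc) = EE d c := by
  ext p
  rw [Finset.mem_symmDiff, mem_FF, mem_FF, mem_EE]
  show ((GG d c).Adj p.1 p.2 ∧ p.1 ≤ p.2) ∧ ¬((GG d c).Adj p.1 p.2 ∧ p.2 ≤ p.1) ∨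
      ((GG d c).Adj p.1 p.2 ∧ p.2 ≤ p.1) ∧ ¬((GG d c).Adj p.1 p.2 ∧ p.1 ≤ p.2) ↔
      (GG d c).Adj p.1 p.2
  constructor
  · rintro (⟨⟨h, -⟩, -⟩ | ⟨⟨h, -⟩, -⟩) <;> exact h
  · intro h
    rcases le_total p.1 p.2 with hle | hle
    · exact Or.inl ⟨⟨h, hle⟩, fun hh => h.ne (le_antisymm hle hh.2)⟩
    · exact Or.inr ⟨⟨h, hle⟩, fun hh => h.ne (le_antisymm hh.2 hle)⟩

/-! ### Interval representation, clique number, pathwidth -/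

lemma interval_GG (hd : 0 < d) (hc : 0 < c) : IsIntervalGraph (GG d c) := by
  refine ⟨fun v => (v.val : ℝ), fun v => (((Jv v + 1) * d : ℕ) : ℝ), ?_, ?_⟩
  · intro v
    show ((v.val : ℕ) : ℝ) ≤ (((Jv v + 1) * d : ℕ) : ℝ)
    exact_mod_cast val_le_hi hd hc v
  · intro u v
    constructor
    · intro h
      refine ⟨h.ne, ?_, ?_⟩
      · show ((u.val : ℕ) : ℝ) ≤ (((Jv v + 1) * d : ℕ) : ℝ)
        exact_mod_cast le_hi_of_adj hd (h.symm)
      · show ((v.val : ℕ) : ℝ) ≤ (((Jv u + 1) * d : ℕ) : ℝ)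
        exact_mod_cast le_hi_of_adj hd h
    · rintro ⟨hne, h1, h2⟩
      have h1'' : ((u.val : ℕ) : ℝ) ≤ (((Jv v + 1) * d : ℕ) : ℝ) := h1
      have h2'' : ((v.val : ℕ) : ℝ) ≤ (((Jv u + 1) * d : ℕ) : ℝ) := h2
      have h1' : u.val ≤ (Jv v + 1) * d := by exact_mod_cast h1''
      have h2' : v.val ≤ (Jv u + 1) * d := by exact_mod_cast h2''
      rcases le_total u.val v.val with h | h
      · exact adj_of_le hd hc h hne h2'
      · exact (adj_of_le hd hc h hne.symm h1').symm

lemma clique_card_le (hd : 0 < d) {s : Finset (Fin (d * c + 1))}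
    (hs : (GG d c).IsClique s) : s.card ≤ d + 1 := by
  rcases s.eq_empty_or_nonempty with rfl | hne
  · simp
  · set u := s.min' hne with hu
    have hsub : s.image Fin.val ⊆ Finset.Icc u.val (u.val + d) := by
      intro m hm
      rw [Finset.mem_image] at hm
      obtain ⟨x, hx, rfl⟩ := hm
      rw [Finset.mem_Icc]
      have hux : u.val ≤ x.val := s.min'_le x hx
      rcases eq_or_ne x u with rfl | hxu
      · exact ⟨le_refl _, Nat.le_add_right _ _⟩
      · have hadj : (GG d c).Adj x u := hs hx (s.min'_mem hne) hxu
        obtain ⟨-, i, hxi, hui⟩ := hadj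
        rw [mem_blk] at hxi hui
        exact ⟨hux, by omega⟩
    have h1 : s.card = (s.image Fin.val).card :=
      (Finset.card_image_of_injective s Fin.val_injective).symm
    rw [h1]
    calc (s.image Fin.val).card ≤ (Finset.Icc u.val (u.val + d)).card :=
          Finset.card_le_card hsub
      _ = d + 1 := by rw [Nat.card_Icc, add_assoc, Nat.add_sub_cancel_left]

lemma blk_isClique (hd : 0 < d) (hc : 0 < c) : (GG d c).IsClique (blk d c 0) := by
  intro x hx y hy hxy
  exact ⟨hxy, ⟨0, hc⟩, by exact_mod_cast hx, by exact_mod_cast hy⟩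

lemma cliqueNum_GG (hd : 0 < d) (hc : 0 < c) : (GG d c).cliqueNum = d + 1 := by
  have hb : BddAbove {m | ∃ s, (GG d c).IsNClique m s} := by
    refine ⟨Fintype.card (Fin (d * c + 1)), ?_⟩
    rintro m ⟨s, hs⟩
    rw [← hs.card_eq]
    exact Finset.card_le_univ s
  have hne : {m | ∃ s, (GG d c).IsNClique m s}.Nonempty :=
    ⟨0, ∅, SimpleGraph.isNClique_empty.mpr rfl⟩
  apply le_antisymm
  · show sSup {m | ∃ s, (GG d c).IsNClique m s} ≤ d + 1
    refine csSup_le hne ?_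
    rintro m ⟨s, hs⟩
    rw [← hs.card_eq]
    exact clique_card_le hd hs.isClique
  · show d + 1 ≤ sSup {m | ∃ s, (GG d c).IsNClique m s}
    exact le_csSup hb ⟨blk d c 0, blk_isClique hd hc, card_blk hd hc⟩

lemma pathwidth_GG (hd : 0 < d) (hc : 0 < c) : pathwidth (GG d c) = d := by
  apply le_antisymm
  · exact Nat.sInf_le ⟨GG d c, le_refl _, interval_GG hd hc, cliqueNum_GG hd hc⟩
  · refine le_csInf ⟨d, GG d c, le_refl _, interval_GG hd hc, cliqueNum_GG hd hc⟩ ?_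
    rintro m ⟨H, hGH, -, hcn⟩
    have hcl : H.IsClique (blk d c 0) := (blk_isClique hd hc).mono hGH
    have hb : BddAbove {m | ∃ s, H.IsNClique m s} := by
      refine ⟨Fintype.card (Fin (d * c + 1)), ?_⟩
      rintro m' ⟨s, hs⟩
      rw [← hs.card_eq]
      exact Finset.card_le_univ s
    have : d + 1 ≤ H.cliqueNum := le_csSup hb ⟨blk d c 0, hcl, card_blk hd hc⟩
    omega

end St6
/-- For every integer `k ≥ 2` and every positive `n` divisible by
`k - 1`, there exists a connected interval graph `G` on `n + 1` vertices of pathwidth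
`k - 1` with `δ(A(G)) ≥ n * k / 2` (stated below as `n * k ≤ 2 * δ(A(G))`). One such
graph is the union of a sequence of cliques `C 0, …, C (n/(k-1) - 1)`, each of size
`k`, consecutive cliques sharing exactly one vertex and no other pair of cliques
sharing a vertex. -/
theorem pathwidth_diam_lower_bound (k n : ℕ) (hk : 2 ≤ k) (hn : 0 < n)
    (hdvd : (k - 1) ∣ n) :
    ∃ (V : Type) (_ : Fintype V) (G : SimpleGraph V) (C : Fin (n / (k - 1)) → Set V),
      Nat.card V = n + 1 ∧
      (∀ i, (C i).ncard = k) ∧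
      (∀ i j : Fin (n / (k - 1)), (i : ℕ) + 1 = (j : ℕ) → (C i ∩ C j).ncard = 1) ∧
      (∀ i j : Fin (n / (k - 1)), (i : ℕ) + 1 < (j : ℕ) → C i ∩ C j = ∅) ∧
      (⋃ i, C i) = Set.univ ∧
      (∀ x y, G.Adj x y ↔ x ≠ y ∧ ∃ i, x ∈ C i ∧ y ∈ C i) ∧
      G.Connected ∧ IsIntervalGraph G ∧ pathwidth G = k - 1 ∧
      ((n * k : ℕ) : ℕ∞) ≤ 2 * (rotationGraph G).ediam := by
  obtain ⟨d, rfl⟩ : ∃ d, k = d + 1 := ⟨k - 1, by omega⟩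
  have hd : 0 < d := by omega
  obtain ⟨c, rfl⟩ := hdvd
  simp only [Nat.add_sub_cancel] at hn ⊢
  have hc : 0 < c := by
    rcases Nat.eq_zero_or_pos c with rfl | h
    · simp at hn
    · exact h
  have hq : (d + 1 - 1) * c / (d + 1 - 1) = c := by
    simp only [Nat.add_sub_cancel]
    exact Nat.mul_div_cancel_left c hd
  refine ⟨Fin (d * c + 1), inferInstance, St6.GG d c,
    (fun i => ↑(St6.blk d c (i : ℕ))), ?_, ?_, ?_, ?_, ?_, ?_, ?_, ?_, ?_, ?_⟩
  · simp [Nat.card_eq_fintype_card]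
  · intro i
    rw [Set.ncard_coe_finset]
    exact St6.card_blk hd (lt_of_lt_of_eq i.isLt hq)
  · intro i j hij
    rw [← Finset.coe_inter, Set.ncard_coe_finset]
    exact St6.card_blk_inter_succ hd (lt_of_lt_of_eq j.isLt hq) hij
  · intro i j hij
    rw [← Finset.coe_inter, St6.blk_disj hd hij]
    simp
  · exact Set.eq_univ_of_forall fun x =>
      Set.mem_iUnion.mpr ⟨⟨St6.Jv x, lt_of_lt_of_eq (St6.Jv_lt hc x) hq.symm⟩, St6.mem_blk_J hd hc x⟩
  · intro x y
    constructor
    · rintro ⟨hne, i, hx, hy⟩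
      exact ⟨hne, ⟨(i : ℕ), by rw [hq]; exact i.isLt⟩, hx, hy⟩
    · rintro ⟨hne, i, hx, hy⟩
      exact ⟨hne, ⟨(i : ℕ), lt_of_lt_of_eq i.isLt hq⟩, hx, hy⟩
  · exact St6.conn hd hc
  · exact St6.interval_GG hd hc
  · exact St6.pathwidth_GG hd hc
  · have hwalk : ∀ p : (rotationGraph (St6.GG d c)).Walk (St6.T0 hd hc) (St6.T1 hd hc),
        d * c * (d + 1) ≤ 2 * p.length := by
      intro p
      have h1 := St6.walk_card_le p
      rw [St6.FF_symmDiff hd hc, St6.card_EE hd hc] at h1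
      exact h1
    have hedist : ((d * c * (d + 1) : ℕ) : ℕ∞) ≤
        2 * (rotationGraph (St6.GG d c)).edist (St6.T0 hd hc) (St6.T1 hd hc) := by
      rcases eq_or_ne ((rotationGraph (St6.GG d c)).edist (St6.T0 hd hc) (St6.T1 hd hc)) ⊤
        with h | h
      · rw [h]
        simp
      · obtain ⟨p, hp⟩ := SimpleGraph.exists_walk_of_edist_ne_top h
        rw [← hp]
        exact_mod_cast hwalk p
    exact le_trans hedist (mul_le_mul_right SimpleGraph.edist_le_ediam 2)
end

section
/- Let p, q be positive integers and let α, β be integers with 0 ≤ α < p and 0 ≤ β < q. Let T1 be the search tree on SPK_{p,q} that is a path whose vertices from the root downward are x_1, x_2, …, x_α, y_1, y_2, …, y_q, x_{α+1}, …, x_p, and let T2 be the search tree that is a path whose vertices from the root downward are y_q, y_{q−1}, …, y_{β+1}, x_p, y_β, …, y_1, x_{p−1}, …, x_1. Then dist(T1, T2) ≥ p(p−1)/2 + αq + min{ q(q−1)/2 + β, 2q(p−α) − β }. -/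
open SimpleGraph

/-- Position of each vertex of `SPK p q` along the path
`x_1, …, x_α, y_1, …, y_q, x_{α+1}, …, x_p` (indices of `Fin` are 0-based,
so `Sum.inl i` is `x_{i+1}` and `Sum.inr j` is `y_{j+1}`). -/
def posT1 (q α : ℕ) {p : ℕ} : Fin p ⊕ Fin q → ℕ
  | .inl i => if (i : ℕ) < α then (i : ℕ) else (i : ℕ) + q
  | .inr j => α + (j : ℕ)

/-- Position of each vertex of `SPK p q` along the path
`y_q, y_{q-1}, …, y_{β+1}, x_p, y_β, …, y_1, x_{p-1}, …, x_1`. -/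
def posT2 (q β : ℕ) {p : ℕ} : Fin p ⊕ Fin q → ℕ
  | .inl i => if (i : ℕ) = p - 1 then q - β else q + p - 1 - (i : ℕ)
  | .inr j => if β ≤ (j : ℕ) then q - 1 - (j : ℕ) else q - (j : ℕ)


/- ========================= Auxiliary development ========================= -/

namespace SPKAux

open Finset

attribute [local instance] Classical.propDecidable

variable {p q : ℕ}

/-! ### Basic facts about `SPK` adjacency -/

lemma spk_adj_xy (i : Fin p) (j : Fin q) : (SPK p q).Adj (Sum.inl i) (Sum.inr j) :=
  ⟨by simp, Or.inl rfl⟩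

lemma spk_adj_yx (j : Fin q) (i : Fin p) : (SPK p q).Adj (Sum.inr j) (Sum.inl i) :=
  ⟨by simp, Or.inr rfl⟩

lemma spk_adj_xx {i k : Fin p} (h : i ≠ k) : (SPK p q).Adj (Sum.inl i) (Sum.inl k) :=
  ⟨by simpa using h, Or.inl rfl⟩

lemma spk_not_adj_yy (j k : Fin q) : ¬ (SPK p q).Adj (Sum.inr j) (Sum.inr k) := by
  rintro ⟨-, h | h⟩ <;> simp at h

/-- In any search tree on `SPK p q`, a clique vertex and an independent-set
vertex are always comparable. -/
lemma comp_xy (U : SearchTree (SPK p q)) (i : Fin p) (j : Fin q) :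
    U.anc (Sum.inl i) (Sum.inr j) ∨ U.anc (Sum.inr j) (Sum.inl i) :=
  U.edge_comparable _ _ (spk_adj_xy i j)

/-! ### Rotation lemmas -/

section Rotation

variable {U U' : SearchTree (SPK p q)} {a b : Fin p ⊕ Fin q}

lemma rot_anc_b (hR : IsRotation U U' a b) (w : Fin p ⊕ Fin q) :
    U'.anc b w ↔ U.anc a w := by
  have h := hR.2.2.1
  constructor
  · intro hw
    have : w ∈ U.descSet a := h ▸ hw
    exact this
  · intro hw
    have : w ∈ U'.descSet b := h.symm ▸ hw
    exact this

lemma rot_anc_other (hR : IsRotation U U' a b) {v : Fin p ⊕ Fin q}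
    (hv1 : v ≠ a) (hv2 : v ≠ b) (w : Fin p ⊕ Fin q) :
    U'.anc v w ↔ U.anc v w := by
  have h := hR.2.2.2 v hv1 hv2
  constructor
  · intro hw
    have : w ∈ U.descSet v := h ▸ hw
    exact this
  · intro hw
    have : w ∈ U'.descSet v := h.symm ▸ hw
    exact this

lemma rot_b_anc_a (hR : IsRotation U U' a b) : U'.anc b a :=
  (rot_anc_b hR a).mpr (U.refl a)

lemma rot_not_anc_ab (hR : IsRotation U U' a b) : ¬ U'.anc a b :=
  fun h => hR.1 (U'.antisymm a b h (rot_b_anc_a hR))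

/-- No vertex lies strictly between `a` and `b`. -/
lemma rot_no_between (hR : IsRotation U U' a b) {c : Fin p ⊕ Fin q}
    (h1 : U.anc a c) (h2 : U.anc c b) : c = a ∨ c = b := by
  by_contra hc
  push_neg at hc
  have hcb : U'.anc c b := (rot_anc_other hR hc.1 hc.2 b).mpr h2
  have hbc : U'.anc b c := (rot_anc_b hR c).mpr h1
  exact hc.2 (U'.antisymm c b hcb hbc)

/-- Whatever is a descendant of `a` after the rotation was one before (and isn't `b`). -/
lemma rot_anc_a (hR : IsRotation U U' a b) {w : Fin p ⊕ Fin q} (h : U'.anc a w) :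
    U.anc a w ∧ w ≠ b := by
  refine ⟨(rot_anc_b hR w).mp (U'.trans _ _ _ (rot_b_anc_a hR) h), ?_⟩
  rintro rfl
  exact rot_not_anc_ab hR h

/-- A descendant of `a` adjacent to `a` that is not `b` stays a descendant of `a`. -/
lemma rot_forced (hR : IsRotation U U' a b) {v : Fin p ⊕ Fin q}
    (hadj : (SPK p q).Adj a v) (hvb : v ≠ b) (h : U.anc a v) : U'.anc a v := by
  rcases U'.edge_comparable a v hadj with h' | h'
  · exact h'
  · have hva : v ≠ a := fun e => hadj.ne e.symm
    have : U.anc v a := (rot_anc_other hR hva hvb a).mp h'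
    exact absurd (U.antisymm a v h this) hadj.ne

/-- Ancestry relations whose source is not `a` persist under the rotation. -/
lemma rot_persist (hR : IsRotation U U' a b) {u v : Fin p ⊕ Fin q}
    (h : U.anc u v) (hua : u ≠ a) : U'.anc u v := by
  by_cases hub : u = b
  · subst hub
    exact (rot_anc_b hR v).mpr (U.trans _ _ _ hR.2.1 h)
  · exact (rot_anc_other hR hua hub v).mpr h

/-- The direction of a comparable adjacent pair other than `(a, b)` persists. -/
lemma rot_dir_persist (hR : IsRotation U U' a b) {u v : Fin p ⊕ Fin q}
    (hadj : (SPK p q).Adj u v) (h : U.anc u v) (hne : ¬(u = a ∧ v = b)) :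
    U'.anc u v := by
  by_cases hua : u = a
  · subst hua
    exact rot_forced hR hadj (fun hv => hne ⟨rfl, hv⟩) h
  · exact rot_persist hR h hua

end Rotation

end SPKAux

/-! ### Counting helpers -/

namespace SPKAux

open Finset

attribute [local instance] Classical.propDecidable

variable {p q : ℕ}

lemma card_le_card_add_one {γ : Type*} {X Y : Finset γ} (e : γ)
    (h : ∀ x ∈ X, x ∈ Y ∨ x = e) : X.card ≤ Y.card + 1 := by
  have hX : X ⊆ insert e Y := by
    intro x hx
    rcases h x hx with h' | h'
    · exact Finset.mem_insert_of_mem h'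
    · exact h' ▸ Finset.mem_insert_self e Y
  exact le_trans (Finset.card_le_card hX) (Finset.card_insert_le e Y)

lemma card_lt_pairs {γ : Type*} [LinearOrder γ] (A : Finset γ) (F : Finset (γ × γ))
    (hF : ∀ e : γ × γ, e ∈ F ↔ (e.1 ∈ A ∧ e.2 ∈ A ∧ e.1 < e.2)) :
    F.card = A.card.choose 2 := by
  classical
  have hFe : F = (A ×ˢ A).filter fun e => e.1 < e.2 := by
    ext e
    simp only [Finset.mem_filter, Finset.mem_product, hF]
    tauto
  subst hFe
  have hcardeq : ((A ×ˢ A).filter fun e => e.1 < e.2).card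
      = ((A ×ˢ A).filter fun e => e.2 < e.1).card := by
    apply Finset.card_bij (fun e _ => Prod.swap e)
    · intro e he
      simp only [Finset.mem_filter, Finset.mem_product] at he ⊢
      exact ⟨⟨he.1.2, he.1.1⟩, he.2⟩
    · intro e1 h1 e2 h2 hswap
      exact Prod.swap_injective hswap
    · intro e he
      refine ⟨Prod.swap e, ?_, (Prod.swap_swap e).symm⟩
      simp only [Finset.mem_filter, Finset.mem_product] at he ⊢
      exact ⟨⟨he.1.2, he.1.1⟩, he.2⟩
  have hunion : ((A ×ˢ A).filter fun e => e.1 < e.2) ∪ ((A ×ˢ A).filter fun e => e.2 < e.1)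
      = A.offDiag := by
    ext e
    simp only [Finset.mem_union, Finset.mem_filter, Finset.mem_product, Finset.mem_offDiag]
    constructor
    · rintro (⟨⟨h1, h2⟩, h3⟩ | ⟨⟨h1, h2⟩, h3⟩)
      · exact ⟨h1, h2, ne_of_lt h3⟩
      · exact ⟨h1, h2, (ne_of_lt h3).symm⟩
    · rintro ⟨h1, h2, h3⟩
      rcases lt_or_gt_of_ne h3 with h | h
      · exact Or.inl ⟨⟨h1, h2⟩, h⟩
      · exact Or.inr ⟨⟨h1, h2⟩, h⟩
  have hdisj : Disjoint ((A ×ˢ A).filter fun e => e.1 < e.2)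
      ((A ×ˢ A).filter fun e => e.2 < e.1) := by
    rw [Finset.disjoint_left]
    intro e he1 he2
    simp only [Finset.mem_filter] at he1 he2
    exact absurd he2.2 (not_lt_of_gt he1.2)
  have hsum : ((A ×ˢ A).filter fun e => e.1 < e.2).card
      + ((A ×ˢ A).filter fun e => e.2 < e.1).card = A.card * A.card - A.card := by
    rw [← Finset.card_union_of_disjoint hdisj, hunion, Finset.offDiag_card]
  have hmul : A.card * (A.card - 1) = A.card * A.card - A.card := by
    cases' A.card with k
    · simp
    · simp only [Nat.succ_sub_one]
      have : (k + 1) * (k + 1) = (k + 1) * k + (k + 1) := by ring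
      omega
  rw [Nat.choose_two_right]
  generalize hX : A.card * (A.card - 1) = X at hmul ⊢
  generalize hY : A.card * A.card = Y at hsum hmul
  omega

lemma card_of_val_lt {n m : ℕ} (h : m ≤ n) (F : Finset (Fin n))
    (hF : ∀ i : Fin n, i ∈ F ↔ (i : ℕ) < m) : F.card = m := by
  classical
  have key : F.card = (univ : Finset (Fin m)).card := by
    refine Finset.card_bij'
      (fun (i : Fin n) hi => (⟨(i : ℕ), (hF i).mp hi⟩ : Fin m))
      (fun (k : Fin m) _ => (⟨(k : ℕ), lt_of_lt_of_le k.2 h⟩ : Fin n))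
      (fun i hi => Finset.mem_univ _) (fun k hk => ?_) (fun i hi => rfl) (fun k hk => rfl)
    exact (hF _).mpr k.2
  rw [key, Finset.card_univ, Fintype.card_fin]

lemma card_of_val_ge {n m : ℕ} (h : m ≤ n) (F : Finset (Fin n))
    (hF : ∀ i : Fin n, i ∈ F ↔ m ≤ (i : ℕ)) : F.card = n - m := by
  classical
  have h1 : ((univ : Finset (Fin n)).filter fun i : Fin n => (i : ℕ) < m).card = m :=
    card_of_val_lt h _ (by intro i; simp)
  have h2 := Finset.card_filter_add_card_filter_not
    (s := (univ : Finset (Fin n))) (p := fun i : Fin n => (i : ℕ) < m)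
  have h3 : ((univ : Finset (Fin n)).filter fun i : Fin n => ¬ ((i : ℕ) < m)) = F := by
    ext i
    simp [hF, not_lt]
  rw [h3, h1] at h2
  have h4 : (Finset.univ : Finset (Fin n)).card = n := by simp
  omega

end SPKAux

/-! ### The potential function -/

namespace SPKAux

open Finset

attribute [local instance] Classical.propDecidable

variable {p q : ℕ}

lemma filter_card_mono {γ : Type*} [Fintype γ] (P Q : γ → Prop)
    [DecidablePred P] [DecidablePred Q]
    (h : ∀ x, P x → Q x) :
    ((univ : Finset γ).filter P).card ≤ ((univ : Finset γ).filter Q).card :=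
  Finset.card_le_card fun x hx => Finset.mem_filter.mpr
    ⟨Finset.mem_univ _, h x (Finset.mem_filter.mp hx).2⟩

lemma filter_card_le_add_one {γ : Type*} [Fintype γ] (P Q : γ → Prop) (e : γ)
    [DecidablePred P] [DecidablePred Q]
    (h : ∀ x, P x → Q x ∨ x = e) :
    ((univ : Finset γ).filter P).card ≤ ((univ : Finset γ).filter Q).card + 1 :=
  card_le_card_add_one e fun x hx => by
    rcases h x (Finset.mem_filter.mp hx).2 with h' | h'
    · exact Or.inl (Finset.mem_filter.mpr ⟨Finset.mem_univ _, h'⟩)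
    · exact Or.inr h'

/-- Number of clique vertices below `y_j`. -/
noncomputable def nY (U : SearchTree (SPK p q)) (j : Fin q) : ℕ :=
  ((univ : Finset (Fin p)).filter fun i : Fin p => U.anc (Sum.inr j) (Sum.inl i)).card

/-- Number of clique vertices below `y_j` in the target tree `T2`. -/
def NT (p β : ℕ) {q : ℕ} (j : Fin q) : ℕ := if (j : ℕ) < β then p - 1 else p

/-- The pair `(x_i, y_j)` is wrongly ordered (w.r.t. the target `T2`). -/
def wrongXY (β : ℕ) (U : SearchTree (SPK p q)) (i : Fin p) (j : Fin q) : Prop :=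
  if (i : ℕ) = p - 1 ∧ (j : ℕ) < β then U.anc (Sum.inr j) (Sum.inl i)
  else U.anc (Sum.inl i) (Sum.inr j)

noncomputable def xyW (β : ℕ) (U : SearchTree (SPK p q)) (j : Fin q) : ℕ :=
  ((univ : Finset (Fin p)).filter fun i : Fin p => wrongXY β U i j).card

noncomputable def termJ (β : ℕ) (S : Finset (Fin q)) (U : SearchTree (SPK p q))
    (j : Fin q) : ℕ :=
  if j ∈ S then nY U j + NT p β j else xyW β U j

noncomputable def wXXcard (U : SearchTree (SPK p q)) : ℕ :=
  ((univ : Finset (Fin p × Fin p)).filter fun e =>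
    e.1 < e.2 ∧ U.anc (Sum.inl e.1) (Sum.inl e.2)).card

noncomputable def wYYcard (S : Finset (Fin q)) (U : SearchTree (SPK p q)) : ℕ :=
  ((univ : Finset (Fin q × Fin q)).filter fun e =>
    e.1 < e.2 ∧ ¬(e.1 ∈ S ∧ e.2 ∈ S) ∧ U.anc (Sum.inr e.1) (Sum.inr e.2)).card

noncomputable def phi (β : ℕ) (S : Finset (Fin q)) (U : SearchTree (SPK p q)) : ℕ :=
  wXXcard U + (∑ j, termJ β S U j) + wYYcard S U

noncomputable def pot (β : ℕ) (U : SearchTree (SPK p q)) : ℕ :=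
  sInf (Set.range fun S => phi β S U)

/-- If no clique vertex is below `y_j`, then at least `NT j` of the mixed
pairs at `y_j` are wrong. -/
lemma NT_le_xyW (hp : 0 < p) (β : ℕ) (U : SearchTree (SPK p q)) (j : Fin q)
    (h0 : ∀ i : Fin p, ¬ U.anc (Sum.inr j) (Sum.inl i)) :
    NT p β j ≤ xyW β U j := by
  have hanc : ∀ i : Fin p, U.anc (Sum.inl i) (Sum.inr j) := by
    intro i
    rcases comp_xy U i j with h | h
    · exact h
    · exact absurd h (h0 i)
  by_cases hjβ : (j : ℕ) < β
  · have hsub : ∀ i : Fin p, (i : ℕ) < p - 1 → wrongXY β U i j := by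
      intro i hi
      unfold wrongXY
      rw [if_neg (by omega)]
      exact hanc i
    have hthis := filter_card_mono (fun i : Fin p => (i : ℕ) < p - 1)
      (fun i : Fin p => wrongXY β U i j) hsub
    have hcv : ((univ : Finset (Fin p)).filter fun i : Fin p => (i : ℕ) < p - 1).card = p - 1 :=
      card_of_val_lt (by omega) _ (fun i => by simp)
    rw [hcv] at hthis
    unfold NT
    rw [if_pos hjβ]
    exact hthis
  · have hsub : ∀ i : Fin p, True → wrongXY β U i j := by
      intro i _
      unfold wrongXY
      rw [if_neg (by tauto)]
      exact hanc i
    have := filter_card_mono (fun _ : Fin p => True)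
      (fun i : Fin p => wrongXY β U i j) hsub
    simp only [Finset.filter_true, Finset.card_univ, Fintype.card_fin] at this
    unfold NT
    rw [if_neg hjβ]
    exact this

/-- In a search tree, a non-singleton subtree rooted at an independent-set
vertex contains a clique vertex. -/
lemma exists_inl_desc (U : SearchTree (SPK p q)) (j : Fin q) {c : Fin p ⊕ Fin q}
    (h : U.anc (Sum.inr j) c) (hne : Sum.inr j ≠ c) :
    ∃ i : Fin p, U.anc (Sum.inr j) (Sum.inl i) := by
  have hconn := U.desc_connected (Sum.inr j)
  have hr := hconn.preconnected ⟨Sum.inr j, U.refl _⟩ ⟨c, h⟩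
  obtain ⟨w⟩ := hr
  cases w with
  | nil => exact absurd rfl hne
  | @cons _ v _ hadj _ =>
    have hadj' : (SPK p q).Adj (Sum.inr j) v.val := hadj
    obtain ⟨i, hi⟩ : ∃ i : Fin p, v.val = Sum.inl i := by
      rcases hv : v.val with i | k
      · exact ⟨i, rfl⟩
      · rw [hv] at hadj'
        exact absurd hadj' (spk_not_adj_yy j k)
    refine ⟨i, ?_⟩
    have := v.2
    rw [hi] at this
    exact this

end SPKAux

/-! ### The key step lemma: the potential drops by at most 1 along a rotation -/

namespace SPKAux

open Finset

attribute [local instance] Classical.propDecidable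

variable {p q : ℕ}

lemma sum_term_bound {f g : Fin q → ℕ} (e : Fin q)
    (h : ∀ j, f j ≤ g j + (if j = e then 1 else 0)) :
    (∑ j, f j) ≤ (∑ j, g j) + 1 := by
  have h1 : (∑ j, f j) ≤ ∑ j, (g j + if j = e then 1 else 0) :=
    Finset.sum_le_sum fun j _ => h j
  have h2 : (∑ j, (g j + if j = e then (1:ℕ) else 0))
      = (∑ j, g j) + ∑ j, (if j = e then (1:ℕ) else 0) := Finset.sum_add_distrib
  have h3 : (∑ j, (if j = e then (1:ℕ) else 0)) = 1 := by
    rw [Finset.sum_ite_eq' univ e (fun _ => (1:ℕ))]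
    simp
  omega

lemma nY_eq_zero {U : SearchTree (SPK p q)} {j : Fin q}
    (h : ∀ i : Fin p, ¬ U.anc (Sum.inr j) (Sum.inl i)) : nY U j = 0 :=
  Finset.card_eq_zero.mpr (Finset.filter_eq_empty_iff.mpr fun i _ => h i)

lemma phi_step (hp : 0 < p) (β : ℕ) {U U' : SearchTree (SPK p q)}
    {a b : Fin p ⊕ Fin q} (hR : IsRotation U U' a b) (S' : Finset (Fin q)) :
    ∃ S : Finset (Fin q), phi β S U ≤ phi β S' U' + 1 := by
  by_cases hBreak : ∃ k : Fin q, Sum.inr k ≠ b ∧ U.anc a (Sum.inr k) ∧ ¬ U'.anc a (Sum.inr k)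
  · -- ==================== CASE A : a break occurs ====================
    obtain ⟨k0, hk0b, hk0U, hk0U'⟩ := hBreak
    have hk0a : Sum.inr k0 ≠ a := by
      rintro rfl; exact hk0U' (U'.refl _)
    rcases ha : a with i0 | ja
    · -- a in the clique : impossible
      rw [ha] at hk0U hk0U' hR
      exact absurd (rot_forced hR (spk_adj_xy i0 k0) hk0b hk0U) hk0U'
    rw [ha] at hk0U hk0U' hk0a hR
    -- F1 : no clique vertex other than b is below a
    have F1 : ∀ x : Fin p, Sum.inl x ≠ b → ¬ U.anc (Sum.inr ja) (Sum.inl x) := by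
      intro x hxb hx
      have hx' : U'.anc (Sum.inr ja) (Sum.inl x) := rot_forced hR (spk_adj_yx ja x) hxb hx
      rcases U.edge_comparable _ _ (spk_adj_xy x k0) with hc | hc
      · have : U'.anc (Sum.inl x) (Sum.inr k0) :=
          (rot_anc_other hR (by simp) hxb _).mpr hc
        exact hk0U' (U'.trans _ _ _ hx' this)
      · have hc' : U'.anc (Sum.inr k0) (Sum.inl x) :=
          (rot_anc_other hR hk0a hk0b _).mpr hc
        rcases U'.chain _ _ _ hx' hc' with h | h
        · exact hk0U' h
        · have h2 : U.anc (Sum.inr k0) (Sum.inr ja) := (rot_anc_other hR hk0a hk0b _).mp h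
          exact hk0a (U.antisymm _ _ hk0U h2).symm
    -- b is in the clique
    rcases hb : b with ib | kb
    swap
    · exfalso
      rw [hb] at hR
      obtain ⟨x, hx⟩ := exists_inl_desc U ja hR.2.1 (by simpa using hR.1)
      exact absurd hx (F1 x (by rw [hb]; simp))
    rw [hb] at hk0b F1 hR
    -- the set of pairs broken at this step
    set C : Finset (Fin q) := univ.filter
      (fun k => U.anc (Sum.inr ja) (Sum.inr k) ∧ ¬ U'.anc (Sum.inr ja) (Sum.inr k)) with hC
    have hjaC : ja ∉ C := by
      intro h
      exact (Finset.mem_filter.mp h).2.2 (U'.refl _)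
    set S : Finset (Fin q) := insert ja (S' ∪ C) with hS
    have hS'sub : S' ⊆ S := fun x hx => by simp [hS, hx]
    refine ⟨S, ?_⟩
    have F2 : ∀ i : Fin p, U.anc (Sum.inr ja) (Sum.inl i) → i = ib := by
      intro i hi
      by_contra hne
      exact F1 i (fun h => hne (Sum.inl.inj h)) hi
    have F3 : ∀ i : Fin p, ¬ U'.anc (Sum.inr ja) (Sum.inl i) := by
      intro i hi
      obtain ⟨hU, hne⟩ := rot_anc_a hR hi
      exact F1 i hne hU
    have F4 : ∀ k, k ∈ C → ∀ i : Fin p, ¬ U.anc (Sum.inr k) (Sum.inl i) := by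
      intro k hk i hi
      have hkC := Finset.mem_filter.mp hk
      have hanc : U.anc (Sum.inr ja) (Sum.inl i) := U.trans _ _ _ hkC.2.1 hi
      have hib : i = ib := F2 i hanc
      subst hib
      rcases rot_no_between hR hkC.2.1 hi with h | h
      · have : k = ja := Sum.inr.inj h
        exact hjaC (this ▸ hk)
      · simp at h
    have F5 : ∀ k, k ∈ C → ∀ i : Fin p, ¬ U'.anc (Sum.inr k) (Sum.inl i) := by
      intro k hk i hi
      have hka : (Sum.inr k : Fin p ⊕ Fin q) ≠ Sum.inr ja := by
        intro h
        exact hjaC ((Sum.inr.inj h) ▸ hk)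
      exact F4 k hk i ((rot_anc_other hR hka (by simp) _).mp hi)
    have hterm : ∀ j : Fin q, termJ β S U j ≤ termJ β S' U' j + (if j = ja then 1 else 0) := by
      intro j
      by_cases hjja : j = ja
      · subst hjja
        rw [if_pos rfl]
        have hmemS : j ∈ S := by simp [hS]
        have hle1 : nY U j ≤ 1 := by
          have hsub : ((univ : Finset (Fin p)).filter
              fun i : Fin p => U.anc (Sum.inr j) (Sum.inl i)) ⊆ {ib} := by
            intro i hi
            simp only [Finset.mem_filter] at hi
            simp [F2 i hi.2]
          exact le_trans (Finset.card_le_card hsub) (by simp)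
        have hn'0 : nY U' j = 0 := nY_eq_zero F3
        rw [termJ, if_pos hmemS]
        by_cases hjS' : j ∈ S'
        · rw [termJ, if_pos hjS', hn'0]
          omega
        · rw [termJ, if_neg hjS']
          have := NT_le_xyW hp β U' j F3
          omega
      · rw [if_neg hjja]
        have hja' : (Sum.inr j : Fin p ⊕ Fin q) ≠ Sum.inr ja := fun h => hjja (Sum.inr.inj h)
        by_cases hjC : j ∈ C
        · have hmemS : j ∈ S := by simp [hS, hjC]
          have hn0 : nY U j = 0 := nY_eq_zero (F4 j hjC)
          rw [termJ, if_pos hmemS, hn0]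
          by_cases hjS' : j ∈ S'
          · rw [termJ, if_pos hjS']; omega
          · rw [termJ, if_neg hjS']
            have := NT_le_xyW hp β U' j (F5 j hjC)
            omega
        · have hiff : j ∈ S ↔ j ∈ S' := by
            simp [hS, hjja, hjC]
          by_cases hjS' : j ∈ S'
          · rw [termJ, if_pos (hiff.mpr hjS'), termJ, if_pos hjS']
            have : nY U j ≤ nY U' j :=
              filter_card_mono _ _ (fun i hi => rot_persist hR hi hja')
            omega
          · rw [termJ, if_neg (fun h => hjS' (hiff.mp h)), termJ, if_neg hjS']
            have : xyW β U j ≤ xyW β U' j := by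
              apply filter_card_mono
              intro i hw
              unfold wrongXY at hw ⊢
              split_ifs at hw ⊢
              · exact rot_persist hR hw hja'
              · exact rot_persist hR hw (by simp)
            omega
    have hXX : wXXcard U ≤ wXXcard U' := by
      apply filter_card_mono
      rintro ⟨e1, e2⟩ ⟨hlt, hanc⟩
      exact ⟨hlt, rot_persist hR hanc (by simp)⟩
    have hYY : wYYcard S U ≤ wYYcard S' U' := by
      apply filter_card_mono
      rintro ⟨e1, e2⟩ ⟨hlt, hnot, hanc⟩
      refine ⟨hlt, fun hbb => hnot ⟨hS'sub hbb.1, hS'sub hbb.2⟩, ?_⟩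
      by_cases h1 : e1 = ja
      · subst h1
        have he2 : e2 ∉ C := by
          intro hc
          exact hnot ⟨by simp [hS], by simp [hS, hc]⟩
        by_contra hancn
        exact he2 (Finset.mem_filter.mpr ⟨Finset.mem_univ _, hanc, hancn⟩)
      · exact rot_persist hR hanc (fun h => h1 (Sum.inr.inj h))
    have hsum := sum_term_bound ja hterm
    unfold phi
    omega
  · -- ==================== CASE B : no break ====================
    push_neg at hBreak
    refine ⟨S', ?_⟩
    rcases ha : a with i0 | j0 <;> rcases hb : b with i1 | k1 <;> rw [ha, hb] at hR hBreak
    · -- B-PP : a = inl i0, b = inl i1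
      have hterm : ∀ j, termJ β S' U j ≤ termJ β S' U' j := by
        intro j
        unfold termJ
        split_ifs with hjS
        · have : nY U j ≤ nY U' j :=
            filter_card_mono _ _ (fun i hi => rot_persist hR hi (by simp))
          omega
        · apply filter_card_mono
          intro i hw
          unfold wrongXY at hw ⊢
          split_ifs at hw ⊢
          · exact rot_persist hR hw (by simp)
          · exact rot_dir_persist hR (spk_adj_xy i j) hw (by rintro ⟨-, h⟩; simp at h)
      have hYY : wYYcard S' U ≤ wYYcard S' U' := by
        apply filter_card_mono
        rintro ⟨e1, e2⟩ ⟨hlt, hnot, hanc⟩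
        exact ⟨hlt, hnot, rot_persist hR hanc (by simp)⟩
      have hXX : wXXcard U ≤ wXXcard U' + 1 := by
        apply filter_card_le_add_one _ _ (i0, i1)
        rintro ⟨e1, e2⟩ ⟨hlt, hanc⟩
        by_cases h1 : e1 = i0
        · subst h1
          by_cases h2 : e2 = i1
          · subst h2; exact Or.inr rfl
          · exact Or.inl ⟨hlt, rot_forced hR (spk_adj_xx (ne_of_lt hlt)) 
              (fun h => h2 (Sum.inl.inj h)) hanc⟩
        · exact Or.inl ⟨hlt, rot_persist hR hanc (fun h => h1 (Sum.inl.inj h))⟩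
      have hsum := Finset.sum_le_sum (fun j (_ : j ∈ univ) => hterm j)
      unfold phi
      omega
    · -- B-mixed-join : a = inl i0, b = inr k1
      have hXX : wXXcard U ≤ wXXcard U' := by
        apply filter_card_mono
        rintro ⟨e1, e2⟩ ⟨hlt, hanc⟩
        refine ⟨hlt, ?_⟩
        by_cases h1 : e1 = i0
        · subst h1
          exact rot_forced hR (spk_adj_xx (ne_of_lt hlt)) (by simp) hanc
        · exact rot_persist hR hanc (fun h => h1 (Sum.inl.inj h))
      have hYY : wYYcard S' U ≤ wYYcard S' U' := by
        apply filter_card_mono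
        rintro ⟨e1, e2⟩ ⟨hlt, hnot, hanc⟩
        exact ⟨hlt, hnot, rot_persist hR hanc (by simp)⟩
      have hterm : ∀ j, termJ β S' U j ≤ termJ β S' U' j + (if j = k1 then 1 else 0) := by
        intro j
        by_cases hjk : j = k1
        · subst hjk
          have hbound : termJ β S' U j ≤ termJ β S' U' j + 1 := by
            unfold termJ
            split_ifs with hjS
            · have : nY U j ≤ nY U' j :=
                filter_card_mono _ _ (fun i hi => rot_persist hR hi (by simp))
              omega
            · have : xyW β U j ≤ xyW β U' j + 1 := by
                apply filter_card_le_add_one _ _ i0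
                intro i hw
                by_cases hii : i = i0
                · exact Or.inr hii
                · left
                  unfold wrongXY at hw ⊢
                  split_ifs at hw ⊢
                  · exact rot_persist hR hw (by simp)
                  · exact rot_dir_persist hR (spk_adj_xy i j) hw
                      (by rintro ⟨h, -⟩; exact hii (Sum.inl.inj h))
              omega
          simpa using hbound
        · rw [if_neg hjk]
          have hbound : termJ β S' U j ≤ termJ β S' U' j := by
            unfold termJ
            split_ifs with hjS
            · have : nY U j ≤ nY U' j :=
                filter_card_mono _ _ (fun i hi => rot_persist hR hi (by simp))
              omega
            · apply filter_card_mono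
              intro i hw
              unfold wrongXY at hw ⊢
              split_ifs at hw ⊢
              · exact rot_persist hR hw (by simp)
              · exact rot_dir_persist hR (spk_adj_xy i j) hw
                  (by rintro ⟨-, h⟩; exact hjk (Sum.inr.inj h))
          omega
      have hsum := sum_term_bound k1 hterm
      unfold phi
      omega
    · -- B-mixed : a = inr j0, b = inl i1
      have hNB : ∀ k : Fin q, U.anc (Sum.inr j0) (Sum.inr k) → U'.anc (Sum.inr j0) (Sum.inr k) :=
        fun k h => hBreak k (by simp) h
      have hXX : wXXcard U ≤ wXXcard U' := by
        apply filter_card_mono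
        rintro ⟨e1, e2⟩ ⟨hlt, hanc⟩
        exact ⟨hlt, rot_persist hR hanc (by simp)⟩
      have hYY : wYYcard S' U ≤ wYYcard S' U' := by
        apply filter_card_mono
        rintro ⟨e1, e2⟩ ⟨hlt, hnot, hanc⟩
        refine ⟨hlt, hnot, ?_⟩
        by_cases h1 : e1 = j0
        · subst h1; exact hNB e2 hanc
        · exact rot_persist hR hanc (fun h => h1 (Sum.inr.inj h))
      have hterm : ∀ j, termJ β S' U j ≤ termJ β S' U' j + (if j = j0 then 1 else 0) := by
        intro j
        by_cases hjj : j = j0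
        · subst hjj
          have hbound : termJ β S' U j ≤ termJ β S' U' j + 1 := by
            unfold termJ
            split_ifs with hjS
            · have : nY U j ≤ nY U' j + 1 := by
                apply filter_card_le_add_one _ _ i1
                intro i hi
                by_cases hii : i = i1
                · exact Or.inr hii
                · exact Or.inl (rot_forced hR (spk_adj_yx j i)
                    (fun h => hii (Sum.inl.inj h)) hi)
              omega
            · have : xyW β U j ≤ xyW β U' j + 1 := by
                apply filter_card_le_add_one _ _ i1
                intro i hw
                by_cases hii : i = i1
                · exact Or.inr hii
                · left
                  unfold wrongXY at hw ⊢
                  split_ifs at hw ⊢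
                  · exact rot_forced hR (spk_adj_yx j i) (fun h => hii (Sum.inl.inj h)) hw
                  · exact rot_persist hR hw (by simp)
              omega
          simpa using hbound
        · rw [if_neg hjj]
          have hbound : termJ β S' U j ≤ termJ β S' U' j := by
            unfold termJ
            split_ifs with hjS
            · have : nY U j ≤ nY U' j :=
                filter_card_mono _ _ (fun i hi => rot_persist hR hi
                  (fun h => hjj (Sum.inr.inj h)))
              omega
            · apply filter_card_mono
              intro i hw
              unfold wrongXY at hw ⊢
              split_ifs at hw ⊢
              · exact rot_persist hR hw (fun h => hjj (Sum.inr.inj h))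
              · exact rot_persist hR hw (by simp)
          omega
      have hsum := sum_term_bound j0 hterm
      unfold phi
      omega
    · -- B-QQ : a = inr j0, b = inr k1
      have hNB : ∀ k : Fin q, k ≠ k1 → U.anc (Sum.inr j0) (Sum.inr k) →
          U'.anc (Sum.inr j0) (Sum.inr k) :=
        fun k hk h => hBreak k (fun he => hk (Sum.inr.inj he)) h
      have hXX : wXXcard U ≤ wXXcard U' := by
        apply filter_card_mono
        rintro ⟨e1, e2⟩ ⟨hlt, hanc⟩
        exact ⟨hlt, rot_persist hR hanc (by simp)⟩
      have hterm : ∀ j, termJ β S' U j ≤ termJ β S' U' j := by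
        intro j
        unfold termJ
        split_ifs with hjS
        · have : nY U j ≤ nY U' j := by
            apply filter_card_mono
            intro i hi
            by_cases hjj : j = j0
            · subst hjj; exact rot_forced hR (spk_adj_yx j i) (by simp) hi
            · exact rot_persist hR hi (fun h => hjj (Sum.inr.inj h))
          omega
        · apply filter_card_mono
          intro i hw
          unfold wrongXY at hw ⊢
          split_ifs at hw ⊢
          · by_cases hjj : j = j0
            · subst hjj; exact rot_forced hR (spk_adj_yx j i) (by simp) hw
            · exact rot_persist hR hw (fun h => hjj (Sum.inr.inj h))
          · exact rot_persist hR hw (by simp)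
      have hYY : wYYcard S' U ≤ wYYcard S' U' + 1 := by
        apply filter_card_le_add_one _ _ (j0, k1)
        rintro ⟨e1, e2⟩ ⟨hlt, hnot, hanc⟩
        by_cases h1 : e1 = j0
        · subst h1
          by_cases h2 : e2 = k1
          · subst h2; exact Or.inr rfl
          · exact Or.inl ⟨hlt, hnot, hNB e2 h2 hanc⟩
        · exact Or.inl ⟨hlt, hnot, rot_persist hR hanc (fun h => h1 (Sum.inr.inj h))⟩
      have hsum := Finset.sum_le_sum (fun j (_ : j ∈ univ) => hterm j)
      unfold phi
      omega

end SPKAux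

/-! ### Potential along walks, and the endpoint trees -/

namespace SPKAux

open Finset

attribute [local instance] Classical.propDecidable

variable {p q : ℕ}

lemma pot_step (hp : 0 < p) (β : ℕ) {U U' : SearchTree (SPK p q)}
    (h : (rotationGraph (SPK p q)).Adj U U') : pot β U ≤ pot β U' + 1 := by
  obtain ⟨a, b, hR⟩ := h
  obtain ⟨S', hS'⟩ : ∃ S', phi β S' U' = pot β U' := by
    have hne : (Set.range fun S => phi β S U').Nonempty := ⟨phi β ∅ U', ⟨∅, rfl⟩⟩
    exact Nat.sInf_mem hne
  obtain ⟨S, hS⟩ := phi_step hp β hR S'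
  calc pot β U ≤ phi β S U := Nat.sInf_le ⟨S, rfl⟩
    _ ≤ phi β S' U' + 1 := hS
    _ = pot β U' + 1 := by rw [hS']

lemma pot_walk (hp : 0 < p) (β : ℕ) {X Y : SearchTree (SPK p q)}
    (W : (rotationGraph (SPK p q)).Walk X Y) : pot β X ≤ W.length + pot β Y := by
  induction W with
  | nil => simp
  | cons h W ih =>
    have h1 := pot_step hp β h
    simp only [SimpleGraph.Walk.length_cons]
    omega

/-! #### The tree `T2` has potential zero -/

section T2

variable {α β : ℕ} {T2 : SearchTree (SPK p q)}

lemma posT2_xx {i k : Fin p} (h : i < k) :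
    posT2 q β (Sum.inl k) < posT2 q β (Sum.inl i) := by
  have hi := i.2
  have hk := k.2
  have h' : (i : ℕ) < (k : ℕ) := h
  simp only [posT2]
  split_ifs <;> omega

lemma posT2_yy {j k : Fin q} (h : j < k) :
    posT2 q β (Sum.inr k : Fin p ⊕ Fin q) < posT2 q β (Sum.inr j : Fin p ⊕ Fin q) := by
  have hj := j.2
  have hk := k.2
  have h' : (j : ℕ) < (k : ℕ) := h
  simp only [posT2]
  split_ifs <;> omega

lemma wrongXY_T2_false (hβ : β < q)
    (hT2 : ∀ u v, T2.anc u v ↔ posT2 q β u ≤ posT2 q β v)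
    (i : Fin p) (j : Fin q) : ¬ wrongXY β T2 i j := by
  have hi := i.2
  have hj := j.2
  intro hw
  unfold wrongXY at hw
  split_ifs at hw with hc
  · rw [hT2] at hw
    simp only [posT2] at hw
    rw [if_neg (by omega), if_pos hc.1] at hw
    omega
  · rw [hT2] at hw
    simp only [posT2] at hw
    by_cases hip : (i : ℕ) = p - 1
    · have hjβ : β ≤ (j : ℕ) := by
        by_contra hcon
        exact hc ⟨hip, by omega⟩
      rw [if_pos hip, if_pos hjβ] at hw
      omega
    · rw [if_neg hip] at hw
      split_ifs at hw <;> omega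

lemma phi_T2_zero (hβ : β < q)
    (hT2 : ∀ u v, T2.anc u v ↔ posT2 q β u ≤ posT2 q β v) :
    phi β ∅ T2 = 0 := by
  unfold phi
  have h1 : wXXcard T2 = 0 := by
    apply Finset.card_eq_zero.mpr
    apply Finset.filter_eq_empty_iff.mpr
    rintro ⟨e1, e2⟩ - ⟨hlt, hanc⟩
    have := (hT2 _ _).mp hanc
    exact absurd this (not_le_of_gt (posT2_xx hlt))
  have h2 : ∀ j : Fin q, termJ β ∅ T2 j = 0 := by
    intro j
    rw [termJ, if_neg (Finset.notMem_empty j)]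
    apply Finset.card_eq_zero.mpr
    apply Finset.filter_eq_empty_iff.mpr
    rintro i -
    exact wrongXY_T2_false hβ hT2 i j
  have h3 : wYYcard ∅ T2 = 0 := by
    apply Finset.card_eq_zero.mpr
    apply Finset.filter_eq_empty_iff.mpr
    rintro ⟨e1, e2⟩ - ⟨hlt, -, hanc⟩
    have := (hT2 _ _).mp hanc
    exact absurd this (not_le_of_gt (posT2_yy hlt))
  rw [h1, h3, Finset.sum_congr rfl (fun j _ => h2 j)]
  simp

end T2

end SPKAux


namespace SPKAux

lemma arith_main (p q α β z s TQ TZ : ℕ)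
    (hp : 0 < p) (hq : 0 < q) (hα : α < p) (hβ : β < q)
    (hz : z ≤ q) (hsz : s ≤ z) (hsβ : s ≤ β)
    (hTQ : 2 * TQ = q * q - q) (hTZ : 2 * TZ = z * z - z) :
    α * q + min (TQ + β) (2 * q * (p - α) - β) + TZ + 2 * s
      ≤ z * (p - α) + z * p + (q - z) * α + β + TQ := by
  have hP' : 1 ≤ p - α := by omega
  have hzz : z ≤ z * z := by nlinarith
  have hqq : q ≤ q * q := by nlinarith
  have hqa : α * q = z * α + (q - z) * α := by
    have h1 : q = z + (q - z) := by omega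
    calc α * q = α * (z + (q - z)) := by rw [← h1]
      _ = z * α + (q - z) * α := by ring
  have hzp : z * p = z * α + z * (p - α) := by
    have h1 : p = α + (p - α) := by omega
    calc z * p = z * (α + (p - α)) := by rw [← h1]
      _ = z * α + z * (p - α) := by ring
  by_cases hc : z * z + 4 * s ≤ 4 * (z * (p - α)) + z
  · -- branch 1 : use min ≤ TQ + β
    have hbr1 : TZ + 2 * s ≤ 2 * (z * (p - α)) := by omega
    have hm : min (TQ + β) (2 * q * (p - α) - β) ≤ TQ + β := min_le_left _ _
    omega
  · -- branch 2 : use min ≤ 2q(p-α) - β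
    push_neg at hc
    have hm : min (TQ + β) (2 * q * (p - α) - β) ≤ 2 * q * (p - α) - β := min_le_right _ _
    have hqpa : q * (p - α) = z * (p - α) + (q - z) * (p - α) := by
      have h1 : q = z + (q - z) := by omega
      calc q * (p - α) = (z + (q - z)) * (p - α) := by rw [← h1]
        _ = z * (p - α) + (q - z) * (p - α) := by ring
    have h2qpa : 2 * q * (p - α) = 2 * (q * (p - α)) := by ring
    have hβle : β ≤ 2 * q * (p - α) := by
      have h1 : q * 1 ≤ q * (p - α) := Nat.mul_le_mul_left q hP'
      omega
    -- key : 2 (q-z)(p-α) + TZ ≤ TQ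
    have hkey : 2 * ((q - z) * (p - α)) + TZ ≤ TQ := by
      by_cases hzq : z = q
      · subst hzq
        simp only [Nat.sub_self]
        omega
      · have hzq' : z < q := lt_of_le_of_ne hz hzq
        obtain ⟨d, hd1, hd2⟩ : ∃ d : ℕ, q = z + d ∧ 1 ≤ d := ⟨q - z, by omega, by omega⟩
        subst hd1
        have hdz : z + d - z = d := by omega
        rw [hdz]
        have hexp : (z + d) * (z + d) = z * z + 2 * (z * d) + d * d := by ring
        rw [hexp] at hTQ
        -- claim : 4 (p-α) + 1 ≤ q + z
        have hclaim : 4 * (p - α) + 1 ≤ (z + d) + z := by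
          by_contra hcon
          push_neg at hcon
          have hmul : z * (2 * z + d) ≤ z * (4 * (p - α)) :=
            Nat.mul_le_mul_left z (by omega)
          have he1 : z * (2 * z + d) = 2 * (z * z) + z * d := by ring
          have he2 : z * (4 * (p - α)) = 4 * (z * (p - α)) := by ring
          rcases Nat.eq_zero_or_pos z with hz0 | hz0
          · subst hz0
            simp only [Nat.zero_mul, Nat.mul_zero] at hc hmul he1 he2 ⊢
            omega
          · have hzd : z * 1 ≤ z * d := Nat.mul_le_mul_left z hd2
            have hlt : z * z + z * d + z < 4 * z := by omega
            have hz1 : z = 1 := by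
              by_contra hzno
              have hz2 : 2 ≤ z := by omega
              have h2z : 2 * z ≤ z * z := Nat.mul_le_mul_right z hz2
              omega
            subst hz1
            have hd3 : d = 1 := by omega
            subst hd3
            simp only [Nat.one_mul, Nat.mul_one] at hc hlt ⊢
            omega
        have hmul2 : d * (4 * (p - α)) ≤ d * (2 * z + d - 1) :=
          Nat.mul_le_mul_left d (by omega)
        have he3 : d * (2 * z + d - 1) + d = d * (2 * z + d) := by
          have h4 : 2 * z + d - 1 + 1 = 2 * z + d := by omega
          calc d * (2 * z + d - 1) + d = d * ((2 * z + d - 1) + 1) := by ring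
            _ = d * (2 * z + d) := by rw [h4]
        have he4 : d * (2 * z + d) = 2 * (z * d) + d * d := by ring
        have he5 : d * (4 * (p - α)) = 4 * (d * (p - α)) := by ring
        omega
    omega

end SPKAux

/-! ### The tree `T1` : lower bound for the potential -/

namespace SPKAux

open Finset

attribute [local instance] Classical.propDecidable

variable {p q : ℕ}

lemma two_choose_two (n : ℕ) : 2 * n.choose 2 = n * n - n := by
  rw [Nat.choose_two_right]
  have h1 : n * (n - 1) = n * n - n := by
    cases' n with k
    · simp
    · simp only [Nat.succ_sub_one]
      have : (k + 1) * (k + 1) = (k + 1) * k + (k + 1) := by ring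
      omega
  have h2 : 2 * (n * (n - 1) / 2) = n * (n - 1) :=
    Nat.two_mul_div_two_of_even (Nat.even_mul_pred_self n)
  omega

lemma card_lt_pairs_univ (n : ℕ) (F : Finset (Fin n × Fin n))
    (hF : ∀ e : Fin n × Fin n, e ∈ F ↔ e.1 < e.2) : F.card = n.choose 2 := by
  have h := card_lt_pairs (univ : Finset (Fin n)) F (by intro e; simpa using hF e)
  simpa using h

section T1

variable {α β : ℕ} {T1 : SearchTree (SPK p q)}

lemma posT1_xx {i k : Fin p} (h : i < k) :
    posT1 q α (Sum.inl i) ≤ posT1 q α (Sum.inl k) := by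
  have h' : (i : ℕ) < (k : ℕ) := h
  simp only [posT1]
  split_ifs <;> omega

lemma posT1_yy {j k : Fin q} (h : j < k) :
    posT1 q α (Sum.inr j : Fin p ⊕ Fin q) ≤ posT1 q α (Sum.inr k : Fin p ⊕ Fin q) := by
  have h' : (j : ℕ) < (k : ℕ) := h
  simp only [posT1]
  omega

lemma wXX_T1 (hT1 : ∀ u v, T1.anc u v ↔ posT1 q α u ≤ posT1 q α v) :
    wXXcard T1 = p.choose 2 := by
  unfold wXXcard
  apply card_lt_pairs_univ
  intro e
  simp only [Finset.mem_filter, Finset.mem_univ, true_and]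
  constructor
  · rintro ⟨h1, -⟩
    exact h1
  · intro h1
    exact ⟨h1, (hT1 _ _).mpr (posT1_xx h1)⟩

lemma wYY_T1 (hT1 : ∀ u v, T1.anc u v ↔ posT1 q α u ≤ posT1 q α v)
    (S : Finset (Fin q)) :
    wYYcard S T1 + S.card.choose 2 = q.choose 2 := by
  have hanc : ∀ e : Fin q × Fin q, e.1 < e.2 → T1.anc (Sum.inr e.1) (Sum.inr e.2) :=
    fun e h => (hT1 _ _).mpr (posT1_yy h)
  have hpart := Finset.card_filter_add_card_filter_not
    (s := (univ : Finset (Fin q × Fin q)).filter fun e => e.1 < e.2)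
    (p := fun e => e.1 ∈ S ∧ e.2 ∈ S)
  have hzc : (((univ : Finset (Fin q × Fin q)).filter fun e => e.1 < e.2).filter
      fun e => e.1 ∈ S ∧ e.2 ∈ S).card = S.card.choose 2 := by
    apply card_lt_pairs S
    intro e
    simp only [Finset.mem_filter, Finset.mem_univ, true_and]
    tauto
  have hqc : ((univ : Finset (Fin q × Fin q)).filter fun e : Fin q × Fin q => e.1 < e.2).card
      = q.choose 2 := card_lt_pairs_univ q _ (by intro e; simp)
  have h2 : (((univ : Finset (Fin q × Fin q)).filter fun e => e.1 < e.2).filter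
      fun e => ¬(e.1 ∈ S ∧ e.2 ∈ S)).card = wYYcard S T1 := by
    unfold wYYcard
    congr 1
    ext e
    simp only [Finset.mem_filter, Finset.mem_univ, true_and]
    constructor
    · rintro ⟨h3, h4⟩
      exact ⟨h3, h4, hanc e h3⟩
    · rintro ⟨h3, h4, -⟩
      exact ⟨h3, h4⟩
  omega

lemma nY_T1 (hα : α < p)
    (hT1 : ∀ u v, T1.anc u v ↔ posT1 q α u ≤ posT1 q α v) (j : Fin q) :
    p - α ≤ nY T1 j := by
  have hanc : ∀ i : Fin p, α ≤ (i : ℕ) → T1.anc (Sum.inr j) (Sum.inl i) := by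
    intro i hi
    rw [hT1]
    simp only [posT1]
    rw [if_neg (by omega)]
    have := j.2
    omega
  have hm := filter_card_mono (fun i : Fin p => α ≤ (i : ℕ))
    (fun i : Fin p => T1.anc (Sum.inr j) (Sum.inl i)) (fun i h => hanc i h)
  have hcv : ((univ : Finset (Fin p)).filter fun i : Fin p => α ≤ (i : ℕ)).card = p - α :=
    card_of_val_ge (le_of_lt hα) _ (fun i => by simp)
  rw [hcv] at hm
  exact hm

lemma xyW_T1 (hq : 0 < q) (hα : α < p) (hβ : β < q)
    (hT1 : ∀ u v, T1.anc u v ↔ posT1 q α u ≤ posT1 q α v) (j : Fin q) :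
    α + (if (j : ℕ) < β then 1 else 0) ≤ xyW β T1 j := by
  have hp : 0 < p := lt_of_le_of_lt (Nat.zero_le α) hα
  have hj2 := j.2
  have hcv : ((univ : Finset (Fin p)).filter fun i : Fin p => (i : ℕ) < α).card = α :=
    card_of_val_lt (le_of_lt hα) _ (fun i => by simp)
  have hwrong_lt : ∀ i : Fin p, (i : ℕ) < α → wrongXY β T1 i j := by
    intro i hi
    unfold wrongXY
    rw [if_neg (by omega)]
    rw [hT1]
    simp only [posT1]
    rw [if_pos hi]
    omega
  by_cases hjβ : (j : ℕ) < β
  · rw [if_pos hjβ]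
    have hval : ((⟨p - 1, by omega⟩ : Fin p) : ℕ) = p - 1 := rfl
    have hmem : wrongXY β T1 ⟨p - 1, by omega⟩ j := by
      unfold wrongXY
      rw [if_pos ⟨hval, hjβ⟩]
      rw [hT1]
      simp only [posT1, hval]
      rw [if_neg (by omega)]
      omega
    have hsub : insert (⟨p - 1, by omega⟩ : Fin p)
        ((univ : Finset (Fin p)).filter fun i : Fin p => (i : ℕ) < α)
        ⊆ (univ : Finset (Fin p)).filter fun i : Fin p => wrongXY β T1 i j := by
      intro x hx
      rcases Finset.mem_insert.mp hx with h | h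
      · subst h
        exact Finset.mem_filter.mpr ⟨Finset.mem_univ _, hmem⟩
      · exact Finset.mem_filter.mpr
          ⟨Finset.mem_univ _, hwrong_lt x (Finset.mem_filter.mp h).2⟩
    have hcard := Finset.card_le_card hsub
    rw [Finset.card_insert_of_notMem (by
      simp only [Finset.mem_filter, Finset.mem_univ, true_and, hval]
      omega)] at hcard
    rw [hcv] at hcard
    exact hcard
  · rw [if_neg hjβ]
    have hm := filter_card_mono (fun i : Fin p => (i : ℕ) < α)
      (fun i : Fin p => wrongXY β T1 i j) (fun i h => hwrong_lt i h)
    rw [hcv] at hm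
    simpa [xyW] using hm

lemma sum_term_T1 (hp : 0 < p) (hq : 0 < q) (hα : α < p) (hβ : β < q)
    (hT1 : ∀ u v, T1.anc u v ↔ posT1 q α u ≤ posT1 q α v) (S : Finset (Fin q)) :
    S.card * (p - α) + S.card * p + (q - S.card) * α + β
      ≤ (∑ j, termJ β S T1 j) + 2 * (S.filter fun j : Fin q => (j : ℕ) < β).card := by
  have hterm : ∀ j : Fin q,
      (if j ∈ S then (p - α) + NT p β j else α + (if (j : ℕ) < β then 1 else 0))
        ≤ termJ β S T1 j := by
    intro j
    by_cases hjS : j ∈ S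
    · simp only [termJ, if_pos hjS]
      have := nY_T1 hα hT1 j
      omega
    · simp only [termJ, if_neg hjS]
      exact xyW_T1 hq hα hβ hT1 j
  have hsum := Finset.sum_le_sum (fun j (_ : j ∈ (univ : Finset (Fin q))) => hterm j)
  have hsplit := Finset.sum_filter_add_sum_filter_not (univ : Finset (Fin q)) (· ∈ S)
    (fun j => if j ∈ S then (p - α) + NT p β j else α + (if (j : ℕ) < β then 1 else 0))
  have hfS : (univ : Finset (Fin q)).filter (· ∈ S) = S := by
    ext x; simp
  have hinS : (∑ j ∈ (univ : Finset (Fin q)).filter (· ∈ S),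
      (if j ∈ S then (p - α) + NT p β j else α + (if (j : ℕ) < β then 1 else 0)))
      = S.card * (p - α) + ∑ j ∈ S, NT p β j := by
    rw [hfS]
    have hc : ∀ j ∈ S,
        (if j ∈ S then (p - α) + NT p β j else α + (if (j : ℕ) < β then 1 else 0))
        = (p - α) + NT p β j := fun j hj => if_pos hj
    rw [Finset.sum_congr rfl hc, Finset.sum_add_distrib, Finset.sum_const, smul_eq_mul]
  have hninS : (∑ j ∈ (univ : Finset (Fin q)).filter (fun j => ¬ (j ∈ S)),
      (if j ∈ S then (p - α) + NT p β j else α + (if (j : ℕ) < β then 1 else 0)))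
      = ((univ : Finset (Fin q)).filter (fun j => ¬ (j ∈ S))).card * α
        + ∑ j ∈ (univ : Finset (Fin q)).filter (fun j => ¬ (j ∈ S)),
            (if (j : ℕ) < β then 1 else 0) := by
    have hc : ∀ j ∈ (univ : Finset (Fin q)).filter (fun j => ¬ (j ∈ S)),
        (if j ∈ S then (p - α) + NT p β j else α + (if (j : ℕ) < β then 1 else 0))
        = α + (if (j : ℕ) < β then 1 else 0) := by
      intro j hj
      exact if_neg (Finset.mem_filter.mp hj).2
    rw [Finset.sum_congr rfl hc, Finset.sum_add_distrib, Finset.sum_const, smul_eq_mul]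
  have hcompl : ((univ : Finset (Fin q)).filter (fun j => ¬ (j ∈ S))).card = q - S.card := by
    have h1 := Finset.card_filter_add_card_filter_not
      (s := (univ : Finset (Fin q))) (p := (· ∈ S))
    rw [hfS] at h1
    have h2 : (univ : Finset (Fin q)).card = q := by simp
    omega
  rw [hcompl] at hninS
  have hNT : (∑ j ∈ S, NT p β j) + (S.filter fun j : Fin q => (j : ℕ) < β).card
      = S.card * p := by
    have hpt : ∀ j ∈ S, NT p β j + (if (j : ℕ) < β then 1 else 0) = p := by
      intro j _
      unfold NT
      split_ifs <;> omega
    have h3 : (∑ j ∈ S, (NT p β j + if (j : ℕ) < β then 1 else 0)) = ∑ _j ∈ S, p :=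
      Finset.sum_congr rfl hpt
    rw [Finset.sum_add_distrib, Finset.sum_const, smul_eq_mul] at h3
    have h4 : (∑ j ∈ S, (if (j : ℕ) < β then (1 : ℕ) else 0))
        = (S.filter fun j : Fin q => (j : ℕ) < β).card := (Finset.card_filter _ _).symm
    omega
  have hbeta : (∑ j ∈ (univ : Finset (Fin q)).filter (fun j => ¬ (j ∈ S)),
      (if (j : ℕ) < β then (1 : ℕ) else 0))
      + (S.filter fun j : Fin q => (j : ℕ) < β).card = β := by
    have h5 := Finset.sum_filter_add_sum_filter_not (univ : Finset (Fin q)) (· ∈ S)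
      (fun j => if (j : ℕ) < β then (1 : ℕ) else 0)
    have h6 : (∑ j : Fin q, (if (j : ℕ) < β then (1 : ℕ) else 0)) = β := by
      rw [show (∑ j : Fin q, (if (j : ℕ) < β then (1 : ℕ) else 0))
          = ((univ : Finset (Fin q)).filter fun j : Fin q => (j : ℕ) < β).card
          from (Finset.card_filter _ _).symm]
      exact card_of_val_lt (le_of_lt hβ) _ (fun i => by simp)
    have h7 : (∑ j ∈ (univ : Finset (Fin q)).filter (· ∈ S),
        (if (j : ℕ) < β then (1 : ℕ) else 0))
        = (S.filter fun j : Fin q => (j : ℕ) < β).card := by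
      rw [hfS]
      exact (Finset.card_filter _ _).symm
    omega
  omega

lemma phi_T1_ge (hp : 0 < p) (hq : 0 < q) (hα : α < p) (hβ : β < q)
    (hT1 : ∀ u v, T1.anc u v ↔ posT1 q α u ≤ posT1 q α v) (S : Finset (Fin q)) :
    p * (p - 1) / 2 + α * q + min (q * (q - 1) / 2 + β) (2 * q * (p - α) - β)
      ≤ phi β S T1 := by
  have hXX := wXX_T1 hT1
  have hYY := wYY_T1 hT1 S
  have hterm := sum_term_T1 hp hq hα hβ hT1 S
  have h2q := two_choose_two q
  have h2z := two_choose_two S.card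
  have hzq : S.card ≤ q := by
    have := Finset.card_le_card (Finset.subset_univ S)
    simpa using this
  have hsz : (S.filter fun j : Fin q => (j : ℕ) < β).card ≤ S.card :=
    Finset.card_filter_le _ _
  have hsβ : (S.filter fun j : Fin q => (j : ℕ) < β).card ≤ β := by
    have hsub : (S.filter fun j : Fin q => (j : ℕ) < β)
        ⊆ (univ : Finset (Fin q)).filter (fun j : Fin q => (j : ℕ) < β) :=
      fun x hx => Finset.mem_filter.mpr ⟨Finset.mem_univ _, (Finset.mem_filter.mp hx).2⟩
    have h8 := Finset.card_le_card hsub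
    have h9 : ((univ : Finset (Fin q)).filter fun j : Fin q => (j : ℕ) < β).card = β :=
      card_of_val_lt (le_of_lt hβ) _ (fun i => by simp)
    rw [h9] at h8
    exact h8
  have harith := arith_main p q α β S.card (S.filter fun j : Fin q => (j : ℕ) < β).card
    (q.choose 2) (S.card.choose 2) hp hq hα hβ hzq hsz hsβ h2q h2z
  have hphi : phi β S T1 = wXXcard T1 + (∑ j, termJ β S T1 j) + wYYcard S T1 := rfl
  have hchoosep : p.choose 2 = p * (p - 1) / 2 := Nat.choose_two_right p
  have hchooseq : q.choose 2 = q * (q - 1) / 2 := Nat.choose_two_right q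
  rw [← hchoosep, ← hchooseq]
  omega

end T1

end SPKAux

/-- Let `T1` be the search tree on `SPK p q` that is the path
`x_1, …, x_α, y_1, …, y_q, x_{α+1}, …, x_p` from the root downward, and `T2` the
path `y_q, …, y_{β+1}, x_p, y_β, …, y_1, x_{p-1}, …, x_1`. Then
`dist(T1,T2) ≥ C(p,2) + α q + min (C(q,2) + β) (2q(p-α) - β)`. -/
theorem spk_dist_T1_T2_lower (p q α β : ℕ) (hp : 0 < p) (hq : 0 < q)
    (hα : α < p) (hβ : β < q) (T1 T2 : SearchTree (SPK p q))
    (hT1 : ∀ u v, T1.anc u v ↔ posT1 q α u ≤ posT1 q α v)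
    (hT2 : ∀ u v, T2.anc u v ↔ posT2 q β u ≤ posT2 q β v) :
    ((p * (p - 1) / 2 + α * q +
        min (q * (q - 1) / 2 + β) (2 * q * (p - α) - β) : ℕ) : ℕ∞) ≤
      (rotationGraph (SPK p q)).edist T1 T2 := by
  classical
  rw [SimpleGraph.edist_eq_sInf]
  apply le_sInf
  rintro x ⟨w, rfl⟩
  have hwalk := SPKAux.pot_walk hp β w
  have hT2zero : SPKAux.pot β T2 ≤ 0 := by
    have h1 : SPKAux.pot β T2 ≤ SPKAux.phi β ∅ T2 := Nat.sInf_le ⟨∅, rfl⟩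
    rw [SPKAux.phi_T2_zero hβ hT2] at h1
    exact h1
  have hT1ge : p * (p - 1) / 2 + α * q + min (q * (q - 1) / 2 + β) (2 * q * (p - α) - β)
      ≤ SPKAux.pot β T1 := by
    refine le_csInf ⟨SPKAux.phi β ∅ T1, ⟨∅, rfl⟩⟩ ?_
    rintro m ⟨S, rfl⟩
    exact SPKAux.phi_T1_ge hp hq hα hβ hT1 S
  have hfin : p * (p - 1) / 2 + α * q + min (q * (q - 1) / 2 + β) (2 * q * (p - α) - β)
      ≤ w.length := by omega
  exact_mod_cast Nat.cast_le.mpr hfin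
end
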